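/- arXiv:2001.06795 — 10 statements merged into one kernel-verified Lean document; each statement's English description precedes it below -/
import Mathlib

section
/- Let T and S be commuting contractions on a reflexive Banach space X. Then (I−T)(I−S)z = 0 if and only if z lies in the closure of F(T) + F(S). -/
open Filter Topology

/-- In a T2 space, a cluster point of a convergent filter equals the limit. -/
lemma clusterPt_eq_of_tendsto {α : Type*} [TopologicalSpace α] [T2Space α]
    {u : ℕ → α} {c L : α} (h : ClusterPt c (Filter.map u atTop))
    (hL : Tendsto u atTop (𝓝 L)) : c = L :=
  eq_of_nhds_neBot (h.mono hL)

/-- Let `T` and `S` be commuting contractions on a reflexive Banach space `X`.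
Then `(I-T)(I-S)z = 0` if and only if `z` lies in the closure of `F(T) + F(S)`. -/
theorem stmt0 {X : Type*} [NormedAddCommGroup X] [NormedSpace ℝ X] [CompleteSpace X]
    (hrefl : Function.Surjective (NormedSpace.inclusionInDoubleDual ℝ X))
    (T S : X →L[ℝ] X) (hT : ‖T‖ ≤ 1) (hS : ‖S‖ ≤ 1) (hTS : T * S = S * T) (z : X) :
    ((1 - T) * (1 - S)) z = 0 ↔
      z ∈ closure {w : X | ∃ a b : X, T a = a ∧ S b = b ∧ w = a + b} := by
  have hswap : (1 - T) * (1 - S) = (1 - S) * (1 - T) := by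
    have h1 : (1 - T) * (1 - S) = 1 - T - S + T * S := by noncomm_ring
    have h2 : (1 - S) * (1 - T) = 1 - S - T + S * T := by noncomm_ring
    rw [h1, h2, hTS]; abel
  constructor
  · intro hyp
    -- T fixes z - S z
    have hfix : T (z - S z) = z - S z := by
      have h0 : (z - S z) - T (z - S z) = 0 := by
        simpa [ContinuousLinearMap.mul_apply, ContinuousLinearMap.sub_apply,
          ContinuousLinearMap.one_apply] using hyp
      exact (sub_eq_zero.mp h0).symm
    -- basic contraction estimates
    have hTle : ∀ w : X, ‖T w‖ ≤ ‖w‖ := fun w =>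
      (T.le_opNorm w).trans (by nlinarith [norm_nonneg w])
    have hpow : ∀ (k : ℕ) (w : X), ‖(T ^ k) w‖ ≤ ‖w‖ := by
      intro k
      induction k with
      | zero => intro w; simp
      | succ k ih =>
        intro w
        have : (T ^ (k + 1)) w = (T ^ k) (T w) := by
          rw [pow_succ]; rfl
        rw [this]
        exact (ih (T w)).trans (hTle w)
    have hfixk : ∀ k : ℕ, (T ^ k) (z - S z) = z - S z := by
      intro k
      induction k with
      | zero => simp
      | succ k ih =>
        have : (T ^ (k + 1)) (z - S z) = (T ^ k) (T (z - S z)) := by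
          rw [pow_succ]; rfl
        rw [this, hfix, ih]
    have hcommk : ∀ k : ℕ, S ((T ^ k) z) = (T ^ k) (S z) := by
      intro k
      have hc : Commute T S := hTS
      have hc2 : S * T ^ k = T ^ k * S := (hc.symm.pow_right k).eq
      have := congrArg (fun f : X →L[ℝ] X => f z) hc2
      simpa [ContinuousLinearMap.mul_apply] using this
    -- the Cesàro averages
    set x : ℕ → X := fun n => (n : ℝ)⁻¹ • ∑ k ∈ Finset.range n, (T ^ k) z with hxdef
    have hxnorm : ∀ n, ‖x n‖ ≤ ‖z‖ := by
      intro n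
      rcases Nat.eq_zero_or_pos n with h | h
      · simp [hxdef, h, norm_nonneg]
      · have hn : (0 : ℝ) < n := by exact_mod_cast h
        have hsum : ‖∑ k ∈ Finset.range n, (T ^ k) z‖ ≤ n * ‖z‖ := by
          calc ‖∑ k ∈ Finset.range n, (T ^ k) z‖
              ≤ ∑ k ∈ Finset.range n, ‖(T ^ k) z‖ := norm_sum_le _ _
            _ ≤ ∑ _k ∈ Finset.range n, ‖z‖ := Finset.sum_le_sum fun k _ => hpow k z
            _ = n * ‖z‖ := by simp [Finset.sum_const, mul_comm]
        have heq : ‖x n‖ = (n : ℝ)⁻¹ * ‖∑ k ∈ Finset.range n, (T ^ k) z‖ := by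
          simp [hxdef, norm_smul, abs_of_nonneg (le_of_lt (inv_pos.mpr hn))]
        rw [heq]
        calc (n : ℝ)⁻¹ * ‖∑ k ∈ Finset.range n, (T ^ k) z‖
            ≤ (n : ℝ)⁻¹ * (n * ‖z‖) :=
              mul_le_mul_of_nonneg_left hsum (le_of_lt (inv_pos.mpr hn))
          _ = ‖z‖ := by field_simp
    -- approximate T-invariance
    have htel : ∀ n : ℕ, x n - T (x n) = (n : ℝ)⁻¹ • (z - (T ^ n) z) := by
      intro n
      have hTx : T (x n) = (n : ℝ)⁻¹ • ∑ k ∈ Finset.range n, (T ^ (k + 1)) z := by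
        rw [hxdef]
        simp only [map_smul, map_sum]
        congr 1
        refine Finset.sum_congr rfl fun k _ => ?_
        rw [pow_succ']
        rfl
      rw [hTx, hxdef]
      simp only [← smul_sub]
      congr 1
      rw [← Finset.sum_sub_distrib]
      have := Finset.sum_range_sub' (fun k => (T ^ k) z) n
      simpa using this
    have hT0 : Tendsto (fun n => x n - T (x n)) atTop (𝓝 0) := by
      apply squeeze_zero_norm (a := fun n : ℕ => (n : ℝ)⁻¹ * (2 * ‖z‖))
      · intro n
        rw [htel n, norm_smul]
        have h1 : ‖z - (T ^ n) z‖ ≤ 2 * ‖z‖ := by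
          have := hpow n z
          calc ‖z - (T ^ n) z‖ ≤ ‖z‖ + ‖(T ^ n) z‖ := norm_sub_le _ _
            _ ≤ 2 * ‖z‖ := by linarith
        have h2 : ‖((n : ℝ))⁻¹‖ = (n : ℝ)⁻¹ := by
          simp [abs_of_nonneg]
        rw [h2]
        exact mul_le_mul_of_nonneg_left h1 (by positivity)
      · have := tendsto_inv_atTop_nhds_zero_nat.mul_const (2 * ‖z‖)
        simpa using this
    -- exact S-relation
    have hS1 : ∀ n : ℕ, 1 ≤ n → x n - S (x n) = z - S z := by
      intro n hn
      have hnR : (n : ℝ) ≠ 0 := by positivity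
      have hSx : S (x n) = (n : ℝ)⁻¹ • ∑ k ∈ Finset.range n, (T ^ k) (S z) := by
        rw [hxdef]
        simp only [map_smul, map_sum]
        congr 1
        exact Finset.sum_congr rfl fun k _ => hcommk k
      rw [hSx, hxdef]
      simp only [← smul_sub, ← Finset.sum_sub_distrib]
      have hterm : ∀ k ∈ Finset.range n, (T ^ k) z - (T ^ k) (S z) = z - S z := by
        intro k _
        rw [← map_sub]
        exact hfixk k
      rw [Finset.sum_congr rfl hterm, Finset.sum_const, Finset.card_range]
      rw [← Nat.cast_smul_eq_nsmul ℝ, smul_smul, inv_mul_cancel₀ hnR, one_smul]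
    -- pass to the double dual and use Banach-Alaoglu
    set J := NormedSpace.inclusionInDoubleDual ℝ X with hJ
    set Φseq : ℕ → WeakDual ℝ (StrongDual ℝ X) :=
      fun n => StrongDual.toWeakDual (J (x n)) with hΦseq
    have hJnorm : ∀ w : X, ‖J w‖ ≤ ‖w‖ := by
      intro w
      have := (NormedSpace.inclusionInDoubleDual_norm_le ℝ X)
      exact NormedSpace.double_dual_bound ℝ X w
    set K : Set (WeakDual ℝ (StrongDual ℝ X)) :=
      WeakDual.toStrongDual ⁻¹' Metric.closedBall (0 : StrongDual ℝ (StrongDual ℝ X)) ‖z‖ with hKdef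
    have hK : IsCompact K := WeakDual.isCompact_closedBall (𝕜 := ℝ) (E := StrongDual ℝ X) 0 ‖z‖
    haveI : (Filter.map Φseq atTop).NeBot := Filter.map_neBot
    have hle : Filter.map Φseq atTop ≤ Filter.principal K := by
      rw [Filter.le_principal_iff, Filter.mem_map]
      refine Filter.Eventually.of_forall fun n => ?_
      show WeakDual.toStrongDual (Φseq n) ∈ Metric.closedBall 0 ‖z‖
      exact (mem_closedBall_zero_iff (E := StrongDual ℝ (StrongDual ℝ X))).mpr ((hJnorm (x n)).trans (hxnorm n))
    obtain ⟨Φ, _, hcl⟩ := hK.exists_clusterPt hle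
    obtain ⟨a, ha⟩ := hrefl (WeakDual.toStrongDual Φ)
    -- key: g a is the limit of g (x n) for every functional g
    have hkey : ∀ (g : StrongDual ℝ X) (L : ℝ),
        Tendsto (fun n => g (x n)) atTop (𝓝 L) → g a = L := by
      intro g L hgL
      have hev : ContinuousAt (fun φ : WeakDual ℝ (StrongDual ℝ X) => φ g) Φ :=
        (WeakDual.eval_continuous g).continuousAt
      have hmap : Tendsto (fun φ : WeakDual ℝ (StrongDual ℝ X) => φ g)
          (Filter.map Φseq atTop) (Filter.map (fun n => g (x n)) atTop) := by
        rw [Filter.tendsto_map'_iff]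
        exact le_of_eq rfl
      have hclg : ClusterPt (Φ g) (Filter.map (fun n => g (x n)) atTop) :=
        hcl.map hev hmap
      have : Φ g = L := clusterPt_eq_of_tendsto hclg hgL
      have hag : g a = Φ g := by
        have : J a g = g a := rfl
        rw [← this, ha]
        rfl
      rw [hag, this]
    -- a is a fixed point of T
    have haT : T a = a := by
      have hzero : a - T a = 0 := by
        apply NormedSpace.eq_zero_of_forall_dual_eq_zero ℝ
        intro g
        have hgc : Tendsto (fun n => g (x n - T (x n))) atTop (𝓝 0) := by
          have h := (g.continuous.tendsto 0).comp hT0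
          rw [map_zero] at h
          exact h
        have hgc' : Tendsto (fun n => (g.comp (1 - T) : StrongDual ℝ X) (x n))
            atTop (𝓝 0) := by
          refine hgc.congr fun n => ?_
          simp [ContinuousLinearMap.comp_apply, ContinuousLinearMap.sub_apply,
            ContinuousLinearMap.one_apply]
        have := hkey (g.comp (1 - T)) 0 hgc'
        simpa [ContinuousLinearMap.comp_apply, ContinuousLinearMap.sub_apply,
          ContinuousLinearMap.one_apply] using this
      exact (sub_eq_zero.mp hzero).symm
    -- z - a is a fixed point of S
    have haS : S (z - a) = z - a := by
      have hzero : (a - S a) - (z - S z) = 0 := by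
        apply NormedSpace.eq_zero_of_forall_dual_eq_zero ℝ
        intro g
        have hgc' : Tendsto (fun n => (g.comp (1 - S) : StrongDual ℝ X) (x n))
            atTop (𝓝 (g (z - S z))) := by
          apply Tendsto.congr' (f₁ := fun _ => g (z - S z))
          · filter_upwards [Filter.eventually_ge_atTop 1] with n hn
            have h := congrArg g (hS1 n hn)
            simp only [map_sub] at h
            simp only [ContinuousLinearMap.comp_apply, ContinuousLinearMap.sub_apply,
              ContinuousLinearMap.one_apply, map_sub]
            linarith
          · exact tendsto_const_nhds
        have := hkey (g.comp (1 - S)) (g (z - S z)) hgc'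
        simp only [ContinuousLinearMap.comp_apply, ContinuousLinearMap.sub_apply,
          ContinuousLinearMap.one_apply] at this
        rw [map_sub, map_sub, map_sub]
        rw [map_sub, map_sub] at this
        linarith
      have : a - S a = z - S z := by
        have h := sub_eq_zero.mp hzero
        exact h
      have hgoal : S z - S a = z - a := by
        have h' := sub_eq_sub_iff_add_eq_add.mp this
        refine sub_eq_sub_iff_add_eq_add.mpr ?_
        rw [add_comm]
        exact h'
      rw [map_sub]
      exact hgoal
    apply subset_closure
    exact ⟨a, z - a, haT, haS, by abel⟩
  · intro hz
    have hC : IsClosed {w : X | ((1 - T) * (1 - S)) w = 0} :=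
      isClosed_eq (((1 - T) * (1 - S)).continuous) continuous_const
    refine closure_minimal ?_ hC hz
    rintro w ⟨a, b, ha, hb, rfl⟩
    have h1 : ((1 - T) * (1 - S)) a = 0 := by
      rw [hswap]
      simp [ContinuousLinearMap.mul_apply, ContinuousLinearMap.sub_apply,
        ContinuousLinearMap.one_apply, ha]
    have h2 : ((1 - T) * (1 - S)) b = 0 := by
      simp [ContinuousLinearMap.mul_apply, ContinuousLinearMap.sub_apply,
        ContinuousLinearMap.one_apply, hb]
    calc ((1 - T) * (1 - S)) (a + b) = ((1 - T) * (1 - S)) a + ((1 - T) * (1 - S)) b := by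
          exact map_add _ a b
      _ = 0 := by rw [h1, h2, add_zero]
end

section
/- Let T and S be commuting contractions on a reflexive Banach space X. Then the closure of (I−T)(I−S)X equals the closure of (I−T)X ∩ (I−S)X, and both equal the intersection of the closure of (I−T)X with the closure of (I−S)X. -/
open Filter Topology

set_option synthInstance.maxHeartbeats 1000000
set_option maxHeartbeats 1000000

section aux

variable {X : Type*} [NormedAddCommGroup X] [NormedSpace ℝ X]

lemma contraction_pow_apply_norm_le (S : X →L[ℝ] X) (hS : ‖S‖ ≤ 1) (k : ℕ) (x : X) :
    ‖(S ^ k) x‖ ≤ ‖x‖ := by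
  induction k generalizing x with
  | zero => simp
  | succ k ih =>
      rw [pow_succ]
      calc ‖(S ^ k * S) x‖ = ‖(S ^ k) (S x)‖ := rfl
        _ ≤ ‖S x‖ := ih _
        _ ≤ ‖S‖ * ‖x‖ := S.le_opNorm x
        _ ≤ 1 * ‖x‖ := mul_le_mul_of_nonneg_right hS (norm_nonneg x)
        _ = ‖x‖ := one_mul _

/-- Cesàro averages of a contraction. -/
noncomputable def cesaro (S : X →L[ℝ] X) (n : ℕ) : X →L[ℝ] X :=
  (n : ℝ)⁻¹ • ∑ k ∈ Finset.range n, S ^ k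

lemma cesaro_apply_norm_le (S : X →L[ℝ] X) (hS : ‖S‖ ≤ 1) (n : ℕ) (x : X) :
    ‖cesaro S n x‖ ≤ ‖x‖ := by
  rcases Nat.eq_zero_or_pos n with h | h
  · simp [cesaro, h]
  have hn : (0 : ℝ) < (n : ℝ) := by exact_mod_cast h
  have h1 : ‖(∑ k ∈ Finset.range n, S ^ k) x‖ ≤ (n : ℝ) * ‖x‖ := by
    rw [ContinuousLinearMap.sum_apply]
    calc ‖∑ k ∈ Finset.range n, (S ^ k) x‖ ≤ ∑ k ∈ Finset.range n, ‖(S ^ k) x‖ :=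
          norm_sum_le _ _
      _ ≤ ∑ _k ∈ Finset.range n, ‖x‖ :=
          Finset.sum_le_sum fun k _ => contraction_pow_apply_norm_le S hS k x
      _ = (n : ℝ) * ‖x‖ := by simp [mul_comm]
  calc ‖cesaro S n x‖ = (n : ℝ)⁻¹ * ‖(∑ k ∈ Finset.range n, S ^ k) x‖ := by
        simp [cesaro, norm_smul, abs_of_nonneg (le_of_lt (inv_pos.mpr hn))]
    _ ≤ (n : ℝ)⁻¹ * ((n : ℝ) * ‖x‖) :=
        mul_le_mul_of_nonneg_left h1 (le_of_lt (inv_pos.mpr hn))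
    _ = ‖x‖ := by field_simp

lemma cesaro_coboundary (S : X →L[ℝ] X) (n : ℕ) (y : X) :
    cesaro S n ((1 - S) y) = (n : ℝ)⁻¹ • (y - (S ^ n) y) := by
  have hgeo : (∑ k ∈ Finset.range n, S ^ k) * (1 - S) = 1 - S ^ n := by
    have h := geom_sum_mul S n
    have h2 : (∑ k ∈ Finset.range n, S ^ k) * (1 - S)
        = -((∑ k ∈ Finset.range n, S ^ k) * (S - 1)) := by noncomm_ring
    rw [h2, h, neg_sub]
  have h3 : cesaro S n ((1 - S) y)
      = ((n : ℝ)⁻¹ • ((∑ k ∈ Finset.range n, S ^ k) * (1 - S))) y := rfl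
  rw [h3, hgeo]
  simp [ContinuousLinearMap.sub_apply]

/-- Key lemma: Cesàro averages of a contraction are small at points of the closure of the
coboundary space. No reflexivity needed here. -/
lemma cesaro_small (S : X →L[ℝ] X) (hS : ‖S‖ ≤ 1) (x : X)
    (hx : x ∈ closure (Set.range ⇑(1 - S))) {ε : ℝ} (hε : 0 < ε) :
    ∃ n : ℕ, 1 ≤ n ∧ ‖cesaro S n x‖ < ε := by
  obtain ⟨z, hz, hdist⟩ := Metric.mem_closure_iff.mp hx (ε / 2) (by linarith)
  obtain ⟨y, hy⟩ := hz
  obtain ⟨n, hn1, hn2⟩ : ∃ n : ℕ, 1 ≤ n ∧ (n : ℝ)⁻¹ * (2 * ‖y‖) < ε / 2 := by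
    obtain ⟨n, hn⟩ := exists_nat_gt (max 1 ((2 * ‖y‖) / (ε / 2)))
    refine ⟨n, ?_, ?_⟩
    · exact_mod_cast le_of_lt (lt_of_le_of_lt (le_max_left _ _) hn)
    · have hnpos : (0 : ℝ) < n := lt_of_le_of_lt (le_trans zero_le_one (le_max_left _ _)) hn
      have h2 : (2 * ‖y‖) / (ε / 2) < n := lt_of_le_of_lt (le_max_right _ _) hn
      rw [div_lt_iff₀ (by linarith)] at h2
      rw [inv_mul_lt_iff₀ hnpos]
      nlinarith
  refine ⟨n, hn1, ?_⟩
  have hnpos : (0 : ℝ) < (n : ℝ) := by exact_mod_cast hn1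
  have hz' : ‖cesaro S n z‖ < ε / 2 := by
    rw [← hy, cesaro_coboundary]
    have hb : ‖y - (S ^ n) y‖ ≤ 2 * ‖y‖ := by
      calc ‖y - (S ^ n) y‖ ≤ ‖y‖ + ‖(S ^ n) y‖ := norm_sub_le _ _
        _ ≤ 2 * ‖y‖ := by linarith [contraction_pow_apply_norm_le S hS n y]
    calc ‖(n : ℝ)⁻¹ • (y - (S ^ n) y)‖ = (n : ℝ)⁻¹ * ‖y - (S ^ n) y‖ := by
          simp [norm_smul, abs_of_nonneg (le_of_lt (inv_pos.mpr hnpos))]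
      _ ≤ (n : ℝ)⁻¹ * (2 * ‖y‖) := mul_le_mul_of_nonneg_left hb (le_of_lt (inv_pos.mpr hnpos))
      _ < ε / 2 := hn2
  have hxz : ‖cesaro S n (x - z)‖ ≤ ‖x - z‖ := cesaro_apply_norm_le S hS n _
  have hsplit : cesaro S n x = cesaro S n (x - z) + cesaro S n z := by
    rw [← map_add]; congr 1; abel
  rw [hsplit]
  rw [dist_eq_norm] at hdist
  calc ‖cesaro S n (x - z) + cesaro S n z‖ ≤ ‖cesaro S n (x - z)‖ + ‖cesaro S n z‖ :=
        norm_add_le _ _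
    _ < ε := by linarith

end aux

/-- Let `T` and `S` be commuting contractions on a reflexive Banach space `X`.
Then the closure of `(I-T)(I-S)X` equals the closure of `(I-T)X ∩ (I-S)X`, and both equal the
intersection of the closure of `(I-T)X` with the closure of `(I-S)X`. -/
theorem stmt2 {X : Type*} [NormedAddCommGroup X] [NormedSpace ℝ X] [CompleteSpace X]
    (hrefl : Function.Surjective (NormedSpace.inclusionInDoubleDual ℝ X))
    (T S : X →L[ℝ] X) (hT : ‖T‖ ≤ 1) (hS : ‖S‖ ≤ 1) (hTS : T * S = S * T) :
    closure (Set.range ⇑((1 - T) * (1 - S)))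
        = closure (Set.range ⇑(1 - T) ∩ Set.range ⇑(1 - S)) ∧
      closure (Set.range ⇑((1 - T) * (1 - S)))
        = closure (Set.range ⇑(1 - T)) ∩ closure (Set.range ⇑(1 - S)) := by
  have hcomm : (1 - T) * (1 - S) = (1 - S) * (1 - T) := by
    simp only [sub_mul, mul_sub, one_mul, mul_one, hTS]
    abel
  -- the hard inclusion
  have hkey : closure (Set.range ⇑(1 - T)) ∩ closure (Set.range ⇑(1 - S))
      ⊆ closure (Set.range ⇑((1 - T) * (1 - S))) := by
    rintro x ⟨hxT, hxS⟩
    rw [Metric.mem_closure_iff]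
    intro ε hε
    obtain ⟨n, hn1, hn2⟩ := cesaro_small S hS x hxS (show (0:ℝ) < ε / 2 by linarith)
    obtain ⟨w, hw, hwd⟩ := Metric.mem_closure_iff.mp hxT (ε / 4) (by linarith)
    obtain ⟨y, hy⟩ := hw
    have hnpos : (0 : ℝ) < (n : ℝ) := by exact_mod_cast hn1
    set B : X →L[ℝ] X :=
      (n : ℝ)⁻¹ • ∑ k ∈ Finset.range n, ∑ j ∈ Finset.range k, S ^ j with hB
    -- factorization : 1 - cesaro S n = (1 - S) * B
    have hfact : (1 : X →L[ℝ] X) - cesaro S n = (1 - S) * B := by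
      have hone : (1 : X →L[ℝ] X) = (n : ℝ)⁻¹ • ∑ _k ∈ Finset.range n, (1 : X →L[ℝ] X) := by
        rw [Finset.sum_const, Finset.card_range, ← Nat.cast_smul_eq_nsmul ℝ, smul_smul]
        rw [inv_mul_cancel₀ (ne_of_gt hnpos), one_smul]
      rw [hB, mul_smul_comm, Finset.mul_sum]
      have hterm : ∀ k, (1 - S) * ∑ j ∈ Finset.range k, S ^ j = 1 - S ^ k := by
        intro k
        have h := geom_sum_mul S k
        have hc : (1 - S) * ∑ j ∈ Finset.range k, S ^ j
            = (∑ j ∈ Finset.range k, S ^ j) * (1 - S) := by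
          refine Commute.sum_right _ _ _ (fun j _ => ?_) |>.eq
          exact (Commute.one_left (S ^ j)).sub_left ((Commute.refl S).pow_right j)
        rw [hc]
        have h2 : (∑ j ∈ Finset.range k, S ^ j) * (1 - S)
            = -((∑ j ∈ Finset.range k, S ^ j) * (S - 1)) := by noncomm_ring
        rw [h2, h, neg_sub]
      calc (1 : X →L[ℝ] X) - cesaro S n
          = (n : ℝ)⁻¹ • ∑ k ∈ Finset.range n, ((1 : X →L[ℝ] X) - S ^ k) := by
            rw [Finset.sum_sub_distrib, smul_sub, cesaro, ← hone]
        _ = (n : ℝ)⁻¹ • ∑ k ∈ Finset.range n, (1 - S) * ∑ j ∈ Finset.range k, S ^ j := by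
            simp only [hterm]
      -- ends with rfl? both sides now syntactically equal
    -- B commutes with (1 - T)
    have hBT : B * (1 - T) = (1 - T) * B := by
      have hTSc : Commute T S := hTS
      have hsum : Commute (1 - T) (∑ k ∈ Finset.range n, ∑ j ∈ Finset.range k, S ^ j) := by
        apply Commute.sum_right
        intro k _
        apply Commute.sum_right
        intro j _
        exact (Commute.one_left (S ^ j)).sub_left (hTSc.pow_right j)
      rw [hB, smul_mul_assoc, mul_smul_comm, hsum.eq]
    have hop : ((1 : X →L[ℝ] X) - cesaro S n) * (1 - T) = ((1 - T) * (1 - S)) * B := by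
      rw [hfact, mul_assoc, hBT, ← mul_assoc, ← hcomm, mul_assoc]
    refine ⟨((1 - T) * (1 - S)) (B y), ⟨B y, rfl⟩, ?_⟩
    have hz : ((1 - T) * (1 - S)) (B y) = (1 - T) y - cesaro S n ((1 - T) y) := by
      have := congrArg (fun f : X →L[ℝ] X => f y) hop.symm
      simpa [ContinuousLinearMap.sub_apply] using this
    rw [dist_eq_norm, hz]
    have hA : cesaro S n ((1 - T) y)
        = cesaro S n x - cesaro S n (x - (1 - T) y) := by
      rw [← map_sub]; congr 1; abel
    have hx2 : ‖cesaro S n (x - (1 - T) y)‖ ≤ ‖x - (1 - T) y‖ :=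
      cesaro_apply_norm_le S hS n _
    have hwd' : ‖x - (1 - T) y‖ < ε / 4 := by
      rw [dist_eq_norm] at hwd; rw [← hy] at hwd; exact hwd
    calc ‖x - ((1 - T) y - cesaro S n ((1 - T) y))‖
        = ‖(x - (1 - T) y) + cesaro S n ((1 - T) y)‖ := by congr 1; abel
      _ ≤ ‖x - (1 - T) y‖ + ‖cesaro S n ((1 - T) y)‖ := norm_add_le _ _
      _ ≤ ‖x - (1 - T) y‖ + (‖cesaro S n x‖ + ‖cesaro S n (x - (1 - T) y)‖) := by
          rw [hA]; gcongr; exact norm_sub_le _ _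
      _ < ε := by linarith
  -- easy inclusions
  have e1 : Set.range ⇑((1 - T) * (1 - S)) ⊆ Set.range ⇑(1 - T) ∩ Set.range ⇑(1 - S) := by
    rintro _ ⟨y, rfl⟩
    constructor
    · exact ⟨(1 - S) y, rfl⟩
    · exact ⟨(1 - T) y, by rw [hcomm]; rfl⟩
  have e2 : closure (Set.range ⇑((1 - T) * (1 - S)))
      ⊆ closure (Set.range ⇑(1 - T) ∩ Set.range ⇑(1 - S)) := closure_mono e1
  have e3 : closure (Set.range ⇑(1 - T) ∩ Set.range ⇑(1 - S))
      ⊆ closure (Set.range ⇑(1 - T)) ∩ closure (Set.range ⇑(1 - S)) :=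
    Set.subset_inter (closure_mono Set.inter_subset_left)
      (closure_mono Set.inter_subset_right)
  constructor
  · exact Set.Subset.antisymm e2 (e3.trans hkey)
  · exact Set.Subset.antisymm (e2.trans e3) hkey
end

section
/- Let T and S be commuting contractions on a Banach space X such that F(T) ⊆ F(S) and F(S) ≠ X. Then there exists x ∈ X with (I−T)(I−S)x ≠ 0, i.e. there exist non-trivial double coboundaries. -/
open Filter Topology

/-- Let `T` and `S` be commuting contractions on a Banach space `X` such that
`F(T) ⊆ F(S)` and `F(S) ≠ X`. Then there exists `x ∈ X` with `(I-T)(I-S)x ≠ 0`, i.e. there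
exist non-trivial double coboundaries. -/
theorem stmt3 {X : Type*} [NormedAddCommGroup X] [NormedSpace ℝ X] [CompleteSpace X]
    (T S : X →L[ℝ] X) (hT : ‖T‖ ≤ 1) (hS : ‖S‖ ≤ 1) (hTS : T * S = S * T)
    (hsub : {x : X | T x = x} ⊆ {x : X | S x = x})
    (hne : {x : X | S x = x} ≠ Set.univ) :
    ∃ x : X, ((1 - T) * (1 - S)) x ≠ 0 := by
  by_contra h
  push_neg at h
  apply hne
  apply Set.eq_univ_of_forall
  intro x
  set y := x - S x with hy
  have hTy : T y = y := by
    have hx := h x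
    simp only [ContinuousLinearMap.mul_apply, ContinuousLinearMap.sub_apply,
      ContinuousLinearMap.one_apply] at hx
    have : y - T y = 0 := by simpa [hy] using hx
    have := sub_eq_zero.mp this
    exact this.symm
  have hSy : S y = y := hsub hTy
  -- S^n x = x - n • y
  have hiter : ∀ n : ℕ, (S ^ n) x = x - n • y := by
    intro n
    induction n with
    | zero => simp
    | succ n ih =>
      have : (S ^ (n + 1)) x = S ((S ^ n) x) := by
        rw [pow_succ']
        rfl
      rw [this, ih, map_sub, map_nsmul, hSy, succ_nsmul]
      have hSx : S x = x - y := by simp [hy]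
      rw [hSx]
      abel
  have hSnx : ∀ n : ℕ, ‖(S ^ n) x‖ ≤ ‖x‖ := by
    intro n
    induction n with
    | zero => simp
    | succ n ih =>
      have heq : (S ^ (n + 1)) x = S ((S ^ n) x) := by rw [pow_succ']; rfl
      calc ‖(S ^ (n + 1)) x‖ = ‖S ((S ^ n) x)‖ := by rw [heq]
        _ ≤ ‖S‖ * ‖(S ^ n) x‖ := S.le_opNorm _
        _ ≤ 1 * ‖x‖ := by
            apply mul_le_mul hS ih (norm_nonneg _) zero_le_one
        _ = ‖x‖ := one_mul _
  have hbound : ∀ n : ℕ, (n : ℝ) * ‖y‖ ≤ 2 * ‖x‖ := by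
    intro n
    have h1 : ‖x - n • y‖ ≤ ‖x‖ := by rw [← hiter n]; exact hSnx n
    have h3 : ‖n • y‖ ≤ 2 * ‖x‖ := by
      have heq : ‖n • y‖ = ‖x - (x - n • y)‖ := by congr 1; abel
      rw [heq]
      calc ‖x - (x - n • y)‖ ≤ ‖x‖ + ‖x - n • y‖ := norm_sub_le _ _
        _ ≤ ‖x‖ + ‖x‖ := by linarith
        _ = 2 * ‖x‖ := by ring
    calc (n : ℝ) * ‖y‖ = ‖n • y‖ := by
          rw [← Nat.cast_smul_eq_nsmul ℝ, norm_smul]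
          simp
      _ ≤ 2 * ‖x‖ := h3
  have hy0 : y = 0 := by
    by_contra hy0
    have hpos : 0 < ‖y‖ := norm_pos_iff.mpr hy0
    obtain ⟨n, hn⟩ := exists_nat_gt (2 * ‖x‖ / ‖y‖)
    have := hbound n
    have : (n : ℝ) ≤ 2 * ‖x‖ / ‖y‖ := (le_div_iff₀ hpos).mpr this
    linarith
  show S x = x
  have : x - S x = 0 := by rw [← hy, hy0]
  exact (sub_eq_zero.mp this).symm
end

section
/- Let T and S be commuting mean ergodic contractions on a Banach space X with F(T) = F(S). Then the range (I−T)(I−S)X is closed in X if and only if both T and S are uniformly ergodic. -/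
open Filter Topology

set_option linter.unusedSectionVars false
set_option maxHeartbeats 800000
set_option synthInstance.maxHeartbeats 400000

namespace Stmt4
variable {X : Type*} [NormedAddCommGroup X] [NormedSpace ℝ X] [CompleteSpace X]

lemma tendsto_inv_smul_zero {c : ℕ → X} {B : ℝ} (hc : ∀ n, ‖c n‖ ≤ B) :
    Tendsto (fun n : ℕ => (n : ℝ)⁻¹ • c n) atTop (𝓝 0) := by
  rw [tendsto_zero_iff_norm_tendsto_zero]
  apply squeeze_zero (fun n => norm_nonneg _) (g := fun n : ℕ => B * (n : ℝ)⁻¹)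
  · intro n
    rw [norm_smul, Real.norm_eq_abs, mul_comm]
    have : |(n:ℝ)⁻¹| = (n:ℝ)⁻¹ := abs_of_nonneg (by positivity)
    rw [this]
    exact mul_le_mul_of_nonneg_right (hc n) (by positivity)
  · simpa using (tendsto_inv_atTop_nhds_zero_nat).const_mul B

variable {T : X →L[ℝ] X}

lemma sum_pow_succ_apply (T : X →L[ℝ] X) (n : ℕ) (x : X) :
    ∑ k ∈ Finset.range n, (T ^ (k + 1)) x
      = (∑ k ∈ Finset.range n, (T ^ k) x) + ((T ^ n) x - x) := by
  have h := Finset.sum_range_succ' (fun k => (T ^ k) x) n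
  have h2 := Finset.sum_range_succ (fun k => (T ^ k) x) n
  rw [h2] at h
  simp only [pow_zero, ContinuousLinearMap.one_apply] at h
  -- h : ∑ range n, T^k x + T^n x = (∑ k ∈ range n, T^(k+1) x) + x
  have h3 : ∑ k ∈ Finset.range n, (T ^ (k+1)) x
      = ∑ k ∈ Finset.range n, (T ^ k) x + (T ^ n) x - x := by
    rw [eq_sub_iff_add_eq, ← h]
  rw [h3]; abel

noncomputable def avg (T : X →L[ℝ] X) (n : ℕ) : X →L[ℝ] X :=
  (n : ℝ)⁻¹ • ∑ k ∈ Finset.range n, T ^ k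

lemma avg_apply (T : X →L[ℝ] X) (n : ℕ) (x : X) :
    avg T n x = (n : ℝ)⁻¹ • ∑ k ∈ Finset.range n, (T ^ k) x := by
  simp [avg, ContinuousLinearMap.sum_apply]

lemma T_avg_apply (T : X →L[ℝ] X) (n : ℕ) (x : X) :
    T (avg T n x) = avg T n x + (n : ℝ)⁻¹ • ((T ^ n) x - x) := by
  rw [avg_apply, map_smul, map_sum]
  have : ∀ k, T ((T ^ k) x) = (T ^ (k+1)) x := by
    intro k; rw [pow_succ', ContinuousLinearMap.mul_apply]
  simp only [this]
  rw [sum_pow_succ_apply, smul_add, ← avg_apply]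

lemma pow_apply_fixed {x : X} (h : T x = x) (k : ℕ) : (T ^ k) x = x := by
  induction k with
  | zero => simp
  | succ k ih => rw [pow_succ, ContinuousLinearMap.mul_apply, h, ih]

lemma avg_apply_fixed {x : X} (h : T x = x) {n : ℕ} (hn : 1 ≤ n) : avg T n x = x := by
  rw [avg_apply]
  simp only [pow_apply_fixed h]
  rw [Finset.sum_const, Finset.card_range, ← Nat.cast_smul_eq_nsmul ℝ, smul_smul,
    inv_mul_cancel₀ (by exact_mod_cast Nat.one_le_iff_ne_zero.mp hn : (n:ℝ) ≠ 0), one_smul]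

lemma norm_pow_apply_le (hT : ‖T‖ ≤ 1) (k : ℕ) (x : X) :
    ‖(T ^ k) x‖ ≤ ‖x‖ := by
  induction k generalizing x with
  | zero => simp
  | succ k ih =>
    rw [pow_succ', ContinuousLinearMap.mul_apply]
    calc ‖T ((T ^ k) x)‖ ≤ ‖T‖ * ‖(T ^ k) x‖ := T.le_opNorm _
    _ ≤ 1 * ‖x‖ := mul_le_mul hT (ih x) (norm_nonneg _) zero_le_one
    _ = ‖x‖ := one_mul _

lemma norm_avg_apply_le (hT : ‖T‖ ≤ 1) (n : ℕ) (x : X) :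
    ‖avg T n x‖ ≤ ‖x‖ := by
  rcases Nat.eq_zero_or_pos n with h | h
  · simp [avg_apply, h]
  · rw [avg_apply, norm_smul]
    have h1 : ‖∑ k ∈ Finset.range n, (T ^ k) x‖ ≤ n * ‖x‖ := by
      calc ‖∑ k ∈ Finset.range n, (T ^ k) x‖ ≤ ∑ k ∈ Finset.range n, ‖(T ^ k) x‖ :=
            norm_sum_le _ _
      _ ≤ ∑ _k ∈ Finset.range n, ‖x‖ := Finset.sum_le_sum fun k _ => norm_pow_apply_le hT k x
      _ = n * ‖x‖ := by simp
    have hn : (0:ℝ) < n := by exact_mod_cast h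
    calc ‖(n:ℝ)⁻¹‖ * ‖∑ k ∈ Finset.range n, (T ^ k) x‖
        ≤ ‖(n:ℝ)⁻¹‖ * (n * ‖x‖) := mul_le_mul_of_nonneg_left h1 (norm_nonneg _)
      _ = ‖x‖ := by
          rw [Real.norm_eq_abs, abs_of_pos (inv_pos.mpr hn)]
          field_simp

/-- Mean ergodicity hypothesis, in the exact form of the statement. -/
def ME (T : X →L[ℝ] X) : Prop :=
  ∀ x : X, ∃ y : X,
    Tendsto (fun n : ℕ => (n : ℝ)⁻¹ • ∑ k ∈ Finset.range n, (T ^ k) x) atTop (𝓝 y)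

lemma ME.tendsto' (hme : ME T) (x : X) :
    Tendsto (fun n : ℕ => avg T n x) atTop (𝓝 (hme x).choose) := by
  simpa only [avg_apply] using (hme x).choose_spec

noncomputable def proj (hT : ‖T‖ ≤ 1) (hme : ME T) : X →L[ℝ] X :=
  LinearMap.mkContinuous
    { toFun := fun x => (hme x).choose
      map_add' := fun x y => by
        refine tendsto_nhds_unique ?_ ((hme.tendsto' x).add (hme.tendsto' y))
        simpa only [map_add] using hme.tendsto' (x + y)
      map_smul' := fun c x => by
        refine tendsto_nhds_unique ?_ ((hme.tendsto' x).const_smul c)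
        simpa only [map_smul] using hme.tendsto' (c • x) }
    1 (fun x => by
      simp only [LinearMap.coe_mk, AddHom.coe_mk, one_mul]
      exact le_of_tendsto (hme.tendsto' x).norm
        (Eventually.of_forall fun n => norm_avg_apply_le hT n x))

variable (hT : ‖T‖ ≤ 1) (hme : ME T)

lemma tendsto_proj (x : X) :
    Tendsto (fun n : ℕ => avg T n x) atTop (𝓝 (proj hT hme x)) := hme.tendsto' x

lemma norm_proj_le : ‖proj hT hme‖ ≤ 1 :=
  LinearMap.mkContinuous_norm_le _ zero_le_one _

lemma proj_fixed (x : X) : T (proj hT hme x) = proj hT hme x := by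
  refine tendsto_nhds_unique ((T.continuous.tendsto _).comp (tendsto_proj hT hme x)) ?_
  have h1 : Tendsto (fun n : ℕ => avg T n x + (n : ℝ)⁻¹ • ((T ^ n) x - x)) atTop
      (𝓝 (proj hT hme x + 0)) := by
    refine (tendsto_proj hT hme x).add (tendsto_inv_smul_zero (B := 2 * ‖x‖) fun n => ?_)
    calc ‖(T ^ n) x - x‖ ≤ ‖(T ^ n) x‖ + ‖x‖ := norm_sub_le _ _
    _ ≤ ‖x‖ + ‖x‖ := by have := norm_pow_apply_le hT n x; linarith
    _ = 2 * ‖x‖ := by ring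
  rw [add_zero] at h1
  exact h1.congr fun n => by rw [← T_avg_apply]; rfl

lemma proj_apply_fixed {x : X} (h : T x = x) : proj hT hme x = x := by
  refine tendsto_nhds_unique (tendsto_proj hT hme x) ?_
  refine Tendsto.congr' ?_ tendsto_const_nhds
  filter_upwards [eventually_ge_atTop 1] with n hn
  exact (avg_apply_fixed h hn).symm

lemma proj_comp_T (x : X) : proj hT hme (T x) = proj hT hme x := by
  refine tendsto_nhds_unique (tendsto_proj hT hme (T x)) ?_
  have heq : ∀ n : ℕ, avg T n (T x) = T (avg T n x) := by
    intro n
    rw [avg_apply, avg_apply, map_smul, map_sum]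
    congr 1
    refine Finset.sum_congr rfl fun k _ => ?_
    rw [← ContinuousLinearMap.mul_apply, ← ContinuousLinearMap.mul_apply, ← pow_succ, ← pow_succ']
  have h1 : Tendsto (fun n : ℕ => T (avg T n x)) atTop (𝓝 (proj hT hme x)) := by
    have h2 : Tendsto (fun n : ℕ => avg T n x + (n : ℝ)⁻¹ • ((T ^ n) x - x)) atTop
        (𝓝 (proj hT hme x + 0)) := by
      refine (tendsto_proj hT hme x).add (tendsto_inv_smul_zero (B := 2 * ‖x‖) fun n => ?_)
      calc ‖(T ^ n) x - x‖ ≤ ‖(T ^ n) x‖ + ‖x‖ := norm_sub_le _ _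
      _ ≤ ‖x‖ + ‖x‖ := by have := norm_pow_apply_le hT n x; linarith
      _ = 2 * ‖x‖ := by ring
    rw [add_zero] at h2
    exact h2.congr fun n => by rw [← T_avg_apply]
  exact h1.congr fun n => (heq n).symm

lemma proj_comp_pow (k : ℕ) (x : X) : proj hT hme ((T ^ k) x) = proj hT hme x := by
  induction k with
  | zero => simp
  | succ k ih =>
    rw [pow_succ', ContinuousLinearMap.mul_apply, proj_comp_T, ih]

lemma proj_one_sub (x : X) : proj hT hme ((1 - T) x) = 0 := by
  rw [ContinuousLinearMap.sub_apply, ContinuousLinearMap.one_apply, map_sub, proj_comp_T, sub_self]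

lemma proj_idem (x : X) : proj hT hme (proj hT hme x) = proj hT hme x :=
  proj_apply_fixed hT hme (proj_fixed hT hme x)

lemma proj_comp_avg (n : ℕ) (hn : 1 ≤ n) (x : X) :
    proj hT hme (avg T n x) = proj hT hme x := by
  rw [avg_apply, map_smul, map_sum]
  simp only [proj_comp_pow]
  rw [Finset.sum_const, Finset.card_range, ← Nat.cast_smul_eq_nsmul ℝ, smul_smul,
    inv_mul_cancel₀ (by exact_mod_cast Nat.one_le_iff_ne_zero.mp hn : (n:ℝ) ≠ 0), one_smul]

noncomputable def gw (T : X →L[ℝ] X) (n : ℕ) : X →L[ℝ] X :=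
  (n : ℝ)⁻¹ • ∑ k ∈ Finset.range n, ∑ j ∈ Finset.range k, T ^ j

lemma one_sub_mul_geom (T : X →L[ℝ] X) (k : ℕ) :
    (1 - T) * ∑ j ∈ Finset.range k, T ^ j = 1 - T ^ k := by
  have := mul_geom_sum T k
  calc (1 - T) * ∑ j ∈ Finset.range k, T ^ j
      = -((T - 1) * ∑ j ∈ Finset.range k, T ^ j) := by rw [← neg_mul, neg_sub]
    _ = -(T ^ k - 1) := by rw [this]
    _ = 1 - T ^ k := neg_sub _ _

lemma one_sub_mul_gw (T : X →L[ℝ] X) {n : ℕ} (hn : 1 ≤ n) :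
    (1 - T) * gw T n = 1 - avg T n := by
  have hne : (n:ℝ) ≠ 0 := by exact_mod_cast Nat.one_le_iff_ne_zero.mp hn
  rw [gw, mul_smul_comm, Finset.mul_sum]
  simp only [one_sub_mul_geom]
  rw [Finset.sum_sub_distrib, Finset.sum_const, Finset.card_range, smul_sub, avg,
    ← Nat.cast_smul_eq_nsmul ℝ, smul_smul, inv_mul_cancel₀ hne, one_smul]

lemma sub_avg_apply (T : X →L[ℝ] X) {n : ℕ} (hn : 1 ≤ n) (x : X) :
    x - avg T n x = (1 - T) (gw T n x) := by
  have := congrArg (fun f : X →L[ℝ] X => f x) (one_sub_mul_gw T hn)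
  simpa [ContinuousLinearMap.mul_apply, ContinuousLinearMap.sub_apply] using this.symm

lemma avg_mul_one_sub (T : X →L[ℝ] X) (n : ℕ) :
    avg T n * (1 - T) = (n : ℝ)⁻¹ • (1 - T ^ n) := by
  have h : (∑ k ∈ Finset.range n, T ^ k) * (1 - T) = 1 - T ^ n := by
    calc (∑ k ∈ Finset.range n, T ^ k) * (1 - T)
        = -((∑ k ∈ Finset.range n, T ^ k) * (T - 1)) := by rw [← mul_neg, neg_sub]
      _ = -(T ^ n - 1) := by rw [geom_sum_mul]
      _ = 1 - T ^ n := neg_sub _ _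
  rw [avg, smul_mul_assoc, h]

/-- kernel of proj = closure of range of (1 - T) -/
lemma mem_closure_range_of_proj_eq_zero {x : X} (h : proj hT hme x = 0) :
    x ∈ closure (Set.range ⇑(1 - T)) := by
  have h1 : Tendsto (fun n : ℕ => x - avg T n x) atTop (𝓝 x) := by
    have := (tendsto_proj hT hme x).const_sub x
    rw [h, sub_zero] at this
    exact this
  refine mem_closure_of_tendsto h1 ?_
  filter_upwards [eventually_ge_atTop 1] with n hn
  exact ⟨gw T n x, (sub_avg_apply T hn x).symm⟩

lemma proj_eq_zero_of_mem_closure {x : X} (h : x ∈ closure (Set.range ⇑(1 - T))) :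
    proj hT hme x = 0 := by
  have hclosed : IsClosed {y : X | proj hT hme y = 0} :=
    isClosed_eq (proj hT hme).continuous continuous_const
  have hsub : Set.range ⇑(1 - T) ⊆ {y : X | proj hT hme y = 0} := by
    rintro _ ⟨w, rfl⟩
    exact proj_one_sub hT hme w
  exact hclosed.closure_subset_iff.mpr hsub h

/-- Uniform ergodicity implies the range of `1 - T` equals the kernel of the projection. -/
lemma range_eq_of_ue {E' : X →L[ℝ] X}
    (hue : Tendsto (fun n : ℕ => avg T n) atTop (𝓝 E')) :
    Set.range ⇑(1 - T) = {x : X | proj hT hme x = 0} := by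
  have hE' : E' = proj hT hme := by
    ext x
    refine tendsto_nhds_unique ?_ (tendsto_proj hT hme x)
    exact ((ContinuousLinearMap.apply ℝ X x).continuous.tendsto E').comp hue
  subst hE'
  set P := proj hT hme with hP
  apply Set.Subset.antisymm
  · rintro _ ⟨w, rfl⟩
    exact proj_one_sub hT hme w
  · intro x hx
    -- pick n ≥ 1 with ‖avg T n - P‖ < 1
    have hev : ∀ᶠ n : ℕ in atTop, ‖avg T n - P‖ < 1 := by
      have := (tendsto_iff_norm_sub_tendsto_zero.mp hue)
      exact this.eventually_lt_const one_pos |>.mono (fun n h => h)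
    obtain ⟨n, hn1, hnlt⟩ : ∃ n : ℕ, 1 ≤ n ∧ ‖avg T n - P‖ < 1 := by
      obtain ⟨n, hn⟩ := (hev.and (eventually_ge_atTop 1)).exists
      exact ⟨n, hn.2, hn.1⟩
    obtain ⟨u, hu⟩ := isUnit_one_sub_of_norm_lt_one hnlt
    set z : X := (↑u⁻¹ : X →L[ℝ] X) x with hz
    have h1 : z - (avg T n z - P z) = x := by
      have h0 : (↑u * ↑u⁻¹ : X →L[ℝ] X) x = x := by rw [u.mul_inv]; rfl
      rw [ContinuousLinearMap.mul_apply, ← hz, hu] at h0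
      simpa [ContinuousLinearMap.sub_apply, ContinuousLinearMap.one_apply] using h0
    have hPz : P z = 0 := by
      have := congrArg P h1
      rw [hx] at this
      rw [map_sub, map_sub, proj_comp_avg hT hme n hn1, proj_idem hT hme] at this
      simpa using this
    have h2 : x = z - avg T n z := by rw [← h1, hPz]; abel
    exact ⟨gw T n z, by rw [← sub_avg_apply T hn1 z, ← h2]⟩

/-- If the range of `1 - T` equals the kernel of the projection, then `T` is uniformly ergodic. -/
lemma ue_of_range_eq
    (hrange : Set.range ⇑(1 - T) = {x : X | proj hT hme x = 0}) :
    Tendsto (fun n : ℕ => avg T n) atTop (𝓝 (proj hT hme)) := by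
  set P := proj hT hme with hP
  set N : Submodule ℝ X := LinearMap.ker (P : X →ₗ[ℝ] X) with hN
  have hmemN : ∀ x : X, x ∈ N ↔ P x = 0 := fun x => LinearMap.mem_ker
  have hNclosed : IsClosed (N : Set X) := ContinuousLinearMap.isClosed_ker P
  haveI : CompleteSpace N := hNclosed.completeSpace_coe
  have hmap : ∀ y : X, y ∈ N → (1 - T) y ∈ N := by
    intro y _
    rw [hmemN]
    exact proj_one_sub hT hme y
  set Φ : N →L[ℝ] N :=
    ContinuousLinearMap.codRestrict ((1 - T).comp N.subtypeL) N
      (fun y => hmap _ y.2) with hΦ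
  have hΦapply : ∀ y : N, (Φ y : X) = (1 - T) (y : X) := fun y => rfl
  have hker : LinearMap.ker (Φ : N →ₗ[ℝ] N) = ⊥ := by
    rw [LinearMap.ker_eq_bot']
    intro m hm
    rw [ContinuousLinearMap.coe_coe] at hm
    have h1 : (1 - T) (m : X) = 0 := by
      rw [← hΦapply m, hm]; rfl
    have h2 : T (m : X) = (m : X) := by
      have := h1
      rw [ContinuousLinearMap.sub_apply, ContinuousLinearMap.one_apply, sub_eq_zero] at this
      exact this.symm
    have h3 : P (m : X) = (m : X) := proj_apply_fixed hT hme h2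
    have h4 : P (m : X) = 0 := (hmemN _).mp m.2
    ext
    rw [← h3, h4]; rfl
  have hsurj : LinearMap.range (Φ : N →ₗ[ℝ] N) = ⊤ := by
    rw [LinearMap.range_eq_top]
    intro y
    have hy : (y : X) ∈ Set.range ⇑(1 - T) := by
      rw [hrange]
      exact (hmemN _).mp y.2
    obtain ⟨w, hw⟩ := hy
    refine ⟨⟨w - P w, (hmemN _).mpr (by rw [map_sub, proj_idem hT hme, sub_self])⟩, ?_⟩
    ext
    rw [ContinuousLinearMap.coe_coe, hΦapply]
    simp only [map_sub]
    have : (1 - T) (P w) = 0 := by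
      rw [ContinuousLinearMap.sub_apply, ContinuousLinearMap.one_apply,
        proj_fixed hT hme, sub_self]
    rw [this, sub_zero, hw]
  set e := ContinuousLinearEquiv.ofBijective Φ hker hsurj with he
  set C : ℝ := ‖(e.symm : N →L[ℝ] N)‖ with hC
  have hCnn : 0 ≤ C := norm_nonneg _
  -- key estimate
  have hest : ∀ n : ℕ, 1 ≤ n → ∀ x : X, ‖(avg T n - P) x‖ ≤ 4 * C * (n : ℝ)⁻¹ * ‖x‖ := by
    intro n hn x
    have hinvn : (0:ℝ) ≤ (n:ℝ)⁻¹ := by positivity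
    set z : X := x - P x with hzdef
    have hzN : z ∈ N := (hmemN _).mpr (by rw [hzdef, map_sub, proj_idem hT hme, sub_self])
    have hzn : ‖z‖ ≤ 2 * ‖x‖ := by
      have h1 : ‖P x‖ ≤ ‖x‖ := by
        calc ‖P x‖ ≤ ‖P‖ * ‖x‖ := P.le_opNorm x
        _ ≤ 1 * ‖x‖ := mul_le_mul_of_nonneg_right (norm_proj_le hT hme) (norm_nonneg x)
        _ = ‖x‖ := one_mul _
      calc ‖z‖ ≤ ‖x‖ + ‖P x‖ := norm_sub_le _ _
      _ ≤ ‖x‖ + ‖x‖ := by linarith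
      _ = 2 * ‖x‖ := by ring
    set y : N := e.symm ⟨z, hzN⟩ with hy
    have hyz : (1 - T) (y : X) = z := by
      have : Φ y = ⟨z, hzN⟩ := e.apply_symm_apply ⟨z, hzN⟩
      rw [← hΦapply, this]
    have hyn : ‖(y : X)‖ ≤ C * ‖z‖ := by
      calc ‖(y : X)‖ = ‖y‖ := rfl
      _ ≤ C * ‖(⟨z, hzN⟩ : N)‖ := (e.symm : N →L[ℝ] N).le_opNorm _
      _ = C * ‖z‖ := rfl
    have havgz : (avg T n - P) x = avg T n z := by
      rw [ContinuousLinearMap.sub_apply]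
      have h1 : avg T n (P x) = P x := avg_apply_fixed (proj_fixed hT hme x) hn
      rw [hzdef, map_sub, h1]
    have h2 : avg T n z = (n : ℝ)⁻¹ • ((y : X) - (T ^ n) (y : X)) := by
      rw [← hyz, ← ContinuousLinearMap.mul_apply, avg_mul_one_sub]
      simp [ContinuousLinearMap.sub_apply]
    rw [havgz, h2, norm_smul, Real.norm_eq_abs, abs_of_nonneg hinvn]
    have h3 : ‖(y : X) - (T ^ n) (y : X)‖ ≤ 2 * (C * ‖z‖) := by
      calc ‖(y : X) - (T ^ n) (y : X)‖ ≤ ‖(y : X)‖ + ‖(T ^ n) (y : X)‖ := norm_sub_le _ _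
      _ ≤ ‖(y : X)‖ + ‖(y : X)‖ := by
          have := norm_pow_apply_le hT n (y : X); linarith
      _ ≤ 2 * (C * ‖z‖) := by linarith
    calc (n:ℝ)⁻¹ * ‖(y : X) - (T ^ n) (y : X)‖
        ≤ (n:ℝ)⁻¹ * (2 * (C * ‖z‖)) := mul_le_mul_of_nonneg_left h3 hinvn
      _ ≤ (n:ℝ)⁻¹ * (2 * (C * (2 * ‖x‖))) := by
          have : C * ‖z‖ ≤ C * (2 * ‖x‖) := mul_le_mul_of_nonneg_left hzn hCnn
          nlinarith [hinvn]
      _ = 4 * C * (n : ℝ)⁻¹ * ‖x‖ := by ring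
  have hopnorm : ∀ n : ℕ, 1 ≤ n → ‖avg T n - P‖ ≤ 4 * C * (n : ℝ)⁻¹ := by
    intro n hn
    exact ContinuousLinearMap.opNorm_le_bound _ (by positivity) (hest n hn)
  rw [tendsto_iff_norm_sub_tendsto_zero]
  apply squeeze_zero' (g := fun n : ℕ => 4 * C * (n : ℝ)⁻¹)
  · exact Eventually.of_forall fun n => norm_nonneg _
  · filter_upwards [eventually_ge_atTop 1] with n hn
    exact hopnorm n hn
  · have := (tendsto_inv_atTop_nhds_zero_nat).const_mul (4 * C)
    simpa using this

section Two
variable {S : X →L[ℝ] X} (hS : ‖S‖ ≤ 1) (hSme : ME S)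

lemma S_comm_pow_apply (hTS : T * S = S * T) (k : ℕ) (x : X) : (T ^ k) (S x) = S ((T ^ k) x) := by
  have h : Commute T S := hTS
  have := (h.pow_left k).eq
  calc (T ^ k) (S x) = (T ^ k * S) x := rfl
  _ = (S * T ^ k) x := by rw [this]
  _ = S ((T ^ k) x) := rfl

lemma S_comm_proj (hTS : T * S = S * T) (x : X) : S (proj hT hme x) = proj hT hme (S x) := by
  have heq : ∀ n : ℕ, avg T n (S x) = S (avg T n x) := by
    intro n
    rw [avg_apply, avg_apply, map_smul, map_sum]
    exact congrArg _ (Finset.sum_congr rfl fun k _ => S_comm_pow_apply hTS k x)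
  refine tendsto_nhds_unique ?_ ((tendsto_proj hT hme (S x)).congr fun n => heq n)
  exact (S.continuous.tendsto _).comp (tendsto_proj hT hme x)

lemma proj_comm_pow_S (hTS : T * S = S * T) (k : ℕ) (x : X) :
    proj hT hme ((S ^ k) x) = (S ^ k) (proj hT hme x) := by
  induction k with
  | zero => simp
  | succ k ih =>
    rw [pow_succ', ContinuousLinearMap.mul_apply, ContinuousLinearMap.mul_apply,
      ← S_comm_proj hT hme hTS, ih]

/-- under the fixed point hypothesis, the two projections coincide -/
lemma proj_eq_proj (hTS : T * S = S * T) (hfix : {x : X | T x = x} = {x : X | S x = x}) :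
    proj hT hme = proj hS hSme := by
  have hTfix : ∀ x : X, S (proj hT hme x) = proj hT hme x := by
    intro x
    have h1 : proj hT hme x ∈ {y : X | T y = y} := proj_fixed hT hme x
    rw [hfix] at h1
    exact h1
  have hSfix : ∀ x : X, T (proj hS hSme x) = proj hS hSme x := by
    intro x
    have h1 : proj hS hSme x ∈ {y : X | S y = y} := proj_fixed hS hSme x
    rw [← hfix] at h1
    exact h1
  -- Q (P x) = P x,  P (Q x) = Q x
  have hQP : ∀ x : X, proj hS hSme (proj hT hme x) = proj hT hme x := fun x =>
    proj_apply_fixed hS hSme (hTfix x)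
  have hPQ : ∀ x : X, proj hT hme (proj hS hSme x) = proj hS hSme x := fun x =>
    proj_apply_fixed hT hme (hSfix x)
  -- P and Q commute
  have hcomm : ∀ x : X, proj hT hme (proj hS hSme x) = proj hS hSme (proj hT hme x) := by
    intro x
    have heq : ∀ n : ℕ, proj hT hme (avg S n x) = avg S n (proj hT hme x) := by
      intro n
      rw [avg_apply, avg_apply, map_smul, map_sum]
      exact congrArg _ (Finset.sum_congr rfl fun k _ => proj_comm_pow_S hT hme hTS k x)
    refine tendsto_nhds_unique ?_ ((tendsto_proj hS hSme (proj hT hme x)).congr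
      fun n => (heq n).symm)
    exact ((proj hT hme).continuous.tendsto _).comp (tendsto_proj hS hSme x)
  ext x
  calc proj hT hme x = proj hS hSme (proj hT hme x) := (hQP x).symm
  _ = proj hT hme (proj hS hSme x) := (hcomm x).symm
  _ = proj hS hSme x := hPQ x

end Two
end Stmt4

open Stmt4

/-- Let `T` and `S` be commuting mean ergodic contractions on a Banach space `X`
with `F(T) = F(S)`. Then the range `(I-T)(I-S)X` is closed in `X` if and only if both `T` and `S`
are uniformly ergodic. -/
theorem stmt4 {X : Type*} [NormedAddCommGroup X] [NormedSpace ℝ X] [CompleteSpace X]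
    (T S : X →L[ℝ] X) (hT : ‖T‖ ≤ 1) (hS : ‖S‖ ≤ 1) (hTS : T * S = S * T)
    (hTme : ∀ x : X, ∃ y : X,
      Tendsto (fun n : ℕ => (n : ℝ)⁻¹ • ∑ k ∈ Finset.range n, (T ^ k) x) atTop (𝓝 y))
    (hSme : ∀ x : X, ∃ y : X,
      Tendsto (fun n : ℕ => (n : ℝ)⁻¹ • ∑ k ∈ Finset.range n, (S ^ k) x) atTop (𝓝 y))
    (hfix : {x : X | T x = x} = {x : X | S x = x}) :
    IsClosed (Set.range ⇑((1 - T) * (1 - S))) ↔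
      ((∃ E : X →L[ℝ] X,
          Tendsto (fun n : ℕ => (n : ℝ)⁻¹ • ∑ k ∈ Finset.range n, T ^ k) atTop (𝓝 E)) ∧
        (∃ E : X →L[ℝ] X,
          Tendsto (fun n : ℕ => (n : ℝ)⁻¹ • ∑ k ∈ Finset.range n, S ^ k) atTop (𝓝 E))) := by
  
  have hTme' : ME T := hTme
  have hSme' : ME S := hSme
  set P := proj hT hTme' with hPdef
  set Q := proj hS hSme' with hQdef
  have hPQ : P = Q := proj_eq_proj hT hTme' hS hSme' hTS hfix
  have hcommTS : (1 - T) * (1 - S) = (1 - S) * (1 - T) := by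
    have h : Commute T S := hTS
    have c2 : Commute T (1 - S) := (Commute.one_right T).sub_right h
    have c3 : Commute (1 - T) (1 - S) := (Commute.one_left _).sub_left c2
    exact c3.eq
  have havgT : (fun n : ℕ => (n : ℝ)⁻¹ • ∑ k ∈ Finset.range n, T ^ k) = fun n => avg T n := rfl
  have havgS : (fun n : ℕ => (n : ℝ)⁻¹ • ∑ k ∈ Finset.range n, S ^ k) = fun n => avg S n := rfl
  have hsub1 : Set.range ⇑((1 - T) * (1 - S)) ⊆ {x : X | P x = 0} := by
    rintro _ ⟨w, rfl⟩
    show P (((1 - T) * (1 - S)) w) = 0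
    rw [ContinuousLinearMap.mul_apply]
    exact proj_one_sub hT hTme' _
  constructor
  · intro hclosed
    have hstep : ∀ z : X, P z = 0 → (1 - T) z ∈ closure (Set.range ⇑((1 - T) * (1 - S))) := by
      intro z hz
      have hz' : Q z = 0 := by rw [← hPQ]; exact hz
      have h1 : z ∈ closure (Set.range ⇑(1 - S)) :=
        mem_closure_range_of_proj_eq_zero hS hSme' hz'
      have h2 : (1 - T) z ∈ ⇑(1 - T) '' closure (Set.range ⇑(1 - S)) := ⟨z, h1, rfl⟩
      have h3 : ⇑(1 - T) '' closure (Set.range ⇑(1 - S))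
          ⊆ closure (⇑(1 - T) '' Set.range ⇑(1 - S)) :=
        image_closure_subset_closure_image (1 - T).continuous
      have h4 : ⇑(1 - T) '' Set.range ⇑(1 - S) = Set.range ⇑((1 - T) * (1 - S)) := by
        rw [← Set.range_comp]; rfl
      rw [h4] at h3
      exact h3 h2
    have hsub2 : {x : X | P x = 0} ⊆ Set.range ⇑((1 - T) * (1 - S)) := by
      intro x hx
      have hx' : P x = 0 := hx
      have hlim : Tendsto (fun n : ℕ => x - avg T n x) atTop (𝓝 x) := by
        have := (tendsto_proj hT hTme' x).const_sub x
        rw [← hPdef, hx', sub_zero] at this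
        exact this
      have hev : ∀ᶠ n : ℕ in atTop,
          x - avg T n x ∈ closure (Set.range ⇑((1 - T) * (1 - S))) := by
        filter_upwards [eventually_ge_atTop 1] with n hn
        have h5 : x - avg T n x = (1 - T) (gw T n x) := sub_avg_apply T hn x
        set w := gw T n x with hw
        have h6 : (1 - T) (w - P w) = (1 - T) w := by
          rw [map_sub]
          have : (1 - T) (P w) = 0 := by
            rw [ContinuousLinearMap.sub_apply, ContinuousLinearMap.one_apply,
              proj_fixed hT hTme', sub_self]
          rw [this, sub_zero]
        have h7 : P (w - P w) = 0 := by rw [map_sub, proj_idem hT hTme', sub_self]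
        rw [h5, ← h6]
        exact hstep _ h7
      have := mem_closure_of_tendsto hlim hev
      rwa [closure_closure, hclosed.closure_eq] at this
    have hReq : Set.range ⇑((1 - T) * (1 - S)) = {x : X | P x = 0} :=
      Set.Subset.antisymm hsub1 hsub2
    have hRT : Set.range ⇑(1 - T) = {x : X | P x = 0} := by
      apply Set.Subset.antisymm
      · rintro _ ⟨w, rfl⟩
        exact proj_one_sub hT hTme' w
      · intro x hx
        have : x ∈ Set.range ⇑((1 - T) * (1 - S)) := hReq ▸ hx
        obtain ⟨w, hw⟩ := this
        exact ⟨(1 - S) w, by rw [← ContinuousLinearMap.mul_apply, hw]⟩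
    have hRS : Set.range ⇑(1 - S) = {x : X | Q x = 0} := by
      apply Set.Subset.antisymm
      · rintro _ ⟨w, rfl⟩
        exact proj_one_sub hS hSme' w
      · intro x hx
        have hx' : x ∈ {y : X | P y = 0} := by rw [hPQ]; exact hx
        have : x ∈ Set.range ⇑((1 - T) * (1 - S)) := hReq ▸ hx'
        obtain ⟨w, hw⟩ := this
        rw [hcommTS] at hw
        exact ⟨(1 - T) w, by rw [← ContinuousLinearMap.mul_apply, hw]⟩
    constructor
    · exact ⟨P, by rw [havgT]; exact ue_of_range_eq hT hTme' hRT⟩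
    · exact ⟨Q, by rw [havgS]; exact ue_of_range_eq hS hSme' hRS⟩
  · rintro ⟨⟨E1, h1⟩, ⟨E2, h2⟩⟩
    rw [havgT] at h1
    rw [havgS] at h2
    have hRT := range_eq_of_ue hT hTme' h1
    have hRS := range_eq_of_ue hS hSme' h2
    have hsub2 : {x : X | P x = 0} ⊆ Set.range ⇑((1 - T) * (1 - S)) := by
      intro x hx
      have hx' : P x = 0 := hx
      have hxS : x ∈ Set.range ⇑(1 - S) := by
        rw [hRS]
        show Q x = 0
        rw [← hPQ]; exact hx'
      obtain ⟨u, hu⟩ := hxS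
      set u' := u - Q u with hu'
      have h3 : (1 - S) u' = x := by
        rw [hu', map_sub]
        have : (1 - S) (Q u) = 0 := by
          rw [ContinuousLinearMap.sub_apply, ContinuousLinearMap.one_apply,
            proj_fixed hS hSme', sub_self]
        rw [this, sub_zero, hu]
      have h4 : u' ∈ Set.range ⇑(1 - T) := by
        rw [hRT]
        show P u' = 0
        rw [hPQ, hu', map_sub, proj_idem hS hSme', sub_self]
      obtain ⟨v, hv⟩ := h4
      refine ⟨v, ?_⟩
      rw [hcommTS, ContinuousLinearMap.mul_apply, hv, h3]
    have hReq : Set.range ⇑((1 - T) * (1 - S)) = {x : X | P x = 0} :=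
      Set.Subset.antisymm hsub1 hsub2
    rw [hReq]
    exact isClosed_eq P.continuous continuous_const
end

section
/- Let T and S be commuting mean ergodic contractions on a Banach space X with F(T) = F(S), and assume T is uniformly ergodic. Then every coboundary of S is a double coboundary, i.e. (I−S)X ⊆ (I−T)(I−S)X; in particular every joint coboundary is a double coboundary. Moreover (1/(nm))·Σ_{k=0}^{n−1} Σ_{j=0}^{m−1} T^k S^j converges in operator norm, as min(n,m) → ∞, to the projection E onto F(T) whose null space is the closure of (I−T)X. -/
open Filter Topology

set_option maxHeartbeats 1000000
set_option synthInstance.maxHeartbeats 400000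

section aux
variable {X : Type*} [NormedAddCommGroup X] [NormedSpace ℝ X]

lemma aux_pow_norm (R : X →L[ℝ] X) (hR : ‖R‖ ≤ 1) (k : ℕ) : ‖R ^ k‖ ≤ 1 := by
  induction k with
  | zero => simpa [ContinuousLinearMap.one_def] using ContinuousLinearMap.norm_id_le
  | succ k ih =>
    calc ‖R ^ (k + 1)‖ = ‖R ^ k * R‖ := by rw [pow_succ]
      _ ≤ ‖R ^ k‖ * ‖R‖ := norm_mul_le _ _
      _ ≤ 1 * 1 := mul_le_mul ih hR (norm_nonneg _) zero_le_one
      _ = 1 := one_mul 1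

lemma aux_avg_norm (R : X →L[ℝ] X) (hR : ‖R‖ ≤ 1) (n : ℕ) :
    ‖(n : ℝ)⁻¹ • ∑ k ∈ Finset.range n, R ^ k‖ ≤ 1 := by
  rcases Nat.eq_zero_or_pos n with h | h
  · simp [h]
  · have hn : (0 : ℝ) < n := by exact_mod_cast h
    calc ‖(n : ℝ)⁻¹ • ∑ k ∈ Finset.range n, R ^ k‖
        = (n : ℝ)⁻¹ * ‖∑ k ∈ Finset.range n, R ^ k‖ :=
          (norm_smul ((n : ℝ)⁻¹) (∑ k ∈ Finset.range n, R ^ k)).trans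
            (by rw [Real.norm_eq_abs, abs_of_nonneg (by positivity)])
      _ ≤ (n : ℝ)⁻¹ * (n : ℝ) := by
          refine mul_le_mul_of_nonneg_left ?_ (by positivity)
          calc ‖∑ k ∈ Finset.range n, R ^ k‖ ≤ ∑ k ∈ Finset.range n, ‖R ^ k‖ :=
                norm_sum_le _ _
            _ ≤ ∑ _k ∈ Finset.range n, (1 : ℝ) :=
                Finset.sum_le_sum fun k _ => aux_pow_norm R hR k
            _ = (n : ℝ) := by simp
      _ = 1 := inv_mul_cancel₀ hn.ne'

lemma aux_geom (R : X →L[ℝ] X) (n : ℕ) :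
    (1 - R) * ∑ k ∈ Finset.range n, R ^ k = 1 - R ^ n := by
  have h := mul_geom_sum R n
  calc (1 - R) * ∑ k ∈ Finset.range n, R ^ k
      = -((R - 1) * ∑ k ∈ Finset.range n, R ^ k) := by rw [← neg_mul, neg_sub]
    _ = -(R ^ n - 1) := by rw [h]
    _ = 1 - R ^ n := neg_sub _ _

lemma aux_geom' (R : X →L[ℝ] X) (n : ℕ) :
    (∑ k ∈ Finset.range n, R ^ k) * (1 - R) = 1 - R ^ n := by
  have h := geom_sum_mul R n
  calc (∑ k ∈ Finset.range n, R ^ k) * (1 - R)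
      = -((∑ k ∈ Finset.range n, R ^ k) * (R - 1)) := by rw [← mul_neg, neg_sub]
    _ = -(R ^ n - 1) := by rw [h]
    _ = 1 - R ^ n := neg_sub _ _

lemma aux_one_sub_avg (R : X →L[ℝ] X) {n : ℕ} (hn : 1 ≤ n) :
    (1 : X →L[ℝ] X) - (n : ℝ)⁻¹ • ∑ k ∈ Finset.range n, R ^ k
      = (1 - R) * ((n : ℝ)⁻¹ • ∑ k ∈ Finset.range n, ∑ j ∈ Finset.range k, R ^ j) := by
  have hn0 : (n : ℝ) ≠ 0 := by exact_mod_cast Nat.one_le_iff_ne_zero.mp hn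
  rw [mul_smul_comm, Finset.mul_sum]
  rw [Finset.sum_congr rfl fun k _ => aux_geom R k]
  rw [Finset.sum_sub_distrib, Finset.sum_const, Finset.card_range, smul_sub]
  congr 1
  rw [← Nat.cast_smul_eq_nsmul ℝ, smul_smul, inv_mul_cancel₀ hn0, one_smul]

end aux

/-- Let `T` and `S` be commuting mean ergodic contractions on a Banach space `X`
with `F(T) = F(S)`, and assume `T` is uniformly ergodic. Then every coboundary of `S` is a double
coboundary, i.e. `(I-S)X ⊆ (I-T)(I-S)X`; in particular every joint coboundary is a double
coboundary. Moreover `(1/(nm)) Σ_{k<n} Σ_{j<m} T^k S^j` converges in operator norm, as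
`min(n,m) → ∞`, to the projection `E` onto `F(T)` whose null space is the closure of `(I-T)X`. -/
theorem stmt5 {X : Type*} [NormedAddCommGroup X] [NormedSpace ℝ X] [CompleteSpace X]
    (T S : X →L[ℝ] X) (hT : ‖T‖ ≤ 1) (hS : ‖S‖ ≤ 1) (hTS : T * S = S * T)
    (hTme : ∀ x : X, ∃ y : X,
      Tendsto (fun n : ℕ => (n : ℝ)⁻¹ • ∑ k ∈ Finset.range n, (T ^ k) x) atTop (𝓝 y))
    (hSme : ∀ x : X, ∃ y : X,
      Tendsto (fun n : ℕ => (n : ℝ)⁻¹ • ∑ k ∈ Finset.range n, (S ^ k) x) atTop (𝓝 y))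
    (hfix : {x : X | T x = x} = {x : X | S x = x})
    (hTue : ∃ E : X →L[ℝ] X,
      Tendsto (fun n : ℕ => (n : ℝ)⁻¹ • ∑ k ∈ Finset.range n, T ^ k) atTop (𝓝 E)) :
    Set.range ⇑(1 - S) ⊆ Set.range ⇑((1 - T) * (1 - S)) ∧
      Set.range ⇑(1 - T) ∩ Set.range ⇑(1 - S) ⊆ Set.range ⇑((1 - T) * (1 - S)) ∧
      ∃ E : X →L[ℝ] X, E * E = E ∧ Set.range ⇑E = {x : X | T x = x} ∧
        {x : X | E x = 0} = closure (Set.range ⇑(1 - T)) ∧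
        Tendsto (fun nm : ℕ × ℕ => ((nm.1 : ℝ) * (nm.2 : ℝ))⁻¹ •
            ∑ k ∈ Finset.range nm.1, ∑ j ∈ Finset.range nm.2, T ^ k * S ^ j)
          atTop (𝓝 E) := by
  obtain ⟨E, hE⟩ := hTue
  have hone : ‖(1 : X →L[ℝ] X)‖ ≤ 1 := by
    rw [ContinuousLinearMap.one_def]
    exact ContinuousLinearMap.norm_id_le
  set A : ℕ → (X →L[ℝ] X) := fun n => (n : ℝ)⁻¹ • ∑ k ∈ Finset.range n, T ^ k with hA_def
  -- (1-T) * A n = n⁻¹ • (1 - T^n) and similarly on the right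
  have hAl : ∀ n : ℕ, (1 - T) * A n = (n : ℝ)⁻¹ • ((1 : X →L[ℝ] X) - T ^ n) := by
    intro n; rw [hA_def, mul_smul_comm, aux_geom]
  have hAr : ∀ n : ℕ, A n * (1 - T) = (n : ℝ)⁻¹ • ((1 : X →L[ℝ] X) - T ^ n) := by
    intro n; rw [hA_def, smul_mul_assoc, aux_geom']
  -- n⁻¹ • (1 - T^n) → 0
  have h0 : Tendsto (fun n : ℕ => (n : ℝ)⁻¹ • ((1 : X →L[ℝ] X) - T ^ n)) atTop (𝓝 0) := by
    apply squeeze_zero_norm (a := fun n : ℕ => 2 / (n : ℝ))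
    · intro n
      calc ‖(n : ℝ)⁻¹ • ((1 : X →L[ℝ] X) - T ^ n)‖
          = (n : ℝ)⁻¹ * ‖(1 : X →L[ℝ] X) - T ^ n‖ :=
            (norm_smul ((n : ℝ)⁻¹) ((1 : X →L[ℝ] X) - T ^ n)).trans
              (by rw [Real.norm_eq_abs, abs_of_nonneg (by positivity)])
        _ ≤ (n : ℝ)⁻¹ * 2 := by
            refine mul_le_mul_of_nonneg_left ?_ (by positivity)
            calc ‖(1 : X →L[ℝ] X) - T ^ n‖ ≤ ‖(1 : X →L[ℝ] X)‖ + ‖T ^ n‖ := norm_sub_le _ _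
              _ ≤ 1 + 1 := add_le_add hone (aux_pow_norm T hT n)
              _ = 2 := by norm_num
        _ = 2 / (n : ℝ) := by ring
    · exact tendsto_const_div_atTop_nhds_zero_nat 2
  have hTEl : (1 - T) * E = 0 := by
    have h1 : Tendsto (fun n => (1 - T) * A n) atTop (𝓝 ((1 - T) * E)) := hE.const_mul _
    have h2 : Tendsto (fun n => (1 - T) * A n) atTop (𝓝 0) := by
      simpa only [hAl] using h0
    exact tendsto_nhds_unique h1 h2
  have hTEr : E * (1 - T) = 0 := by
    have h1 : Tendsto (fun n => A n * (1 - T)) atTop (𝓝 (E * (1 - T))) := hE.mul_const _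
    have h2 : Tendsto (fun n => A n * (1 - T)) atTop (𝓝 0) := by
      simpa only [hAr] using h0
    exact tendsto_nhds_unique h1 h2
  have hTE : T * E = E := by have := hTEl; rw [sub_mul, one_mul, sub_eq_zero] at this; exact this.symm
  have hET : E * T = E := by have := hTEr; rw [mul_sub, mul_one, sub_eq_zero] at this; exact this.symm
  have hETk : ∀ k : ℕ, E * T ^ k = E := by
    intro k; induction k with
    | zero => simp
    | succ k ih => rw [pow_succ, ← mul_assoc, ih, hET]
  have hTkE : ∀ k : ℕ, T ^ k * E = E := by
    intro k; induction k with
    | zero => simp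
    | succ k ih => rw [pow_succ, mul_assoc, hTE, ih]
  have hEA : ∀ n : ℕ, 1 ≤ n → E * A n = E := by
    intro n hn
    have hn0 : (n : ℝ) ≠ 0 := by exact_mod_cast Nat.one_le_iff_ne_zero.mp hn
    rw [hA_def, mul_smul_comm, Finset.mul_sum]
    rw [Finset.sum_congr rfl fun k _ => hETk k, Finset.sum_const, Finset.card_range,
      ← Nat.cast_smul_eq_nsmul ℝ, smul_smul, inv_mul_cancel₀ hn0, one_smul]
  have hAE : ∀ n : ℕ, 1 ≤ n → A n * E = E := by
    intro n hn
    have hn0 : (n : ℝ) ≠ 0 := by exact_mod_cast Nat.one_le_iff_ne_zero.mp hn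
    rw [hA_def, smul_mul_assoc, Finset.sum_mul]
    rw [Finset.sum_congr rfl fun k _ => hTkE k, Finset.sum_const, Finset.card_range,
      ← Nat.cast_smul_eq_nsmul ℝ, smul_smul, inv_mul_cancel₀ hn0, one_smul]
  have hEE : E * E = E := by
    have h1 : Tendsto (fun n => E * A n) atTop (𝓝 (E * E)) := hE.const_mul _
    have h2 : Tendsto (fun n => E * A n) atTop (𝓝 E) := by
      apply Tendsto.congr' _ tendsto_const_nhds
      filter_upwards [eventually_ge_atTop 1] with n hn
      exact (hEA n hn).symm
    exact tendsto_nhds_unique h1 h2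
  -- pointwise convergence
  have hEx : ∀ x : X, Tendsto (fun n => A n x) atTop (𝓝 (E x)) := by
    intro x
    have : Tendsto (fun n => A n - E) atTop (𝓝 0) := by
      simpa using hE.sub (tendsto_const_nhds (x := E))
    have h1 : Tendsto (fun n => A n x - E x) atTop (𝓝 0) := by
      apply squeeze_zero_norm (a := fun n => ‖A n - E‖ * ‖x‖)
      · intro n
        have : A n x - E x = (A n - E) x := by simp
        rw [this]
        exact (A n - E).le_opNorm x
      · simpa using ((tendsto_iff_norm_sub_tendsto_zero.mp hE).mul_const ‖x‖)
    simpa using h1.add (tendsto_const_nhds (x := E x))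
  -- range E = fixed points of T
  have hrange : Set.range ⇑E = {x : X | T x = x} := by
    ext x
    constructor
    · rintro ⟨y, rfl⟩
      show T (E y) = E y
      rw [← ContinuousLinearMap.mul_apply, hTE]
    · intro hx
      have hTk : ∀ k : ℕ, (T ^ k) x = x := by
        intro k; induction k with
        | zero => simp
        | succ k ih => rw [pow_succ, ContinuousLinearMap.mul_apply, hx, ih]
      have hAx : ∀ n : ℕ, 1 ≤ n → A n x = x := by
        intro n hn
        have hn0 : (n : ℝ) ≠ 0 := by exact_mod_cast Nat.one_le_iff_ne_zero.mp hn
        rw [hA_def]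
        simp only [ContinuousLinearMap.smul_apply, ContinuousLinearMap.sum_apply]
        rw [Finset.sum_congr rfl fun k _ => hTk k, Finset.sum_const, Finset.card_range,
          ← Nat.cast_smul_eq_nsmul ℝ, smul_smul, inv_mul_cancel₀ hn0, one_smul]
      have h2 : Tendsto (fun n => A n x) atTop (𝓝 x) := by
        apply Tendsto.congr' _ tendsto_const_nhds
        filter_upwards [eventually_ge_atTop 1] with n hn
        exact (hAx n hn).symm
      exact ⟨x, tendsto_nhds_unique (hEx x) h2⟩
  -- kernel of E = range (1 - T)
  have hker : {x : X | E x = 0} = Set.range ⇑(1 - T) := by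
    ext x
    constructor
    · intro hx
      obtain ⟨N, hN⟩ := (Metric.tendsto_atTop.mp hE) 1 one_pos
      set n := max N 1 with hn_def
      have hn1 : 1 ≤ n := le_max_right _ _
      have hlt : ‖A n - E‖ < 1 := by
        have := hN n (le_max_left _ _)
        rwa [dist_eq_norm] at this
      set u : (X →L[ℝ] X)ˣ := Units.oneSub (A n - E) hlt with hu_def
      have huval : (u : X →L[ℝ] X) = 1 - (A n - E) := rfl
      have hEu : E * (u : X →L[ℝ] X) = E := by
        rw [huval, mul_sub, mul_one, mul_sub, hEA n hn1, hEE, sub_sub_cancel]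
      have hEuinv : E * ((u⁻¹ : (X →L[ℝ] X)ˣ) : X →L[ℝ] X) = E := by
        calc E * ((u⁻¹ : (X →L[ℝ] X)ˣ) : X →L[ℝ] X)
            = (E * u) * ((u⁻¹ : (X →L[ℝ] X)ˣ) : X →L[ℝ] X) := by rw [hEu]
          _ = E * ((u : X →L[ℝ] X) * ((u⁻¹ : (X →L[ℝ] X)ˣ) : X →L[ℝ] X)) := by rw [mul_assoc]
          _ = E := by rw [u.mul_inv, mul_one]
      set z : X := ((u⁻¹ : (X →L[ℝ] X)ˣ) : X →L[ℝ] X) x with hz_def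
      have hEz : E z = 0 := by
        rw [hz_def, ← ContinuousLinearMap.mul_apply, hEuinv, hx]
      have hxz : x = ((1 : X →L[ℝ] X) - A n) z := by
        have h1 : (u : X →L[ℝ] X) z = x := by
          rw [hz_def, ← ContinuousLinearMap.mul_apply, u.mul_inv, ContinuousLinearMap.one_apply]
        calc x = (u : X →L[ℝ] X) z := h1.symm
          _ = z - (A n z - E z) := by rw [huval]; simp
          _ = z - A n z := by rw [hEz]; abel
          _ = ((1 : X →L[ℝ] X) - A n) z := by simp
      rw [hA_def] at hxz
      rw [aux_one_sub_avg T hn1] at hxz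
      exact ⟨((n : ℝ)⁻¹ • ∑ k ∈ Finset.range n, ∑ j ∈ Finset.range k, T ^ j) z, by
        rw [← ContinuousLinearMap.mul_apply] at hxz; exact hxz.symm⟩
    · rintro ⟨y, rfl⟩
      show E ((1 - T) y) = 0
      rw [← ContinuousLinearMap.mul_apply, hTEr, ContinuousLinearMap.zero_apply]
  have hker_closed : IsClosed {x : X | E x = 0} :=
    isClosed_eq E.continuous continuous_const
  -- Claim 1
  have claim1 : Set.range ⇑(1 - S) ⊆ Set.range ⇑((1 - T) * (1 - S)) := by
    rintro _ ⟨x, rfl⟩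
    have hTEx : T (E x) = E x := by rw [← ContinuousLinearMap.mul_apply, hTE]
    have hSEx : S (E x) = E x := by
      have : E x ∈ {x : X | T x = x} := hTEx
      rw [hfix] at this
      exact this
    have hme : E (x - E x) = 0 := by
      rw [map_sub, ← ContinuousLinearMap.mul_apply E E, hEE, sub_self]
    have : x - E x ∈ Set.range ⇑(1 - T) := by rw [← hker]; exact hme
    obtain ⟨z, hz⟩ := this
    refine ⟨z, ?_⟩
    have hcomm : (1 - T) * (1 - S) = (1 - S) * (1 - T) := by
      simp only [mul_sub, sub_mul, mul_one, one_mul, hTS]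
      abel
    rw [hcomm, ContinuousLinearMap.mul_apply, hz]
    simp only [ContinuousLinearMap.sub_apply, ContinuousLinearMap.one_apply, map_sub, hSEx]
    abel
  refine ⟨claim1, fun x hx => claim1 hx.2, E, hEE, hrange, ?_, ?_⟩
  · have hcl : IsClosed (Set.range ⇑(1 - T)) := hker ▸ hker_closed
    rw [hker, hcl.closure_eq]
  · -- convergence of double averages
    have hES : E * (1 - S) = 0 := by
      ext x
      obtain ⟨z, hz⟩ := claim1 ⟨x, rfl⟩
      rw [ContinuousLinearMap.mul_apply, ← hz]
      show E (((1 - T) * (1 - S)) z) = (0 : X →L[ℝ] X) x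
      rw [ContinuousLinearMap.mul_apply, ← ContinuousLinearMap.mul_apply E, hTEr]
      simp
    have hESm : E * S = E := by
      rw [mul_sub, mul_one, sub_eq_zero] at hES; exact hES.symm
    have hESk : ∀ j : ℕ, E * S ^ j = E := by
      intro j; induction j with
      | zero => simp
      | succ j ih => rw [pow_succ, ← mul_assoc, ih, hESm]
    set B : ℕ → (X →L[ℝ] X) := fun m => (m : ℝ)⁻¹ • ∑ j ∈ Finset.range m, S ^ j with hB_def
    have hEB : ∀ m : ℕ, 1 ≤ m → E * B m = E := by
      intro m hm
      have hm0 : (m : ℝ) ≠ 0 := by exact_mod_cast Nat.one_le_iff_ne_zero.mp hm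
      rw [hB_def, mul_smul_comm, Finset.mul_sum]
      rw [Finset.sum_congr rfl fun j _ => hESk j, Finset.sum_const, Finset.card_range,
        ← Nat.cast_smul_eq_nsmul ℝ, smul_smul, inv_mul_cancel₀ hm0, one_smul]
    have hF : ∀ nm : ℕ × ℕ,
        ((nm.1 : ℝ) * (nm.2 : ℝ))⁻¹ •
            ∑ k ∈ Finset.range nm.1, ∑ j ∈ Finset.range nm.2, T ^ k * S ^ j
          = A nm.1 * B nm.2 := by
      rintro ⟨n, m⟩
      rw [hA_def, hB_def]
      simp only
      rw [smul_mul_assoc, mul_smul_comm, smul_smul, ← Finset.sum_mul_sum, mul_inv]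
    rw [← tendsto_sub_nhds_zero_iff]
    apply squeeze_zero_norm' (a := fun nm : ℕ × ℕ => ‖A nm.1 - E‖)
    · rw [eventually_atTop]
      refine ⟨(1, 1), ?_⟩
      rintro ⟨n, m⟩ hnm
      have hm1 : 1 ≤ m := hnm.2
      have hkey : ((n : ℝ) * (m : ℝ))⁻¹ •
            (∑ k ∈ Finset.range n, ∑ j ∈ Finset.range m, T ^ k * S ^ j) - E
          = (A n - E) * B m := by
        rw [hF (n, m), sub_mul, hEB m hm1]
      rw [hkey]
      calc ‖(A n - E) * B m‖ ≤ ‖A n - E‖ * ‖B m‖ := norm_mul_le _ _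
        _ ≤ ‖A n - E‖ * 1 :=
            mul_le_mul_of_nonneg_left (aux_avg_norm S hS m) (norm_nonneg _)
        _ = ‖A n - E‖ := mul_one _
    · have h1 : Tendsto (fun n : ℕ => ‖A n - E‖) atTop (𝓝 0) :=
        tendsto_iff_norm_sub_tendsto_zero.mp hE
      have h2 : Tendsto (Prod.fst : ℕ × ℕ → ℕ) atTop atTop := by
        rw [← prod_atTop_atTop_eq]; exact tendsto_fst
      exact h1.comp h2
end

section
/- Let T and S be commuting mean ergodic contractions on a Banach space X with F(T) = F(S). Then T is uniformly ergodic if and only if every coboundary of S is a double coboundary, i.e. if and only if (I−S)X ⊆ (I−T)(I−S)X. -/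
set_option maxHeartbeats 1000000

open Filter Topology Finset

namespace Stmt6Aux

variable {X : Type*} [NormedAddCommGroup X] [NormedSpace ℝ X]

/-- Cesàro averages as an operator. -/
noncomputable def avg (T : X →L[ℝ] X) (n : ℕ) : X →L[ℝ] X :=
  (n : ℝ)⁻¹ • ∑ k ∈ range n, T ^ k

lemma avg_apply (T : X →L[ℝ] X) (n : ℕ) (x : X) :
    avg T n x = (n : ℝ)⁻¹ • ∑ k ∈ range n, (T ^ k) x := by
  simp [avg]

lemma pow_apply_norm_le {T : X →L[ℝ] X} (hT : ‖T‖ ≤ 1) (k : ℕ) (x : X) :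
    ‖(T ^ k) x‖ ≤ ‖x‖ := by
  induction k generalizing x with
  | zero => simp
  | succ k ih =>
    rw [pow_succ, ContinuousLinearMap.mul_apply]
    exact (ih (T x)).trans ((T.le_opNorm x).trans (by nlinarith [norm_nonneg x]))

lemma norm_avg_apply_le {T : X →L[ℝ] X} (hT : ‖T‖ ≤ 1) {n : ℕ} (hn : 1 ≤ n) (x : X) :
    ‖avg T n x‖ ≤ ‖x‖ := by
  rw [avg_apply, norm_smul]
  have h1 : ‖∑ k ∈ range n, (T ^ k) x‖ ≤ n * ‖x‖ := by
    calc ‖∑ k ∈ range n, (T ^ k) x‖ ≤ ∑ k ∈ range n, ‖(T ^ k) x‖ := norm_sum_le _ _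
    _ ≤ ∑ _k ∈ range n, ‖x‖ := Finset.sum_le_sum fun k _ => pow_apply_norm_le hT k x
    _ = n * ‖x‖ := by simp [mul_comm]
  have hn' : (0:ℝ) < n := by exact_mod_cast hn
  calc ‖(n:ℝ)⁻¹‖ * ‖∑ k ∈ range n, (T ^ k) x‖ ≤ (n:ℝ)⁻¹ * (n * ‖x‖) := by
        rw [Real.norm_eq_abs, abs_of_nonneg (by positivity)]
        exact mul_le_mul_of_nonneg_left h1 (by positivity)
  _ = ‖x‖ := by field_simp

lemma pow_fixed {T : X →L[ℝ] X} {x : X} (hx : T x = x) (k : ℕ) : (T ^ k) x = x := by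
  induction k with
  | zero => simp
  | succ k ih => rw [pow_succ, ContinuousLinearMap.mul_apply, hx, ih]

lemma avg_fixed {T : X →L[ℝ] X} {x : X} (hx : T x = x) {n : ℕ} (hn : 1 ≤ n) :
    avg T n x = x := by
  have hn' : ((n:ℝ)) ≠ 0 := by exact_mod_cast Nat.one_le_iff_ne_zero.mp hn
  rw [avg_apply]
  simp only [pow_fixed hx, Finset.sum_const, card_range]
  rw [← Nat.cast_smul_eq_nsmul ℝ, smul_smul, inv_mul_cancel₀ hn', one_smul]

lemma sum_pow_one_sub (T : X →L[ℝ] X) (n : ℕ) (x : X) :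
    ∑ k ∈ range n, (T ^ k) ((1 - T) x) = x - (T ^ n) x := by
  have h : ∀ k, (T ^ k) ((1 - T) x) = (T ^ k) x - (T ^ (k+1)) x := by
    intro k
    rw [pow_succ, ContinuousLinearMap.mul_apply]
    simp [map_sub]
  simp_rw [h]
  simpa using Finset.sum_range_sub' (fun k => (T ^ k) x) n

lemma avg_one_sub (T : X →L[ℝ] X) (n : ℕ) (x : X) :
    avg T n ((1 - T) x) = (n : ℝ)⁻¹ • (x - (T ^ n) x) := by
  rw [avg_apply, sum_pow_one_sub]

lemma tendsto_inv_smul_zero {T : X →L[ℝ] X} (hT : ‖T‖ ≤ 1) (x : X) :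
    Tendsto (fun n : ℕ => (n : ℝ)⁻¹ • (x - (T ^ n) x)) atTop (𝓝 0) := by
  apply squeeze_zero_norm (a := fun n : ℕ => (n:ℝ)⁻¹ * (2 * ‖x‖))
  · intro n
    rw [norm_smul, Real.norm_eq_abs, abs_of_nonneg (by positivity)]
    refine mul_le_mul_of_nonneg_left ?_ (by positivity)
    calc ‖x - (T ^ n) x‖ ≤ ‖x‖ + ‖(T ^ n) x‖ := norm_sub_le _ _
    _ ≤ 2 * ‖x‖ := by nlinarith [pow_apply_norm_le hT n x]
  · simpa using tendsto_inv_atTop_nhds_zero_nat.mul_const (2 * ‖x‖)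

section Limit

variable {T : X →L[ℝ] X} {e : X → X}

lemma lim_coboundary (hT : ‖T‖ ≤ 1)
    (he : ∀ x, Tendsto (fun n => avg T n x) atTop (𝓝 (e x))) (x : X) :
    e ((1 - T) x) = 0 := by
  refine tendsto_nhds_unique (he _) ?_
  have h := tendsto_inv_smul_zero hT x
  refine h.congr fun n => ?_
  rw [avg_one_sub]

lemma lim_fixed (he : ∀ x, Tendsto (fun n => avg T n x) atTop (𝓝 (e x)))
    {x : X} (hx : T x = x) : e x = x := by
  refine tendsto_nhds_unique (he x) ?_
  refine Tendsto.congr' ?_ tendsto_const_nhds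
  filter_upwards [eventually_ge_atTop 1] with n hn
  exact (avg_fixed hx hn).symm

lemma lim_T_fix (hT : ‖T‖ ≤ 1)
    (he : ∀ x, Tendsto (fun n => avg T n x) atTop (𝓝 (e x))) (x : X) :
    T (e x) = e x := by
  have h1 : Tendsto (fun n => T (avg T n x)) atTop (𝓝 (T (e x))) :=
    (T.continuous.tendsto _).comp (he x)
  have h2 : ∀ n : ℕ, T (avg T n x) = avg T n x - (n : ℝ)⁻¹ • (x - (T ^ n) x) := by
    intro n
    rw [avg_apply, map_smul, map_sum]
    have hterm : ∀ k, T ((T ^ k) x) = (T ^ (k+1)) x := fun k => by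
      rw [pow_succ', ContinuousLinearMap.mul_apply]
    simp_rw [hterm]
    have hsum : ∑ k ∈ range n, (T ^ (k+1)) x
        = (∑ k ∈ range n, (T ^ k) x) - (x - (T ^ n) x) := by
      have h' := Finset.sum_range_succ' (fun k => (T ^ k) x) n
      rw [Finset.sum_range_succ (fun k => (T ^ k) x) n] at h'
      simp only [pow_zero, ContinuousLinearMap.one_apply] at h'
      have h'' : ∑ k ∈ range n, (T ^ (k+1)) x
          = (∑ k ∈ range n, (T ^ k) x) + (T ^ n) x - x := by rw [eq_sub_iff_add_eq]; exact h'.symm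
      rw [h'']; abel
    rw [hsum, smul_sub]
  have h3 : Tendsto (fun n : ℕ => avg T n x - (n : ℝ)⁻¹ • (x - (T ^ n) x)) atTop
      (𝓝 (e x - 0)) := (he x).sub (tendsto_inv_smul_zero hT x)
  rw [sub_zero] at h3
  exact tendsto_nhds_unique (h1.congr fun n => (h2 n)) h3

lemma lim_comm {S : X →L[ℝ] X} (hTS : T * S = S * T)
    (he : ∀ x, Tendsto (fun n => avg T n x) atTop (𝓝 (e x))) (x : X) :
    e (S x) = S (e x) := by
  have hcomm : ∀ k (y : X), (T ^ k) (S y) = S ((T ^ k) y) := by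
    intro k y
    have c : Commute S T := hTS.symm
    have := (c.pow_right k).eq
    calc (T ^ k) (S y) = (T ^ k * S) y := rfl
    _ = (S * T ^ k) y := by rw [← (c.pow_right k).eq]
    _ = S ((T ^ k) y) := rfl
  have h1 : ∀ n, avg T n (S x) = S (avg T n x) := by
    intro n
    rw [avg_apply, avg_apply]
    simp_rw [hcomm]
    rw [← map_sum, ← map_smul]
  refine tendsto_nhds_unique ((he (S x)).congr fun n => (h1 n)) ?_
  exact (S.continuous.tendsto _).comp (he x)

end Limit

lemma geom_mul (T : X →L[ℝ] X) (k : ℕ) :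
    (1 - T) * ∑ j ∈ range k, T ^ j = 1 - T ^ k := by
  induction k with
  | zero => simp
  | succ k ih =>
    rw [Finset.sum_range_succ, mul_add, ih]
    have h : (1 - T) * T ^ k = T ^ k - T ^ (k+1) := by
      rw [sub_mul, one_mul, ← pow_succ']
    rw [h]; abel

lemma one_sub_mul_Q {T : X →L[ℝ] X} {n : ℕ} (hn : 1 ≤ n) :
    (1 - T) * ((n:ℝ)⁻¹ • ∑ k ∈ range n, ∑ j ∈ range k, T ^ j) = 1 - avg T n := by
  have hn' : ((n:ℝ)) ≠ 0 := by exact_mod_cast Nat.one_le_iff_ne_zero.mp hn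
  rw [mul_smul_comm, Finset.mul_sum]
  rw [Finset.sum_congr rfl (fun k _ => geom_mul T k), Finset.sum_sub_distrib,
    Finset.sum_const, card_range, smul_sub,
    ← Nat.cast_smul_eq_nsmul ℝ n (1 : X →L[ℝ] X), smul_smul, inv_mul_cancel₀ hn',
    one_smul, avg]

end Stmt6Aux
open Stmt6Aux Finset

/-- Let `T` and `S` be commuting mean ergodic contractions on a Banach space `X`
with `F(T) = F(S)`. Then `T` is uniformly ergodic if and only if every coboundary of `S` is a
double coboundary, i.e. if and only if `(I-S)X ⊆ (I-T)(I-S)X`. -/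
theorem stmt6 {X : Type*} [NormedAddCommGroup X] [NormedSpace ℝ X] [CompleteSpace X]
    (T S : X →L[ℝ] X) (hT : ‖T‖ ≤ 1) (hS : ‖S‖ ≤ 1) (hTS : T * S = S * T)
    (hTme : ∀ x : X, ∃ y : X,
      Tendsto (fun n : ℕ => (n : ℝ)⁻¹ • ∑ k ∈ Finset.range n, (T ^ k) x) atTop (𝓝 y))
    (hSme : ∀ x : X, ∃ y : X,
      Tendsto (fun n : ℕ => (n : ℝ)⁻¹ • ∑ k ∈ Finset.range n, (S ^ k) x) atTop (𝓝 y))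
    (hfix : {x : X | T x = x} = {x : X | S x = x}) :
    (∃ E : X →L[ℝ] X,
        Tendsto (fun n : ℕ => (n : ℝ)⁻¹ • ∑ k ∈ Finset.range n, T ^ k) atTop (𝓝 E)) ↔
      Set.range ⇑(1 - S) ⊆ Set.range ⇑((1 - T) * (1 - S)) := by
  constructor
  · -- Uniform ergodicity implies the double-coboundary property
    rintro ⟨E, hEop⟩
    have hE : ∀ x, Tendsto (fun n => avg T n x) atTop (𝓝 (E x)) := by
      intro x
      have h := ((ContinuousLinearMap.apply ℝ X x).continuous.tendsto E).comp hEop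
      have h2 : Tendsto (fun n : ℕ => avg T n x) atTop
          (𝓝 ((ContinuousLinearMap.apply ℝ X x) E)) :=
        h.congr fun n => by simp [Function.comp, avg]
      simpa using h2
    have pT : ∀ x, T (E x) = E x := lim_T_fix hT hE
    have pFix : ∀ x, T x = x → E x = x := fun x hx => lim_fixed hE hx
    have pCob : ∀ x, E ((1 - T) x) = 0 := lim_coboundary hT hE
    have pSE : ∀ x, S (E x) = E x := fun x => by
      have hm : E x ∈ {x : X | T x = x} := pT x
      rw [hfix] at hm; exact hm
    have pS : ∀ x, E (S x) = E x := fun x => by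
      rw [lim_comm hTS hE x, pSE x]
    have pTE : ∀ x, E (T x) = E x := by
      intro x
      have h := pCob x
      rw [ContinuousLinearMap.sub_apply, ContinuousLinearMap.one_apply, map_sub,
        sub_eq_zero] at h
      exact h.symm
    have pETk : ∀ (k : ℕ) (x : X), E ((T ^ k) x) = E x := by
      intro k
      induction k with
      | zero => intro x; simp
      | succ k ih =>
        intro x
        rw [pow_succ, ContinuousLinearMap.mul_apply, ih (T x), pTE x]
    -- operator-level identities
    have oAvgE : ∀ n : ℕ, 1 ≤ n → avg T n * E = E := fun n hn =>
      ContinuousLinearMap.ext fun x => by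
        rw [ContinuousLinearMap.mul_apply]; exact avg_fixed (pT x) hn
    have oEE : E * E = E := ContinuousLinearMap.ext fun x => by
      rw [ContinuousLinearMap.mul_apply]; exact pFix _ (pT x)
    have oEavg : ∀ n : ℕ, 1 ≤ n → E * avg T n = E := by
      intro n hn
      have hn' : ((n:ℝ)) ≠ 0 := by exact_mod_cast Nat.one_le_iff_ne_zero.mp hn
      ext x
      rw [ContinuousLinearMap.mul_apply, avg_apply, map_smul, map_sum]
      simp_rw [pETk]
      rw [Finset.sum_const, card_range, ← Nat.cast_smul_eq_nsmul ℝ, smul_smul,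
        inv_mul_cancel₀ hn', one_smul]
    have oSE : S * E = E := ContinuousLinearMap.ext fun x => pSE x
    have oES : E * S = E := ContinuousLinearMap.ext fun x => pS x
    -- pick a good n₀
    have hsub0 : Tendsto (fun n : ℕ => avg T n - E) atTop (𝓝 0) :=
      tendsto_sub_nhds_zero_iff.mpr hEop
    have hnorm0 : Tendsto (fun n : ℕ => ‖avg T n - E‖) atTop (𝓝 0) := by
      simpa using hsub0.norm
    have hev : ∀ᶠ n : ℕ in atTop, ‖avg T n - E‖ < 1 :=
      hnorm0.eventually (eventually_lt_nhds zero_lt_one)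
    obtain ⟨n₀, hD1, hn₀1⟩ := (hev.and (eventually_ge_atTop 1)).exists
    set D : X →L[ℝ] X := avg T n₀ - E with hDdef
    set u : (X →L[ℝ] X)ˣ := Units.oneSub D hD1 with hudef
    have huval : (↑u : X →L[ℝ] X) = 1 - D := rfl
    set Q : X →L[ℝ] X := (n₀:ℝ)⁻¹ • ∑ k ∈ range n₀, ∑ j ∈ range k, T ^ j with hQdef
    have hQ : (1 - T) * Q = 1 - avg T n₀ := one_sub_mul_Q hn₀1
    have oDE : D * E = 0 := by rw [hDdef, sub_mul, oAvgE n₀ hn₀1, oEE, sub_self]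
    have oED : E * D = 0 := by rw [hDdef, mul_sub, oEavg n₀ hn₀1, oEE, sub_self]
    have key : (1 - avg T n₀) * (1 - E) = ↑u * (1 - E) := by
      rw [huval, ← sub_eq_zero, ← sub_mul]
      have h : (1 - avg T n₀) - (1 - D) = -E := by rw [hDdef]; abel
      rw [h, neg_mul, mul_sub, mul_one, oEE, sub_self, neg_zero]
    have cEu : Commute E ↑u := by
      rw [huval]
      show E * (1 - D) = (1 - D) * E
      rw [mul_sub, sub_mul, mul_one, one_mul, oED, oDE]
    have c1Euinv : Commute (1 - E) (↑u⁻¹ : X →L[ℝ] X) :=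
      (Commute.one_left _).sub_left cEu.units_inv_right
    set R : X →L[ℝ] X := Q * (1 - E) * ↑u⁻¹ with hRdef
    have hTR : (1 - T) * R = 1 - E := by
      rw [hRdef]
      calc (1 - T) * (Q * (1 - E) * ↑u⁻¹)
          = ((1 - T) * Q) * (1 - E) * ↑u⁻¹ := by rw [← mul_assoc, ← mul_assoc]
        _ = (↑u * (1 - E)) * ↑u⁻¹ := by rw [hQ, key]
        _ = ↑u * (↑u⁻¹ * (1 - E)) := by rw [mul_assoc, c1Euinv.eq]
        _ = 1 - E := by rw [← mul_assoc, Units.mul_inv, one_mul]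
    -- S commutes with R
    have cST : Commute S T := hTS.symm
    have cSTk : ∀ k : ℕ, Commute S (T ^ k) := fun k => cST.pow_right k
    have csmul : ∀ (r : ℝ) (N : X →L[ℝ] X), Commute S N → Commute S (r • N) := by
      intro r N h
      have hx : ∀ x, S (N x) = N (S x) := fun x => by
        have h2 := congrArg (fun (L : X →L[ℝ] X) => L x) h.eq
        simpa [ContinuousLinearMap.mul_apply] using h2
      show S * (r • N) = (r • N) * S
      ext x
      simp [ContinuousLinearMap.mul_apply, map_smul, hx]
    have cSavg : Commute S (avg T n₀) :=
      csmul _ _ (Commute.sum_right _ _ _ (fun i _ => cSTk i))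
    have cSE : Commute S E := by show S * E = E * S; rw [oSE, oES]
    have cSD : Commute S D := cSavg.sub_right cSE
    have cSuinv : Commute S (↑u⁻¹ : X →L[ℝ] X) :=
      (((Commute.one_right S).sub_right cSD : Commute S ((1:X →L[ℝ] X) - D))).units_inv_right
    have cSQ : Commute S Q :=
      csmul _ _ (Commute.sum_right _ _ _ (fun i _ =>
        Commute.sum_right _ _ _ (fun j _ => cSTk j)))
    have cSR : Commute S R :=
      (cSQ.mul_right ((Commute.one_right S).sub_right cSE)).mul_right cSuinv
    have c1SR : Commute (1 - S) R := (Commute.one_left R).sub_left cSR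
    rintro _ ⟨x, rfl⟩
    refine ⟨R x, ?_⟩
    have hcb : ((1 - T) * (1 - S)) * R = (1 - E) * (1 - S) := by
      rw [mul_assoc, c1SR.eq, ← mul_assoc, hTR]
    calc ((1 - T) * (1 - S)) (R x) = (((1 - T) * (1 - S)) * R) x := rfl
      _ = ((1 - E) * (1 - S)) x := by rw [hcb]
      _ = (1 - S) x := by
          rw [ContinuousLinearMap.mul_apply]
          have h0 : E ((1 - S) x) = 0 := by
            rw [ContinuousLinearMap.sub_apply, ContinuousLinearMap.one_apply,
              map_sub, pS x, sub_self]
          rw [ContinuousLinearMap.sub_apply, ContinuousLinearMap.one_apply, h0, sub_zero]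
  · -- The double-coboundary property implies uniform ergodicity
    intro hsub
    choose g hg using hTme
    have hg' : ∀ x, Tendsto (fun n => avg T n x) atTop (𝓝 (g x)) := fun x =>
      (hg x).congr fun n => (avg_apply T n x).symm
    have hadd : ∀ x y, g (x + y) = g x + g y := fun x y =>
      tendsto_nhds_unique (hg' (x+y))
        (((hg' x).add (hg' y)).congr fun n => (map_add (avg T n) x y).symm)
    have hsmul : ∀ (c : ℝ) (x : X), g (c • x) = c • g x := fun c x =>
      tendsto_nhds_unique (hg' (c • x))
        (((hg' x).const_smul c).congr fun n => (map_smul (avg T n) c x).symm)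
    have hbd : ∀ x, ‖g x‖ ≤ 1 * ‖x‖ := by
      intro x
      rw [one_mul]
      refine le_of_tendsto (hg' x).norm ?_
      filter_upwards [eventually_ge_atTop 1] with n hn
      exact norm_avg_apply_le hT hn x
    set E : X →L[ℝ] X := LinearMap.mkContinuous
      { toFun := g, map_add' := hadd,
        map_smul' := by intro c x; simpa using hsmul c x } 1 hbd with hEdef
    have hE : ∀ x, Tendsto (fun n => avg T n x) atTop (𝓝 (E x)) := hg'
    have pT : ∀ x, T (E x) = E x := lim_T_fix hT hE
    have pFix : ∀ x, T x = x → E x = x := fun x hx => lim_fixed hE hx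
    have pCob : ∀ x, E ((1 - T) x) = 0 := lim_coboundary hT hE
    set Y := E.ker with hYdef
    have hmem : ∀ x : X, x ∈ Y ↔ E x = 0 := fun x => LinearMap.mem_ker
    haveI : CompleteSpace Y := (ContinuousLinearMap.isClosed_ker E).completeSpace_coe
    have hmapsto : ∀ y : Y, (1 - T) (y : X) ∈ Y := fun y => (hmem _).mpr (pCob _)
    set A : Y →L[ℝ] Y := ((1 - T).comp Y.subtypeL).codRestrict Y (fun y => hmapsto y)
      with hAdef
    have hAval : ∀ y : Y, (A y : X) = (1 - T) (y : X) := fun y => by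
      rw [hAdef]
      simp
    have hker : A.ker = ⊥ := by
      rw [LinearMap.ker_eq_bot']
      intro y hy
      have h1 : (1 - T) (y : X) = 0 := by
        rw [← hAval y, show A y = 0 from hy]; rfl
      have h2 : T (y : X) = (y : X) := by
        rw [ContinuousLinearMap.sub_apply, ContinuousLinearMap.one_apply,
          sub_eq_zero] at h1
        exact h1.symm
      have h3 : E (y : X) = (y : X) := pFix _ h2
      have h4 : E (y : X) = 0 := (hmem _).mp y.2
      exact Subtype.ext (by rw [← h3, h4]; simp)
    have hcommTS : (1 - T) * (1 - S) = (1 - S) * (1 - T) := by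
      have c : Commute (1 - S) (1 - T) :=
        ((Commute.one_right (1 - S)).sub_right
          (((Commute.one_left T).sub_left (hTS.symm : Commute S T))))
      exact c.eq.symm
    have hsurj : ∀ z : Y, ∃ y : Y, A y = z := by
      intro z
      obtain ⟨w, hw⟩ := hsub ⟨(z : X), rfl⟩
      have hw' : (1 - S) ((1 - T) w) = (1 - S) (z : X) := by
        rw [← ContinuousLinearMap.mul_apply, ← hcommTS, hw]
      have hv0 : (1 - S) ((z : X) - (1 - T) w) = 0 := by
        rw [map_sub, hw', sub_self]
      have hfS : S ((z : X) - (1 - T) w) = (z : X) - (1 - T) w := by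
        rw [ContinuousLinearMap.sub_apply, ContinuousLinearMap.one_apply,
          sub_eq_zero] at hv0
        exact hv0.symm
      have hfT : T ((z : X) - (1 - T) w) = (z : X) - (1 - T) w := by
        have hm : ((z : X) - (1 - T) w) ∈ {x : X | S x = x} := hfS
        rw [← hfix] at hm; exact hm
      have hfE : E ((z : X) - (1 - T) w) = (z : X) - (1 - T) w := pFix _ hfT
      have hze : E (z : X) = 0 := (hmem _).mp z.2
      have hEcb : E ((1 - T) w) = 0 := pCob w
      have hzw : (z : X) = (1 - T) w := by
        have hf0 : (z : X) - (1 - T) w = 0 := by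
          rw [← hfE, map_sub, hze, hEcb, sub_zero]
        rwa [sub_eq_zero] at hf0
      have hvY : w - E w ∈ Y := (hmem _).mpr
        (by rw [map_sub, pFix _ (pT w), sub_self])
      refine ⟨⟨w - E w, hvY⟩, Subtype.ext ?_⟩
      rw [hAval]
      have h5 : (1 - T) (w - E w) = (1 - T) w - ((E w) - T (E w)) := by
        rw [map_sub]
        congr 1
      rw [h5, pT w, sub_self, sub_zero, ← hzw]
    have hrange : A.range = ⊤ := LinearMap.range_eq_top.mpr hsurj
    set Weq := (ContinuousLinearEquiv.ofBijective A hker hrange).symm with hWdef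
    set c := ‖(Weq : Y →L[ℝ] Y)‖ with hcdef
    have hc0 : 0 ≤ c := norm_nonneg _
    refine ⟨E, ?_⟩
    rw [← tendsto_sub_nhds_zero_iff]
    apply squeeze_zero_norm' (a := fun n : ℕ => (n:ℝ)⁻¹ * (4 * c))
    · filter_upwards [eventually_ge_atTop 1] with n hn
      have hnn : (0:ℝ) < n := by exact_mod_cast hn
      refine ContinuousLinearMap.opNorm_le_bound _ (by positivity) ?_
      intro x
      have hy : E (x - E x) = 0 := by
        rw [map_sub, pFix _ (pT x), sub_self]
      set y : Y := ⟨x - E x, (hmem _).mpr hy⟩ with hydef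
      set wv : Y := Weq y with hwvdef
      have hAw : A wv = y :=
        (ContinuousLinearEquiv.ofBijective A hker hrange).apply_symm_apply y
      have hAwX : (1 - T) (wv : X) = x - E x := by
        rw [← hAval wv, hAw]
      have hnw : ‖(wv : X)‖ ≤ c * ‖x - E x‖ := by
        have h := (Weq : Y →L[ℝ] Y).le_opNorm y
        simpa using h
      have h1 : ((n:ℝ)⁻¹ • ∑ k ∈ range n, T ^ k - E) x = avg T n x - E x := by
        simp [avg, ContinuousLinearMap.sub_apply]
      have h2 : avg T n x - E x = avg T n (x - E x) := by
        rw [map_sub, avg_fixed (pT x) hn]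
      have h3 : avg T n (x - E x) = (n:ℝ)⁻¹ • ((wv : X) - (T ^ n) (wv : X)) := by
        rw [← hAwX, avg_one_sub]
      rw [h1, h2, h3, norm_smul, Real.norm_eq_abs, abs_of_nonneg (by positivity)]
      have hb : ‖(wv : X) - (T ^ n) (wv : X)‖ ≤ 2 * ‖(wv : X)‖ := by
        have h := pow_apply_norm_le hT n (wv : X)
        calc ‖(wv : X) - (T ^ n) (wv : X)‖ ≤ ‖(wv : X)‖ + ‖(T ^ n) (wv : X)‖ :=
              norm_sub_le _ _
          _ ≤ 2 * ‖(wv : X)‖ := by linarith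
      have hxE : ‖x - E x‖ ≤ 2 * ‖x‖ := by
        have hEx : ‖E x‖ ≤ ‖x‖ := by
          have h := hbd x; rw [one_mul] at h; exact h
        calc ‖x - E x‖ ≤ ‖x‖ + ‖E x‖ := norm_sub_le _ _
          _ ≤ 2 * ‖x‖ := by linarith
      calc (n:ℝ)⁻¹ * ‖(wv : X) - (T ^ n) (wv : X)‖
          ≤ (n:ℝ)⁻¹ * (2 * (c * (2 * ‖x‖))) := by
            refine mul_le_mul_of_nonneg_left ?_ (by positivity)
            calc ‖(wv : X) - (T ^ n) (wv : X)‖ ≤ 2 * ‖(wv : X)‖ := hb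
              _ ≤ 2 * (c * ‖x - E x‖) := by linarith
              _ ≤ 2 * (c * (2 * ‖x‖)) := by nlinarith
        _ = (n:ℝ)⁻¹ * (4 * c) * ‖x‖ := by ring
    · simpa using tendsto_inv_atTop_nhds_zero_nat.mul_const (4 * c)
end

section
/- Let T and S be commuting mean ergodic contractions on a Banach space X with F(T) = F(S), and assume T is not uniformly ergodic. If (I−S)X ⊆ (I−T)X, then there exists a joint coboundary which is not a double coboundary, i.e. there exists y ∈ (I−T)X ∩ (I−S)X with y ∉ (I−T)(I−S)X. -/
open Filter Topology

section Aux

variable {X : Type*} [NormedAddCommGroup X] [NormedSpace ℝ X]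

lemma avg_apply (T : X →L[ℝ] X) (n : ℕ) (x : X) :
    ((n : ℝ)⁻¹ • ∑ k ∈ Finset.range n, T ^ k) x
      = (n : ℝ)⁻¹ • ∑ k ∈ Finset.range n, (T ^ k) x := by
  simp

lemma pow_apply_norm_le (T : X →L[ℝ] X) (hT : ‖T‖ ≤ 1) (k : ℕ) (x : X) :
    ‖(T ^ k) x‖ ≤ ‖x‖ := by
  induction k generalizing x with
  | zero => simp
  | succ k ih =>
    rw [pow_succ, ContinuousLinearMap.mul_apply]
    calc ‖(T ^ k) (T x)‖ ≤ ‖T x‖ := ih (T x)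
      _ ≤ ‖T‖ * ‖x‖ := T.le_opNorm x
      _ ≤ 1 * ‖x‖ := by gcongr
      _ = ‖x‖ := one_mul _

lemma avg_norm_le (T : X →L[ℝ] X) (hT : ‖T‖ ≤ 1) {n : ℕ} (hn : 1 ≤ n) (x : X) :
    ‖(n : ℝ)⁻¹ • ∑ k ∈ Finset.range n, (T ^ k) x‖ ≤ ‖x‖ := by
  have hn0 : (0 : ℝ) < n := by exact_mod_cast hn
  rw [norm_smul, Real.norm_eq_abs, abs_inv, abs_of_pos hn0]
  calc (n : ℝ)⁻¹ * ‖∑ k ∈ Finset.range n, (T ^ k) x‖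
      ≤ (n : ℝ)⁻¹ * ∑ k ∈ Finset.range n, ‖(T ^ k) x‖ := by
        gcongr; exact norm_sum_le _ _
    _ ≤ (n : ℝ)⁻¹ * ∑ k ∈ Finset.range n, ‖x‖ := by
        gcongr with k hk
        exact pow_apply_norm_le T hT k x
    _ = (n : ℝ)⁻¹ * (n * ‖x‖) := by simp [mul_comm]
    _ = ‖x‖ := by field_simp

lemma pow_fixed (T : X →L[ℝ] X) {v : X} (hv : T v = v) (k : ℕ) : (T ^ k) v = v := by
  induction k with
  | zero => simp
  | succ k ih => rw [pow_succ, ContinuousLinearMap.mul_apply, hv, ih]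

lemma avg_fixed (T : X →L[ℝ] X) {v : X} (hv : T v = v) {n : ℕ} (hn : 1 ≤ n) :
    (n : ℝ)⁻¹ • ∑ k ∈ Finset.range n, (T ^ k) v = v := by
  have hn0 : (n : ℝ) ≠ 0 := by positivity
  have h : ∑ k ∈ Finset.range n, (T ^ k) v = n • v := by
    rw [Finset.sum_congr rfl fun k _ => pow_fixed T hv k]
    simp
  rw [h, ← Nat.cast_smul_eq_nsmul ℝ, ← mul_smul, inv_mul_cancel₀ hn0, one_smul]

lemma avg_coboundary (T : X →L[ℝ] X) (z : X) (n : ℕ) :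
    (n : ℝ)⁻¹ • ∑ k ∈ Finset.range n, (T ^ k) ((1 - T) z)
      = (n : ℝ)⁻¹ • (z - (T ^ n) z) := by
  congr 1
  have h : ∀ k, (T ^ k) ((1 - T) z) = (T ^ k) z - (T ^ (k + 1)) z := by
    intro k
    rw [pow_succ, ContinuousLinearMap.mul_apply]
    simp [map_sub]
  rw [Finset.sum_congr rfl fun k _ => h k, Finset.sum_range_sub' (fun k => (T ^ k) z) n]
  simp

lemma tendsto_avg_coboundary (T : X →L[ℝ] X) (hT : ‖T‖ ≤ 1) (z : X) :
    Tendsto (fun n : ℕ => (n : ℝ)⁻¹ • ∑ k ∈ Finset.range n, (T ^ k) ((1 - T) z))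
      atTop (𝓝 0) := by
  apply squeeze_zero_norm (a := fun n : ℕ => (n : ℝ)⁻¹ * (2 * ‖z‖))
  · intro n
    rw [avg_coboundary, norm_smul, Real.norm_eq_abs, abs_inv, Nat.abs_cast]
    gcongr
    calc ‖z - (T ^ n) z‖ ≤ ‖z‖ + ‖(T ^ n) z‖ := norm_sub_le _ _
      _ ≤ ‖z‖ + ‖z‖ := by gcongr; exact pow_apply_norm_le T hT n z
      _ = 2 * ‖z‖ := by ring
  · simpa using tendsto_inv_atTop_nhds_zero_nat.mul_const (2 * ‖z‖)

lemma exists_proj (T : X →L[ℝ] X) (hT : ‖T‖ ≤ 1)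
    (hme : ∀ x : X, ∃ y : X,
      Tendsto (fun n : ℕ => (n : ℝ)⁻¹ • ∑ k ∈ Finset.range n, (T ^ k) x) atTop (𝓝 y)) :
    ∃ E : X →L[ℝ] X,
      (∀ x, Tendsto (fun n : ℕ => (n : ℝ)⁻¹ • ∑ k ∈ Finset.range n, (T ^ k) x)
        atTop (𝓝 (E x))) ∧ ∀ x, ‖E x‖ ≤ ‖x‖ := by
  classical
  set A : ℕ → X → X := fun n x => (n : ℝ)⁻¹ • ∑ k ∈ Finset.range n, (T ^ k) x with hA
  set e : X → X := fun x => (hme x).choose with he'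
  have hlim : ∀ x, Tendsto (fun n => A n x) atTop (𝓝 (e x)) :=
    fun x => (hme x).choose_spec
  have hadd : ∀ x y n, A n (x + y) = A n x + A n y := by
    intro x y n
    simp [hA, Finset.sum_add_distrib, smul_add]
  have hsmul : ∀ (c : ℝ) x n, A n (c • x) = c • A n x := by
    intro c x n
    simp only [hA, map_smul, ← Finset.smul_sum]
    rw [smul_comm]
  have enorm : ∀ x, ‖e x‖ ≤ ‖x‖ := by
    intro x
    refine le_of_tendsto (hlim x).norm ?_
    filter_upwards [eventually_ge_atTop 1] with n hn
    exact avg_norm_le T hT hn x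
  let E₀ : X →ₗ[ℝ] X :=
    { toFun := e
      map_add' := fun x y => by
        refine tendsto_nhds_unique (hlim (x + y)) ?_
        exact ((hlim x).add (hlim y)).congr fun n => (hadd x y n).symm
      map_smul' := fun c x => by
        refine tendsto_nhds_unique (hlim (c • x)) ?_
        exact ((hlim x).const_smul c).congr fun n => (hsmul c x n).symm }
  exact ⟨E₀.mkContinuous 1 (fun x => by rw [one_mul]; exact enorm x), fun x => hlim x,
    fun x => enorm x⟩

end Aux

/-- Let `T` and `S` be commuting mean ergodic contractions on a Banach space `X`
with `F(T) = F(S)`, and assume `T` is not uniformly ergodic. If `(I-S)X ⊆ (I-T)X`, then there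
exists a joint coboundary which is not a double coboundary, i.e. there exists
`y ∈ (I-T)X ∩ (I-S)X` with `y ∉ (I-T)(I-S)X`. -/
theorem stmt7 {X : Type*} [NormedAddCommGroup X] [NormedSpace ℝ X] [CompleteSpace X]
    (T S : X →L[ℝ] X) (hT : ‖T‖ ≤ 1) (hS : ‖S‖ ≤ 1) (hTS : T * S = S * T)
    (hTme : ∀ x : X, ∃ y : X,
      Tendsto (fun n : ℕ => (n : ℝ)⁻¹ • ∑ k ∈ Finset.range n, (T ^ k) x) atTop (𝓝 y))
    (hSme : ∀ x : X, ∃ y : X,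
      Tendsto (fun n : ℕ => (n : ℝ)⁻¹ • ∑ k ∈ Finset.range n, (S ^ k) x) atTop (𝓝 y))
    (hfix : {x : X | T x = x} = {x : X | S x = x})
    (hTnue : ¬ ∃ E : X →L[ℝ] X,
      Tendsto (fun n : ℕ => (n : ℝ)⁻¹ • ∑ k ∈ Finset.range n, T ^ k) atTop (𝓝 E))
    (hsub : Set.range ⇑(1 - S) ⊆ Set.range ⇑(1 - T)) :
    ∃ y : X, y ∈ Set.range ⇑(1 - T) ∩ Set.range ⇑(1 - S) ∧
      y ∉ Set.range ⇑((1 - T) * (1 - S)) := by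
  by_contra hcon
  push_neg at hcon
  -- commutation of the two factors
  have hcomm : (1 - T) * (1 - S) = (1 - S) * (1 - T) := by
    simp only [sub_mul, mul_sub, one_mul, mul_one, hTS]
    abel
  -- Step 1: every x decomposes as a T-fixed point plus a (1-T)-coboundary
  have step1 : ∀ x : X, ∃ w : X, T (x - (1 - T) w) = x - (1 - T) w := by
    intro x
    have hmem : (1 - S) x ∈ Set.range ⇑(1 - T) ∩ Set.range ⇑(1 - S) :=
      ⟨hsub ⟨x, rfl⟩, ⟨x, rfl⟩⟩
    obtain ⟨w, hw⟩ := hcon ((1 - S) x) hmem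
    refine ⟨w, ?_⟩
    have hw' : (1 - S) ((1 - T) w) = (1 - S) x := by
      rw [hcomm] at hw
      exact hw
    have h0 : (1 - S) (x - (1 - T) w) = 0 := by
      rw [map_sub, hw', sub_self]
    have h1 : (x - (1 - T) w) - S (x - (1 - T) w) = 0 := by
      simpa [ContinuousLinearMap.sub_apply] using h0
    have hSfix : S (x - (1 - T) w) = x - (1 - T) w := (sub_eq_zero.mp h1).symm
    have hmem2 : x - (1 - T) w ∈ {x : X | S x = x} := hSfix
    rw [← hfix] at hmem2
    exact hmem2
  -- mean ergodic projection for T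
  obtain ⟨E, hE, hEnorm⟩ := exists_proj T hT hTme
  -- E kills coboundaries
  have hEcob : ∀ z : X, E ((1 - T) z) = 0 :=
    fun z => tendsto_nhds_unique (hE ((1 - T) z)) (tendsto_avg_coboundary T hT z)
  -- E is identity on fixed points
  have hEfix : ∀ v : X, T v = v → E v = v := by
    intro v hv
    refine tendsto_nhds_unique (hE v) ?_
    refine Tendsto.congr' ?_ tendsto_const_nhds
    filter_upwards [eventually_ge_atTop 1] with n hn
    exact (avg_fixed T hv hn).symm
  -- E x is a fixed point of T
  have hTE : ∀ x : X, T (E x) = E x := by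
    intro x
    have h1 : Tendsto (fun n : ℕ => T ((n : ℝ)⁻¹ • ∑ k ∈ Finset.range n, (T ^ k) x))
        atTop (𝓝 (T (E x))) := (T.continuous.tendsto _).comp (hE x)
    have h2 : ∀ n : ℕ, T ((n : ℝ)⁻¹ • ∑ k ∈ Finset.range n, (T ^ k) x)
        = ((n : ℝ)⁻¹ • ∑ k ∈ Finset.range n, (T ^ k) x)
          + (n : ℝ)⁻¹ • ((T ^ n) x - x) := by
      intro n
      rw [map_smul, map_sum]
      have hs : ∀ k, T ((T ^ k) x) = (T ^ (k + 1)) x := by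
        intro k; rw [pow_succ', ContinuousLinearMap.mul_apply]
      rw [Finset.sum_congr rfl fun k _ => hs k]
      have hshift : ∑ k ∈ Finset.range n, (T ^ (k + 1)) x
          = (∑ k ∈ Finset.range n, (T ^ k) x) + ((T ^ n) x - x) := by
        have h5 := Finset.sum_range_succ' (fun k => (T ^ k) x) n
        have h3 := Finset.sum_range_succ (fun k => (T ^ k) x) n
        rw [h3] at h5
        simp only [pow_zero, ContinuousLinearMap.one_apply] at h5
        -- h5 : ∑ f + f n = ∑ f(k+1) + x
        have h6 := eq_sub_of_add_eq h5.symm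
        rw [h6]; abel
      rw [hshift, smul_add]
    have h4 : Tendsto (fun n : ℕ => (n : ℝ)⁻¹ • ((T ^ n) x - x)) atTop (𝓝 0) := by
      apply squeeze_zero_norm (a := fun n : ℕ => (n : ℝ)⁻¹ * (2 * ‖x‖))
      · intro n
        rw [norm_smul, Real.norm_eq_abs, abs_inv, Nat.abs_cast]
        gcongr
        calc ‖(T ^ n) x - x‖ ≤ ‖(T ^ n) x‖ + ‖x‖ := norm_sub_le _ _
          _ ≤ ‖x‖ + ‖x‖ := by gcongr; exact pow_apply_norm_le T hT n x
          _ = 2 * ‖x‖ := by ring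
      · simpa using tendsto_inv_atTop_nhds_zero_nat.mul_const (2 * ‖x‖)
    have h5 : Tendsto (fun n : ℕ => T ((n : ℝ)⁻¹ • ∑ k ∈ Finset.range n, (T ^ k) x))
        atTop (𝓝 (E x + 0)) :=
      Tendsto.congr (fun n => (h2 n).symm) ((hE x).add h4)
    rw [add_zero] at h5
    exact tendsto_nhds_unique h1 h5
  -- ker E ⊆ range (1 - T)
  have hker : ∀ y : X, E y = 0 → ∃ z : X, (1 - T) z = y := by
    intro y hy
    obtain ⟨w, hw⟩ := step1 y
    have hf : E (y - (1 - T) w) = y - (1 - T) w := hEfix _ hw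
    have h0 : E y = y - (1 - T) w := by
      have h1 : E ((y - (1 - T) w) + (1 - T) w) = (y - (1 - T) w) + 0 := by
        rw [map_add, hf, hEcob]
      simpa using h1
    have h1 : y - (1 - T) w = 0 := by rw [← h0, hy]
    exact ⟨w, (sub_eq_zero.mp h1).symm⟩
  -- the kernel of E as a Banach space
  set K : Submodule ℝ X := LinearMap.ker (E : X →ₗ[ℝ] X) with hK
  have hKclosed : IsClosed (K : Set X) := ContinuousLinearMap.isClosed_ker E
  haveI : CompleteSpace K := hKclosed.completeSpace_coe
  have hmemK : ∀ x : X, (1 - T) x ∈ K := by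
    intro x
    simp only [hK, LinearMap.mem_ker]
    exact hEcob x
  set Φ : X →L[ℝ] K := (1 - T).codRestrict K hmemK with hΦ
  have hΦsurj : Function.Surjective Φ := by
    rintro ⟨y, hy⟩
    obtain ⟨z, hz⟩ := hker y (by simpa [hK, LinearMap.mem_ker] using hy)
    exact ⟨z, Subtype.ext hz⟩
  obtain ⟨C, hC0, hCs⟩ := Φ.exists_preimage_norm_le hΦsurj
  -- uniform convergence of the averages to E : contradiction
  apply hTnue
  refine ⟨E, ?_⟩
  rw [← tendsto_sub_nhds_zero_iff]
  apply squeeze_zero_norm' (a := fun n : ℕ => (n : ℝ)⁻¹ * (4 * C))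
  · filter_upwards [eventually_ge_atTop 1] with n hn
    have hn0 : (0 : ℝ) < n := by exact_mod_cast hn
    refine ContinuousLinearMap.opNorm_le_bound _ (by positivity) ?_
    intro x
    -- decompose x = (x - E x) + E x with x - E x ∈ ker E
    have hyK : E (x - E x) = 0 := by
      rw [map_sub, hEfix (E x) (hTE x), sub_self]
    obtain ⟨z, hz, hznorm⟩ := hCs ⟨x - E x, by simpa [hK, LinearMap.mem_ker] using hyK⟩
    have hz' : (1 - T) z = x - E x := congrArg Subtype.val hz
    have hnormy : ‖x - E x‖ ≤ 2 * ‖x‖ := by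
      calc ‖x - E x‖ ≤ ‖x‖ + ‖E x‖ := norm_sub_le _ _
        _ ≤ ‖x‖ + ‖x‖ := by gcongr; exact hEnorm x
        _ = 2 * ‖x‖ := by ring
    have hznorm' : ‖z‖ ≤ C * (2 * ‖x‖) := by
      have : ‖(⟨x - E x, by simpa [hK, LinearMap.mem_ker] using hyK⟩ : K)‖ = ‖x - E x‖ := rfl
      calc ‖z‖ ≤ C * ‖x - E x‖ := by rw [← this]; exact hznorm
        _ ≤ C * (2 * ‖x‖) := by gcongr
    -- compute the application
    have happ : (((n : ℝ)⁻¹ • ∑ k ∈ Finset.range n, T ^ k) - E) x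
        = (n : ℝ)⁻¹ • (z - (T ^ n) z) := by
      rw [ContinuousLinearMap.sub_apply, avg_apply]
      have hxdec : x = (x - E x) + E x := by abel
      have hEEx : E (E x) = E x := hEfix _ (hTE x)
      calc (n : ℝ)⁻¹ • ∑ k ∈ Finset.range n, (T ^ k) x - E x
          = (n : ℝ)⁻¹ • ∑ k ∈ Finset.range n, ((T ^ k) (x - E x) + (T ^ k) (E x)) - E x := by
            congr 2
            refine Finset.sum_congr rfl fun k _ => ?_
            rw [← map_add, ← hxdec]
        _ = ((n : ℝ)⁻¹ • ∑ k ∈ Finset.range n, (T ^ k) (x - E x))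
              + ((n : ℝ)⁻¹ • ∑ k ∈ Finset.range n, (T ^ k) (E x)) - E x := by
            rw [Finset.sum_add_distrib, smul_add]
        _ = ((n : ℝ)⁻¹ • ∑ k ∈ Finset.range n, (T ^ k) (x - E x)) + E x - E x := by
            rw [avg_fixed T (hTE x) hn]
        _ = (n : ℝ)⁻¹ • ∑ k ∈ Finset.range n, (T ^ k) ((1 - T) z) := by
            rw [hz']; abel
        _ = (n : ℝ)⁻¹ • (z - (T ^ n) z) := avg_coboundary T z n
    rw [happ, norm_smul, Real.norm_eq_abs, abs_inv, Nat.abs_cast]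
    have hzz : ‖z - (T ^ n) z‖ ≤ 4 * C * ‖x‖ := by
      calc ‖z - (T ^ n) z‖ ≤ ‖z‖ + ‖(T ^ n) z‖ := norm_sub_le _ _
        _ ≤ ‖z‖ + ‖z‖ := by gcongr; exact pow_apply_norm_le T hT n z
        _ ≤ (C * (2 * ‖x‖)) + (C * (2 * ‖x‖)) := by gcongr
        _ = 4 * C * ‖x‖ := by ring
    calc (n : ℝ)⁻¹ * ‖z - (T ^ n) z‖ ≤ (n : ℝ)⁻¹ * (4 * C * ‖x‖) := by gcongr
      _ = (n : ℝ)⁻¹ * (4 * C) * ‖x‖ := by ring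
  · simpa using tendsto_inv_atTop_nhds_zero_nat.mul_const (4 * C)
end

section
/- Let R be a mean ergodic contraction on a Banach space X which is not uniformly ergodic, and let k, j be positive integers such that T = R^k and S = R^j are mean ergodic with F(T) = F(S) = F(R). Then T and S have a joint coboundary which is not a double coboundary: there exists y ∈ (I−T)X ∩ (I−S)X with y ∉ (I−T)(I−S)X. -/
open Filter Topology Finset

section Stmt8Aux

variable {A : Type*} [Ring A]

lemma stmt8_one_sub_pow (a : A) (n : ℕ) :
    (1 : A) - a ^ n = (1 - a) * ∑ i ∈ Finset.range n, a ^ i := by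
  calc (1 : A) - a ^ n = -((a - 1) * ∑ i ∈ Finset.range n, a ^ i) := by
        rw [mul_geom_sum, neg_sub]
    _ = (1 - a) * ∑ i ∈ Finset.range n, a ^ i := by rw [← neg_mul, neg_sub]

end Stmt8Aux

set_option maxHeartbeats 1600000 in
/-- Let `R` be a mean ergodic contraction on a Banach space `X` which is not
uniformly ergodic, and let `k, j` be positive integers such that `T = R^k` and `S = R^j` are
mean ergodic with `F(T) = F(S) = F(R)`. Then `T` and `S` have a joint coboundary which is not a
double coboundary: there exists `y ∈ (I-T)X ∩ (I-S)X` with `y ∉ (I-T)(I-S)X`. -/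
theorem stmt8 {X : Type*} [NormedAddCommGroup X] [NormedSpace ℝ X] [CompleteSpace X]
    (R : X →L[ℝ] X) (hR : ‖R‖ ≤ 1)
    (hRme : ∀ x : X, ∃ y : X,
      Tendsto (fun n : ℕ => (n : ℝ)⁻¹ • ∑ i ∈ Finset.range n, (R ^ i) x) atTop (𝓝 y))
    (hRnue : ¬ ∃ E : X →L[ℝ] X,
      Tendsto (fun n : ℕ => (n : ℝ)⁻¹ • ∑ i ∈ Finset.range n, R ^ i) atTop (𝓝 E))
    (k j : ℕ) (hk : 0 < k) (hj : 0 < j) (T S : X →L[ℝ] X) (hTdef : T = R ^ k) (hSdef : S = R ^ j)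
    (hTme : ∀ x : X, ∃ y : X,
      Tendsto (fun n : ℕ => (n : ℝ)⁻¹ • ∑ i ∈ Finset.range n, (T ^ i) x) atTop (𝓝 y))
    (hSme : ∀ x : X, ∃ y : X,
      Tendsto (fun n : ℕ => (n : ℝ)⁻¹ • ∑ i ∈ Finset.range n, (S ^ i) x) atTop (𝓝 y))
    (hfixT : {x : X | T x = x} = {x : X | R x = x})
    (hfixS : {x : X | S x = x} = {x : X | R x = x}) :
    ∃ y : X, y ∈ Set.range ⇑(1 - T) ∩ Set.range ⇑(1 - S) ∧
      y ∉ Set.range ⇑((1 - T) * (1 - S)) := by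
  classical
  by_contra hcon
  push_neg at hcon
  apply hRnue
  -- norms of powers
  have hpow : ∀ i : ℕ, ‖R ^ i‖ ≤ 1 := by
    intro i
    induction i with
    | zero => simpa [ContinuousLinearMap.one_def] using ContinuousLinearMap.norm_id_le (𝕜 := ℝ) (E := X)
    | succ n ih =>
        calc ‖R ^ (n + 1)‖ = ‖R ^ n * R‖ := by rw [pow_succ]
          _ ≤ ‖R ^ n‖ * ‖R‖ := norm_mul_le _ _
          _ ≤ 1 * 1 := mul_le_mul ih hR (norm_nonneg _) zero_le_one
          _ = 1 := one_mul 1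
  have hpowx : ∀ (i : ℕ) (x : X), ‖(R ^ i) x‖ ≤ ‖x‖ := by
    intro i x
    calc ‖(R ^ i) x‖ ≤ ‖R ^ i‖ * ‖x‖ := (R ^ i).le_opNorm x
      _ ≤ 1 * ‖x‖ := mul_le_mul_of_nonneg_right (hpow i) (norm_nonneg _)
      _ = ‖x‖ := one_mul _
  have hinv : Tendsto (fun n : ℕ => ((n : ℝ))⁻¹) atTop (𝓝 0) :=
    tendsto_inv_atTop_zero.comp tendsto_natCast_atTop_atTop
  -- the ergodic limit function
  choose e he using hRme
  -- averages are bounded by ‖x‖ for n ≥ 1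
  have havgle : ∀ (n : ℕ), 1 ≤ n → ∀ x : X,
      ‖(n : ℝ)⁻¹ • ∑ i ∈ Finset.range n, (R ^ i) x‖ ≤ ‖x‖ := by
    intro n hn x
    have hn0 : (0:ℝ) < (n : ℝ) := by exact_mod_cast hn
    rw [norm_smul, Real.norm_eq_abs, abs_of_nonneg (by positivity)]
    have hsum : ‖∑ i ∈ Finset.range n, (R ^ i) x‖ ≤ (n : ℝ) * ‖x‖ := by
      calc ‖∑ i ∈ Finset.range n, (R ^ i) x‖ ≤ ∑ i ∈ Finset.range n, ‖(R ^ i) x‖ :=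
            norm_sum_le _ _
        _ ≤ ∑ _i ∈ Finset.range n, ‖x‖ := Finset.sum_le_sum fun i _ => hpowx i x
        _ = (n : ℝ) * ‖x‖ := by simp [mul_comm]
    calc (n : ℝ)⁻¹ * ‖∑ i ∈ Finset.range n, (R ^ i) x‖ ≤ (n : ℝ)⁻¹ * ((n : ℝ) * ‖x‖) :=
          mul_le_mul_of_nonneg_left hsum (by positivity)
      _ = ‖x‖ := by field_simp
  -- linearity of e
  have hadd : ∀ x y : X, e (x + y) = e x + e y := by
    intro x y
    refine tendsto_nhds_unique (he (x + y)) ?_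
    have h := (he x).add (he y)
    convert h using 2 with n
    simp [map_add, Finset.sum_add_distrib, smul_add]
  have hsmul : ∀ (c : ℝ) (x : X), e (c • x) = c • e x := by
    intro c x
    refine tendsto_nhds_unique (he (c • x)) ?_
    have h2 : ∀ n : ℕ, (n : ℝ)⁻¹ • ∑ i ∈ Finset.range n, (R ^ i) (c • x)
        = c • ((n : ℝ)⁻¹ • ∑ i ∈ Finset.range n, (R ^ i) x) := by
      intro n
      simp only [map_smul]
      rw [← Finset.smul_sum, smul_comm]
    exact ((he x).const_smul c).congr fun n => (h2 n).symm
  let Elin : X →ₗ[ℝ] X :=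
    { toFun := e, map_add' := hadd, map_smul' := fun c x => hsmul c x }
  have hebound : ∀ x : X, ‖e x‖ ≤ 1 * ‖x‖ := by
    intro x
    rw [one_mul]
    refine le_of_tendsto (he x).norm ?_
    filter_upwards [eventually_ge_atTop 1] with n hn
    exact havgle n hn x
  obtain ⟨E, hEapp⟩ : ∃ E : X →L[ℝ] X, ∀ x : X, E x = e x :=
    ⟨Elin.mkContinuous 1 hebound, fun _ => rfl⟩
  clear_value Elin
  -- e (R x) = e x
  have hER : ∀ x : X, e (R x) = e x := by
    intro x
    refine tendsto_nhds_unique (he (R x)) ?_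
    have heq : ∀ n : ℕ, (n : ℝ)⁻¹ • ∑ i ∈ Finset.range n, (R ^ i) (R x)
        = (n : ℝ)⁻¹ • ∑ i ∈ Finset.range n, (R ^ i) x + (n : ℝ)⁻¹ • ((R ^ n) x - x) := by
      intro n
      rw [← smul_add]
      congr 1
      have h1 : ∀ i ∈ Finset.range n, (R ^ i) (R x) = (R ^ (i + 1)) x := by
        intro i _
        rw [pow_succ, ContinuousLinearMap.mul_apply]
      rw [Finset.sum_congr rfl h1]
      have e1 := Finset.sum_range_succ (fun i => (R ^ i) x) n
      have e2 := Finset.sum_range_succ' (fun i => (R ^ i) x) n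
      simp only [pow_zero, ContinuousLinearMap.one_apply] at e2
      have h4 : (∑ i ∈ Finset.range n, (R ^ (i + 1)) x) + x
          = (∑ i ∈ Finset.range n, (R ^ i) x) + (R ^ n) x := e2.symm.trans e1
      have h5 := eq_sub_of_add_eq h4
      rw [h5]
      abel
    have h0 : Tendsto (fun n : ℕ => (n : ℝ)⁻¹ • ((R ^ n) x - x)) atTop (𝓝 0) := by
      apply squeeze_zero_norm (a := fun n : ℕ => (n : ℝ)⁻¹ * (2 * ‖x‖))
      · intro n
        rw [norm_smul, Real.norm_eq_abs, abs_of_nonneg (by positivity)]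
        refine mul_le_mul_of_nonneg_left ?_ (by positivity)
        calc ‖(R ^ n) x - x‖ ≤ ‖(R ^ n) x‖ + ‖x‖ := norm_sub_le _ _
          _ ≤ 2 * ‖x‖ := by linarith [hpowx n x]
      · simpa using hinv.mul_const (2 * ‖x‖)
    have h2 := (he x).add h0
    rw [add_zero] at h2
    exact h2.congr fun n => (heq n).symm
  -- R (e x) = e x
  have hRe : ∀ x : X, R (e x) = e x := by
    intro x
    have h1 : Tendsto (fun n : ℕ => R ((n : ℝ)⁻¹ • ∑ i ∈ Finset.range n, (R ^ i) x))
        atTop (𝓝 (R (e x))) := (R.continuous.tendsto (e x)).comp (he x)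
    have h2 : (fun n : ℕ => R ((n : ℝ)⁻¹ • ∑ i ∈ Finset.range n, (R ^ i) x))
        = fun n : ℕ => (n : ℝ)⁻¹ • ∑ i ∈ Finset.range n, (R ^ i) (R x) := by
      funext n
      rw [map_smul, map_sum]
      congr 1
      refine Finset.sum_congr rfl fun i _ => ?_
      rw [← ContinuousLinearMap.mul_apply, ← pow_succ', pow_succ, ContinuousLinearMap.mul_apply]
    rw [h2] at h1
    have := tendsto_nhds_unique h1 (he (R x))
    rw [this, hER]
  -- fixed points: R v = v → e v = v
  have hfixe : ∀ v : X, R v = v → e v = v := by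
    intro v hv
    have hpowv : ∀ i : ℕ, (R ^ i) v = v := by
      intro i
      induction i with
      | zero => simp
      | succ n ih => rw [pow_succ, ContinuousLinearMap.mul_apply, hv, ih]
    refine tendsto_nhds_unique (he v) ?_
    have : ∀ᶠ n : ℕ in atTop, (n : ℝ)⁻¹ • ∑ i ∈ Finset.range n, (R ^ i) v = v := by
      filter_upwards [eventually_ge_atTop 1] with n hn
      have hn0 : ((n : ℝ)) ≠ 0 := by positivity
      rw [Finset.sum_congr rfl fun i _ => hpowv i, Finset.sum_const, Finset.card_range,
        ← Nat.cast_smul_eq_nsmul ℝ, smul_smul, inv_mul_cancel₀ hn0, one_smul]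
    exact tendsto_const_nhds.congr' (this.mono fun n h => h.symm)
  -- e ∘ R^i = e
  have hEpow : ∀ (i : ℕ) (x : X), e ((R ^ i) x) = e x := by
    intro i
    induction i with
    | zero => intro x; simp
    | succ n ih =>
        intro x
        rw [pow_succ, ContinuousLinearMap.mul_apply, ih (R x), hER]
  have hEE : ∀ x : X, e (e x) = e x := fun x => hfixe _ (hRe x)
  -- idempotence of R^i on e x
  have hpowe : ∀ (i : ℕ) (x : X), (R ^ i) (e x) = e x := by
    intro i x
    induction i with
    | zero => simp
    | succ n ih => rw [pow_succ, ContinuousLinearMap.mul_apply, hRe, ih]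
  -- the key solvability statement: ∀ x, ∃ u, (1-R) u = x - e x
  have hsolve : ∀ x : X, ∃ u : X, u - R u = x - e x := by
    intro x
    set m := k * j with hm
    have hmpos : 0 < m := Nat.mul_pos hk hj
    have hTm : T ^ j = R ^ m := by rw [hTdef, ← pow_mul]
    have hSm : S ^ k = R ^ m := by rw [hSdef, ← pow_mul, Nat.mul_comm]
    set Qk : X →L[ℝ] X := ∑ i ∈ Finset.range k, R ^ i with hQk
    set Qj : X →L[ℝ] X := ∑ i ∈ Finset.range j, R ^ i with hQj
    set Qm : X →L[ℝ] X := ∑ i ∈ Finset.range m, R ^ i with hQm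
    have h1T : (1 : X →L[ℝ] X) - T = (1 - R) * Qk := by rw [hTdef, stmt8_one_sub_pow]
    have h1S : (1 : X →L[ℝ] X) - S = (1 - R) * Qj := by rw [hSdef, stmt8_one_sub_pow]
    have h1m : (1 : X →L[ℝ] X) - R ^ m = (1 - R) * Qm := stmt8_one_sub_pow R m
    -- y := x - R^m x is a joint coboundary
    have hyT : x - (R ^ m) x ∈ Set.range ⇑(1 - T) := by
      refine ⟨(∑ l ∈ Finset.range j, T ^ l) x, ?_⟩
      have hop : (1 - T) * (∑ l ∈ Finset.range j, T ^ l) = 1 - R ^ m := by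
        rw [← stmt8_one_sub_pow, hTm]
      calc (1 - T) ((∑ l ∈ Finset.range j, T ^ l) x)
          = ((1 - T) * (∑ l ∈ Finset.range j, T ^ l)) x := rfl
        _ = ((1 : X →L[ℝ] X) - R ^ m) x := by rw [hop]
        _ = x - (R ^ m) x := by simp
    have hyS : x - (R ^ m) x ∈ Set.range ⇑(1 - S) := by
      refine ⟨(∑ l ∈ Finset.range k, S ^ l) x, ?_⟩
      have hop : (1 - S) * (∑ l ∈ Finset.range k, S ^ l) = 1 - R ^ m := by
        rw [← stmt8_one_sub_pow, hSm]
      calc (1 - S) ((∑ l ∈ Finset.range k, S ^ l) x)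
          = ((1 - S) * (∑ l ∈ Finset.range k, S ^ l)) x := rfl
        _ = ((1 : X →L[ℝ] X) - R ^ m) x := by rw [hop]
        _ = x - (R ^ m) x := by simp
    obtain ⟨z, hz⟩ := hcon _ ⟨hyT, hyS⟩
    -- commutation
    have hcomK : Commute Qk (1 - R) := by
      refine Commute.sub_right (Commute.one_right _) ?_
      exact Commute.sum_left _ _ _ fun i _ => (Commute.refl R).pow_left i
    have hfact : (1 - T) * (1 - S) = (1 - R) * ((1 - R) * (Qk * Qj)) := by
      rw [h1T, h1S, mul_assoc, ← mul_assoc Qk (1 - R) Qj, hcomK.eq, mul_assoc]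
    have hv : (1 - R) ((1 - R) ((Qk * Qj) z)) = (1 - R) (Qm x) := by
      have l1 : ((1 - T) * (1 - S)) z = (1 - R) ((1 - R) ((Qk * Qj) z)) := by
        rw [hfact]; rfl
      have l2 : (1 - R) (Qm x) = x - (R ^ m) x := by
        rw [← ContinuousLinearMap.mul_apply, ← h1m]; simp
      rw [← l1, hz, l2]
    have hvfix : R ((1 - R) ((Qk * Qj) z) - Qm x) = (1 - R) ((Qk * Qj) z) - Qm x := by
      have h0 : (1 - R) ((1 - R) ((Qk * Qj) z) - Qm x) = 0 := by
        rw [map_sub, hv, sub_self]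
      have h0' := h0
      simp only [ContinuousLinearMap.sub_apply, ContinuousLinearMap.one_apply,
        sub_eq_zero] at h0'
      exact h0'.symm
    have hvE : (1 - R) ((Qk * Qj) z) - Qm x = -(m • e x) := by
      have h1 := hfixe _ hvfix
      have h2 : e ((1 - R) ((Qk * Qj) z) - Qm x) = -(m • e x) := by
        have ha : e ((1 - R) ((Qk * Qj) z)) = 0 := by
          have h' : (1 - R) ((Qk * Qj) z) = (Qk * Qj) z - R ((Qk * Qj) z) := by simp
          rw [h', ← hEapp, map_sub, hEapp, hEapp, hER, sub_self]
        have hb : e (Qm x) = m • e x := by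
          have hsum : Qm x = ∑ i ∈ Finset.range m, (R ^ i) x := by
            rw [hQm]; simp [ContinuousLinearMap.sum_apply]
          calc e (Qm x) = E (Qm x) := (hEapp _).symm
            _ = ∑ i ∈ Finset.range m, E ((R ^ i) x) := by rw [hsum, map_sum]
            _ = ∑ _i ∈ Finset.range m, e x := Finset.sum_congr rfl fun i _ => by
                rw [hEapp, hEpow]
            _ = m • e x := by rw [Finset.sum_const, Finset.card_range]
        calc e ((1 - R) ((Qk * Qj) z) - Qm x)
            = E ((1 - R) ((Qk * Qj) z) - Qm x) := (hEapp _).symm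
          _ = E ((1 - R) ((Qk * Qj) z)) - E (Qm x) := map_sub E _ _
          _ = 0 - m • e x := by rw [hEapp, hEapp, ha, hb]
          _ = -(m • e x) := zero_sub _
      rw [← h1, h2]
    have hQkQj : (1 - R) ((Qk * Qj) z) = Qm x - m • e x := by
      have := hvE
      rw [sub_eq_iff_eq_add] at this
      rw [this]; abel
    -- telescoping part : m • x - Qm x ∈ ran (1-R)
    have htel : (1 - R) (∑ i ∈ Finset.range m, (∑ l ∈ Finset.range i, R ^ l) x)
        = m • x - Qm x := by
      rw [map_sum]
      have hterm : ∀ i ∈ Finset.range m,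
          (1 - R) ((∑ l ∈ Finset.range i, R ^ l) x) = x - (R ^ i) x := by
        intro i _
        have hop : (1 - R) * (∑ l ∈ Finset.range i, R ^ l) = 1 - R ^ i :=
          (stmt8_one_sub_pow R i).symm
        calc (1 - R) ((∑ l ∈ Finset.range i, R ^ l) x)
            = ((1 - R) * (∑ l ∈ Finset.range i, R ^ l)) x := rfl
          _ = ((1 : X →L[ℝ] X) - R ^ i) x := by rw [hop]
          _ = x - (R ^ i) x := by simp
      rw [Finset.sum_congr rfl hterm, Finset.sum_sub_distrib, Finset.sum_const,
        Finset.card_range]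
      congr 1
      rw [hQm]; simp [ContinuousLinearMap.sum_apply]
    refine ⟨(m : ℝ)⁻¹ • ((∑ i ∈ Finset.range m, (∑ l ∈ Finset.range i, R ^ l) x)
      + (Qk * Qj) z), ?_⟩
    have hmain : (1 - R) ((∑ i ∈ Finset.range m, (∑ l ∈ Finset.range i, R ^ l) x)
        + (Qk * Qj) z) = m • (x - e x) := by
      rw [map_add, htel, hQkQj, smul_sub]
      abel
    have hm0 : ((m : ℝ)) ≠ 0 := by
      have : (0 : ℝ) < m := by exact_mod_cast hmpos
      exact ne_of_gt this
    have hfin : (1 - R) ((m : ℝ)⁻¹ • ((∑ i ∈ Finset.range m, (∑ l ∈ Finset.range i, R ^ l) x)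
        + (Qk * Qj) z)) = x - e x := by
      rw [map_smul, hmain, ← Nat.cast_smul_eq_nsmul ℝ m (x - e x), smul_smul,
        inv_mul_cancel₀ hm0, one_smul]
    calc (m : ℝ)⁻¹ • ((∑ i ∈ Finset.range m, (∑ l ∈ Finset.range i, R ^ l) x) + (Qk * Qj) z)
          - R ((m : ℝ)⁻¹ • ((∑ i ∈ Finset.range m, (∑ l ∈ Finset.range i, R ^ l) x)
            + (Qk * Qj) z))
        = (1 - R) ((m : ℝ)⁻¹ • ((∑ i ∈ Finset.range m, (∑ l ∈ Finset.range i, R ^ l) x)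
            + (Qk * Qj) z)) := by simp
      _ = x - e x := hfin
  -- ker E is a closed complemented-by-range subspace; open mapping theorem
  have hmemker : ∀ x : X, (1 - R) x ∈ E.ker := by
    intro x
    rw [LinearMap.mem_ker]
    have : (1 - R) x = x - R x := by simp
    rw [this, map_sub, ContinuousLinearMap.coe_coe, hEapp, hEapp, hER, sub_self]
  have hclosed : IsClosed ((E.ker : Submodule ℝ X) : Set X) :=
    ContinuousLinearMap.isClosed_ker E
  haveI : CompleteSpace (E.ker : Submodule ℝ X) := hclosed.completeSpace_coe
  obtain ⟨g, hgapp⟩ : ∃ g : X →L[ℝ] (E.ker : Submodule ℝ X),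
      ∀ x : X, (g x : X) = (1 - R) x :=
    ⟨(1 - R).codRestrict (E.ker) hmemker, fun _ => rfl⟩
  have hgsurj : Function.Surjective g := by
    rintro ⟨y, hy⟩
    have hy0 : E y = 0 := LinearMap.mem_ker.mp hy
    obtain ⟨u, hu⟩ := hsolve y
    refine ⟨u, Subtype.ext ?_⟩
    rw [hgapp]
    have h2 : (1 - R) u = u - R u := by simp
    rw [h2, hu, ← hEapp, hy0, sub_zero]
  obtain ⟨C, hCpos, hC⟩ := ContinuousLinearMap.exists_preimage_norm_le g hgsurj
  have hC' : ∀ w : X, E w = 0 → ∃ u : X, u - R u = w ∧ ‖u‖ ≤ C * ‖w‖ := by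
    intro w hw
    obtain ⟨u, hgu, hunorm⟩ := hC ⟨w, LinearMap.mem_ker.mpr hw⟩
    refine ⟨u, ?_, ?_⟩
    · have h' : (g u : X) = ((⟨w, LinearMap.mem_ker.mpr hw⟩ : E.ker) : X) :=
        congrArg (Subtype.val) hgu
      rw [hgapp] at h'
      simpa using h'
    · calc ‖u‖ ≤ C * ‖(⟨w, LinearMap.mem_ker.mpr hw⟩ : E.ker)‖ := hunorm
        _ = C * ‖w‖ := by rw [Submodule.coe_norm]
  -- the uniform convergence
  refine ⟨E, ?_⟩
  rw [← tendsto_sub_nhds_zero_iff]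
  apply squeeze_zero_norm' (a := fun n : ℕ => (n : ℝ)⁻¹ * (4 * C))
  · filter_upwards [eventually_ge_atTop 1] with n hn
    have hn0 : ((n : ℝ)) ≠ 0 := by positivity
    refine ContinuousLinearMap.opNorm_le_bound _ (by positivity) fun x => ?_
    have hmem' : E (x - E x) = 0 := by
      rw [map_sub]
      simp only [hEapp]
      rw [hEE, sub_self]
    obtain ⟨u, hu, hunorm⟩ := hC' (x - E x) hmem'
    have hunorm' : ‖u‖ ≤ C * (2 * ‖x‖) := by
      have h2 : ‖x - E x‖ ≤ 2 * ‖x‖ := by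
        calc ‖x - E x‖ ≤ ‖x‖ + ‖E x‖ := norm_sub_le _ _
          _ ≤ 2 * ‖x‖ := by
            have := hebound x
            rw [one_mul] at this
            rw [hEapp]; linarith
      calc ‖u‖ ≤ C * ‖x - E x‖ := hunorm
        _ ≤ C * (2 * ‖x‖) := mul_le_mul_of_nonneg_left h2 (le_of_lt hCpos)
    -- key identity
    have hkey : (((n : ℝ)⁻¹ • ∑ i ∈ Finset.range n, R ^ i) - E) x
        = (n : ℝ)⁻¹ • (u - (R ^ n) u) := by
      have hsum : ∑ i ∈ Finset.range n, (R ^ i) x = (u - (R ^ n) u) + n • E x := by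
        have hterm : ∀ i ∈ Finset.range n,
            (R ^ i) x = ((fun i => (R ^ i) u) i - (fun i => (R ^ i) u) (i + 1)) + E x := by
          intro i _
          have h1 : (R ^ i) x = (R ^ i) (x - E x) + (R ^ i) (E x) := by
            rw [← map_add]; congr 1; abel
          have h2 : (R ^ i) (E x) = E x := by rw [hEapp]; exact hpowe i x
          have h3 : (R ^ i) (x - E x) = (R ^ i) u - (R ^ (i + 1)) u := by
            rw [← hu, map_sub, pow_succ, ContinuousLinearMap.mul_apply]
          rw [h1, h2, h3]
        rw [Finset.sum_congr rfl hterm, Finset.sum_add_distrib, Finset.sum_const,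
          Finset.card_range, Finset.sum_range_sub']
        simp
      have hEfix : (n : ℝ)⁻¹ • ((n : ℕ) • E x) = E x := by
        rw [← Nat.cast_smul_eq_nsmul ℝ n (E x), smul_smul, inv_mul_cancel₀ hn0, one_smul]
      calc (((n : ℝ)⁻¹ • ∑ i ∈ Finset.range n, R ^ i) - E) x
          = (n : ℝ)⁻¹ • (∑ i ∈ Finset.range n, (R ^ i) x) - E x := by
            rw [ContinuousLinearMap.sub_apply, ContinuousLinearMap.smul_apply,
              ContinuousLinearMap.sum_apply]
        _ = (n : ℝ)⁻¹ • ((u - (R ^ n) u) + n • E x) - E x := by rw [hsum]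
        _ = (n : ℝ)⁻¹ • (u - (R ^ n) u) + ((n : ℝ)⁻¹ • ((n : ℕ) • E x) - E x) := by
            rw [smul_add]; abel
        _ = (n : ℝ)⁻¹ • (u - (R ^ n) u) := by rw [hEfix]; abel
    rw [hkey, norm_smul, Real.norm_eq_abs, abs_of_nonneg (by positivity)]
    have hub : ‖u - (R ^ n) u‖ ≤ 4 * C * ‖x‖ := by
      calc ‖u - (R ^ n) u‖ ≤ ‖u‖ + ‖(R ^ n) u‖ := norm_sub_le _ _
        _ ≤ ‖u‖ + ‖u‖ := by linarith [hpowx n u]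
        _ ≤ 2 * (C * (2 * ‖x‖)) := by linarith
        _ = 4 * C * ‖x‖ := by ring
    calc (n : ℝ)⁻¹ * ‖u - (R ^ n) u‖ ≤ (n : ℝ)⁻¹ * (4 * C * ‖x‖) :=
          mul_le_mul_of_nonneg_left hub (by positivity)
      _ = (n : ℝ)⁻¹ * (4 * C) * ‖x‖ := by ring
  · simpa using hinv.mul_const (4 * C)
end

section
/- Let U and V be commuting linear isometries on a complex Hilbert space H, let n > 2, and let v ≠ 0 be a vector such that the family {U^k V^j v : 0 ≤ k ≤ n, 0 ≤ j ≤ n} is orthogonal. Then for any λ, ν ∈ ℂ with |λ| = |ν| = 1, the vector x := Σ_{k=0}^{n−1} Σ_{j=0}^{n−1} λ^{n−k} ν^{n−j} U^k V^j v satisfies ‖x‖ = n‖v‖ (in particular x ≠ 0) and ‖(λI−U)x‖ + ‖(νI−V)x‖ = (2√2/√n)·‖x‖. -/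
open Filter Topology

lemma orth_inner_zero {H : Type*} [NormedAddCommGroup H] [InnerProductSpace ℂ H]
    (s t : Finset ℕ) (c d : ℕ → ℂ) (e f : ℕ → H)
    (ho : ∀ i ∈ s, ∀ j ∈ t, (inner ℂ (e i) (f j) : ℂ) = 0) :
    (inner ℂ (∑ i ∈ s, c i • e i) (∑ j ∈ t, d j • f j) : ℂ) = 0 := by
  rw [sum_inner]
  refine Finset.sum_eq_zero fun i hi => ?_
  rw [inner_smul_left, inner_sum,
    Finset.sum_eq_zero fun j hj => by rw [inner_smul_right, ho i hi j hj, mul_zero]]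
  simp

lemma orth_norm_sq {H : Type*} [NormedAddCommGroup H] [InnerProductSpace ℂ H]
    (s : Finset ℕ) (c : ℕ → ℂ) (e : ℕ → H)
    (ho : ∀ i ∈ s, ∀ j ∈ s, i ≠ j → (inner ℂ (e i) (e j) : ℂ) = 0) :
    ‖∑ i ∈ s, c i • e i‖ ^ 2 = ∑ i ∈ s, ‖c i‖ ^ 2 * ‖e i‖ ^ 2 := by
  have key : (inner ℂ (∑ i ∈ s, c i • e i) (∑ i ∈ s, c i • e i) : ℂ)
      = ((∑ i ∈ s, ‖c i‖ ^ 2 * ‖e i‖ ^ 2 : ℝ) : ℂ) := by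
    simp only [sum_inner, inner_sum, inner_smul_left, inner_smul_right]
    push_cast
    refine Finset.sum_congr rfl fun i hi => ?_
    rw [Finset.sum_eq_single i (fun j hj hne => by simp [ho j hj i hi hne])
      (fun h => absurd hi h)]
    rw [inner_self_eq_norm_sq_to_K, ← mul_assoc, Complex.mul_conj']
    rfl
  have h2 : ‖∑ i ∈ s, c i • e i‖ ^ 2
      = RCLike.re (inner ℂ (∑ i ∈ s, c i • e i) (∑ i ∈ s, c i • e i) : ℂ) :=
    norm_sq_eq_re_inner (𝕜 := ℂ) _
  rw [h2, key]
  exact Complex.ofReal_re _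

lemma tele_norm {H : Type*} [NormedAddCommGroup H] [InnerProductSpace ℂ H]
    (W : H →L[ℂ] H) (n : ℕ) (hn : 0 < n) (s : ℕ → H) (lam : ℂ) (hlam : ‖lam‖ = 1)
    (B : ℝ)
    (hnorm : ∀ k ≤ n, ‖s k‖ ^ 2 = B)
    (horth : ∀ k ≤ n, ∀ k' ≤ n, k ≠ k' → (inner ℂ (s k) (s k') : ℂ) = 0)
    (hW : ∀ k, W (s k) = s (k + 1))
    (x : H) (hx : x = ∑ k ∈ Finset.range n, (lam ^ (n - k)) • s k) :
    ‖lam • x - W x‖ = Real.sqrt (2 * B) := by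
  have h1 : lam • x = ∑ k ∈ Finset.range n, (lam ^ (n + 1 - k)) • s k := by
    rw [hx, Finset.smul_sum]
    refine Finset.sum_congr rfl fun k hk => ?_
    rw [smul_smul]
    congr 1
    have hk' : k < n := Finset.mem_range.mp hk
    have he : n + 1 - k = (n - k) + 1 := by omega
    rw [he, pow_succ]
    ring
  have h2 : W x = ∑ k ∈ Finset.range n, (lam ^ (n + 1 - (k + 1))) • s (k + 1) := by
    rw [hx, map_sum]
    refine Finset.sum_congr rfl fun k hk => ?_
    rw [map_smul, hW]
    have he : n + 1 - (k + 1) = n - k := by omega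
    rw [he]
  rw [h1, h2, ← Finset.sum_sub_distrib,
    Finset.sum_range_sub' (fun k => (lam ^ (n + 1 - k)) • s k) n]
  have hinner : (inner ℂ ((lam ^ (n + 1 - 0)) • s 0) ((lam ^ (n + 1 - n)) • s n) : ℂ) = 0 := by
    rw [inner_smul_left, inner_smul_right, horth 0 (by omega) n le_rfl (by omega)]
    ring
  have hsq : ‖(lam ^ (n + 1 - 0)) • s 0 - (lam ^ (n + 1 - n)) • s n‖ ^ 2 = 2 * B := by
    rw [@norm_sub_sq ℂ, hinner]
    simp only [map_zero, mul_zero, sub_zero]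
    rw [norm_smul, norm_smul, norm_pow, norm_pow, hlam]
    simp only [one_pow, one_mul]
    rw [hnorm 0 (by omega), hnorm n le_rfl]
    ring
  rw [← Real.sqrt_sq (norm_nonneg _), hsq]

/-- Let `U` and `V` be commuting linear isometries on a complex Hilbert space
`H`, let `n > 2`, and let `v ≠ 0` be a vector such that the family
`{U^k V^j v : 0 ≤ k ≤ n, 0 ≤ j ≤ n}` is orthogonal. Then for any `λ, ν ∈ ℂ` with `|λ| = |ν| = 1`,
the vector `x := Σ_{k<n} Σ_{j<n} λ^{n-k} ν^{n-j} U^k V^j v` satisfies `‖x‖ = n‖v‖`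
(in particular `x ≠ 0`) and `‖(λI-U)x‖ + ‖(νI-V)x‖ = (2√2/√n)·‖x‖`. -/
theorem stmt9 {H : Type*} [NormedAddCommGroup H] [InnerProductSpace ℂ H] [CompleteSpace H]
    (U V : H →L[ℂ] H) (hU : ∀ y : H, ‖U y‖ = ‖y‖) (hV : ∀ y : H, ‖V y‖ = ‖y‖)
    (hUV : U * V = V * U) (n : ℕ) (hn : 2 < n) (v : H) (hv : v ≠ 0)
    (horth : ∀ k j k' j' : ℕ, k ≤ n → j ≤ n → k' ≤ n → j' ≤ n → (k, j) ≠ (k', j') →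
      (inner ℂ ((U ^ k) ((V ^ j) v)) ((U ^ k') ((V ^ j') v)) : ℂ) = 0)
    (lam nu : ℂ) (hlam : ‖lam‖ = 1) (hnu : ‖nu‖ = 1) :
    ∀ x : H, x = ∑ k ∈ Finset.range n, ∑ j ∈ Finset.range n,
        (lam ^ (n - k) * nu ^ (n - j)) • (U ^ k) ((V ^ j) v) →
      ‖x‖ = n * ‖v‖ ∧ x ≠ 0 ∧
        ‖lam • x - U x‖ + ‖nu • x - V x‖ = 2 * Real.sqrt 2 / Real.sqrt n * ‖x‖ := by
  intro x hx
  have hv0 : 0 < ‖v‖ := norm_pos_iff.mpr hv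
  have hn0 : 0 < n := by omega
  have hn0R : (0:ℝ) < n := by exact_mod_cast hn0
  -- powers of U and V are isometries
  have hUp : ∀ k (y : H), ‖(U ^ k) y‖ = ‖y‖ := by
    intro k
    induction k with
    | zero => intro y; simp
    | succ k ih =>
      intro y
      rw [pow_succ, ContinuousLinearMap.mul_apply, ih, hU]
  have hVp : ∀ j (y : H), ‖(V ^ j) y‖ = ‖y‖ := by
    intro j
    induction j with
    | zero => intro y; simp
    | succ j ih =>
      intro y
      rw [pow_succ, ContinuousLinearMap.mul_apply, ih, hV]
  have hc : Commute U V := hUV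
  have hUe : ∀ k j, U ((U ^ k) ((V ^ j) v)) = (U ^ (k + 1)) ((V ^ j) v) := by
    intro k j; rw [pow_succ']; rfl
  have hVe : ∀ k j, V ((U ^ k) ((V ^ j) v)) = (U ^ k) ((V ^ (j + 1)) v) := by
    intro k j
    calc V ((U ^ k) ((V ^ j) v)) = (V * U ^ k) ((V ^ j) v) := rfl
      _ = (U ^ k * V) ((V ^ j) v) := by rw [((hc.pow_left k).symm).eq]
      _ = (U ^ k) (V ((V ^ j) v)) := rfl
      _ = (U ^ k) ((V ^ (j + 1)) v) := by rw [pow_succ']; rfl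
  set B : ℝ := (n : ℝ) * ‖v‖ ^ 2 with hB
  -- column sums (for U) and row sums (for V)
  set sU : ℕ → H := fun k => ∑ j ∈ Finset.range n, (nu ^ (n - j)) • (U ^ k) ((V ^ j) v)
    with hsU
  set sV : ℕ → H := fun j => ∑ k ∈ Finset.range n, (lam ^ (n - k)) • (U ^ k) ((V ^ j) v)
    with hsV
  have hsUnorm : ∀ k ≤ n, ‖sU k‖ ^ 2 = B := by
    intro k hk
    rw [hsU]
    rw [orth_norm_sq _ _ _ (fun i hi j hj hij =>
      horth k i k j hk (by have := Finset.mem_range.mp hi; omega) hk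
        (by have := Finset.mem_range.mp hj; omega) (by simp [hij]))]
    rw [Finset.sum_congr rfl fun j hj => by
      rw [norm_pow, hnu, one_pow, one_pow, one_mul, hUp, hVp]]
    rw [Finset.sum_const, Finset.card_range, nsmul_eq_mul, hB]
  have hsVnorm : ∀ j ≤ n, ‖sV j‖ ^ 2 = B := by
    intro j hj
    rw [hsV]
    rw [orth_norm_sq _ _ _ (fun i hi k hk hik =>
      horth i j k j (by have := Finset.mem_range.mp hi; omega) hj
        (by have := Finset.mem_range.mp hk; omega) hj (by simp [hik]))]
    rw [Finset.sum_congr rfl fun k hk => by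
      rw [norm_pow, hlam, one_pow, one_pow, one_mul, hUp, hVp]]
    rw [Finset.sum_const, Finset.card_range, nsmul_eq_mul, hB]
  have hsUorth : ∀ k ≤ n, ∀ k' ≤ n, k ≠ k' → (inner ℂ (sU k) (sU k') : ℂ) = 0 := by
    intro k hk k' hk' hne
    rw [hsU]
    exact orth_inner_zero _ _ _ _ _ _ (fun i hi j hj =>
      horth k i k' j hk (by have := Finset.mem_range.mp hi; omega) hk'
        (by have := Finset.mem_range.mp hj; omega) (by simp [hne]))
  have hsVorth : ∀ j ≤ n, ∀ j' ≤ n, j ≠ j' → (inner ℂ (sV j) (sV j') : ℂ) = 0 := by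
    intro j hj j' hj' hne
    rw [hsV]
    exact orth_inner_zero _ _ _ _ _ _ (fun i hi k hk =>
      horth i j k j' (by have := Finset.mem_range.mp hi; omega) hj
        (by have := Finset.mem_range.mp hk; omega) hj' (by simp [hne]))
  have hxU : x = ∑ k ∈ Finset.range n, (lam ^ (n - k)) • sU k := by
    rw [hx, hsU]
    refine Finset.sum_congr rfl fun k hk => ?_
    rw [Finset.smul_sum]
    exact Finset.sum_congr rfl fun j hj => by rw [smul_smul]
  have hxV : x = ∑ j ∈ Finset.range n, (nu ^ (n - j)) • sV j := by
    rw [hx, Finset.sum_comm, hsV]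
    refine Finset.sum_congr rfl fun j hj => ?_
    rw [Finset.smul_sum]
    refine Finset.sum_congr rfl fun k hk => ?_
    rw [smul_smul]
    congr 1
    ring
  have hWU : ∀ k, U (sU k) = sU (k + 1) := by
    intro k
    rw [hsU, map_sum]
    exact Finset.sum_congr rfl fun j hj => by rw [map_smul, hUe]
  have hWV : ∀ j, V (sV j) = sV (j + 1) := by
    intro j
    rw [hsV, map_sum]
    exact Finset.sum_congr rfl fun k hk => by rw [map_smul, hVe]
  -- norm of x
  have hx2 : ‖x‖ ^ 2 = ((n : ℝ) * ‖v‖) ^ 2 := by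
    rw [hxU]
    rw [orth_norm_sq _ _ _ (fun i hi j hj hij =>
      hsUorth i (by have := Finset.mem_range.mp hi; omega) j
        (by have := Finset.mem_range.mp hj; omega) hij)]
    rw [Finset.sum_congr rfl fun k hk => by
      rw [norm_pow, hlam, one_pow, one_pow, one_mul,
        hsUnorm k (by have := Finset.mem_range.mp hk; omega)]]
    rw [Finset.sum_const, Finset.card_range, nsmul_eq_mul, hB]
    ring
  have hxnorm : ‖x‖ = (n : ℝ) * ‖v‖ := by
    rw [← Real.sqrt_sq (norm_nonneg x), hx2,
      Real.sqrt_sq (by positivity)]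
  refine ⟨hxnorm, ?_, ?_⟩
  · intro h0
    rw [h0, norm_zero] at hxnorm
    exact absurd hxnorm.symm (by positivity)
  · have hnU := tele_norm U n hn0 sU lam hlam B hsUnorm hsUorth hWU x hxU
    have hnV := tele_norm V n hn0 sV nu hnu B hsVnorm hsVorth hWV x hxV
    rw [hnU, hnV, hxnorm, hB]
    have hsn : Real.sqrt n * Real.sqrt n = n := Real.mul_self_sqrt hn0R.le
    have hsnne : Real.sqrt n ≠ 0 := by positivity
    have hs : Real.sqrt (2 * ((n : ℝ) * ‖v‖ ^ 2))
        = Real.sqrt 2 * Real.sqrt n * ‖v‖ := by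
      rw [show (2 : ℝ) * ((n : ℝ) * ‖v‖ ^ 2) = 2 * (n : ℝ) * ‖v‖ ^ 2 by ring,
        Real.sqrt_mul (by positivity), Real.sqrt_mul (by norm_num),
        Real.sqrt_sq (norm_nonneg v)]
    rw [hs]
    field_simp
    linear_combination 2 * hsn
end

section
/- Let α and β be positive irrational numbers such that there exist integers m, n, p with m ≠ 0 and mα + nβ + p = 0, and such that gcd(|m|, |n|) = 1. Then for every p with 1 ≤ p < ∞, the rotation operators T_α and T_β on L_p(𝕋) have a joint coboundary which is not a double coboundary: there exists f ∈ (I−T_α)L_p(𝕋) ∩ (I−T_β)L_p(𝕋) with f ∉ (I−T_α)(I−T_β)L_p(𝕋). -/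
open MeasureTheory Filter Topology ENNReal


namespace Stmt10Aux

open Complex AddCircle

lemma norm_fourier (n : ℤ) (x : UnitAddCircle) : ‖(fourier n x : ℂ)‖ = 1 := by
  rw [fourier_apply]; exact Circle.norm_coe _

lemma fourier_hom (n : ℤ) (x y : UnitAddCircle) :
    (fourier n (x + y) : ℂ) = fourier n x * fourier n y := by
  rw [fourier_apply, fourier_apply, fourier_apply, smul_add, AddCircle.toCircle_add,
    Circle.coe_mul]

lemma fourier_natmul (k : ℕ) (q : ℤ) (x : UnitAddCircle) :
    (fourier ((k : ℤ) * q) x : ℂ) = (fourier q x : ℂ) ^ k := by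
  induction k with
  | zero => simp [fourier_zero]
  | succ k ih =>
    have h : ((k + 1 : ℕ) : ℤ) * q = (k : ℤ) * q + q := by push_cast; ring
    rw [h, fourier_add, ih, pow_succ]

lemma norm_one_sub_pow (z : ℂ) (hz : ‖z‖ = 1) (k : ℕ) : ‖1 - z ^ k‖ ≤ k * ‖1 - z‖ := by
  induction k with
  | zero => simp
  | succ k ih =>
    have h : 1 - z ^ (k + 1) = (1 - z ^ k) + z ^ k * (1 - z) := by ring
    calc ‖1 - z ^ (k+1)‖ ≤ ‖1 - z ^ k‖ + ‖z ^ k * (1 - z)‖ := by rw [h]; exact norm_add_le _ _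
      _ = ‖1 - z ^ k‖ + ‖1 - z‖ := by rw [norm_mul, norm_pow, hz, one_pow, one_mul]
      _ ≤ k * ‖1 - z‖ + ‖1 - z‖ := by linarith
      _ = (k + 1 : ℕ) * ‖1 - z‖ := by push_cast; ring

lemma norm_one_sub_fourier_mul (k q : ℤ) (x : UnitAddCircle) :
    ‖1 - (fourier (k * q) x : ℂ)‖ ≤ |(k : ℝ)| * ‖1 - (fourier q x : ℂ)‖ := by
  rcases le_or_gt 0 k with hk | hk
  · obtain ⟨k', rfl⟩ := Int.eq_ofNat_of_zero_le hk
    rw [fourier_natmul]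
    simpa using norm_one_sub_pow _ (norm_fourier q x) k'
  · obtain ⟨k', hk'⟩ : ∃ k' : ℕ, k = -(k' : ℤ) := ⟨k.natAbs, by omega⟩
    subst hk'
    have h1 : (-(k' : ℤ)) * q = -((k' : ℤ) * q) := by ring
    rw [h1, fourier_neg, fourier_natmul]
    have h2 : (1 : ℂ) - (starRingEnd ℂ) ((fourier q x : ℂ) ^ k') =
        (starRingEnd ℂ) (1 - (fourier q x : ℂ) ^ k') := by
      rw [map_sub, map_one]
    rw [h2, Complex.norm_conj]
    simpa using norm_one_sub_pow _ (norm_fourier q x) k'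

lemma coe_int_eq_zero (j : ℤ) : ((j : ℝ) : UnitAddCircle) = 0 := by
  rw [AddCircle.coe_eq_zero_iff]
  exact ⟨j, by simp⟩

lemma coe_sub_int (x : ℝ) (j : ℤ) :
    ((x - (j : ℝ) : ℝ) : UnitAddCircle) = ((x : ℝ) : UnitAddCircle) := by
  have : ((x - (j : ℝ) : ℝ) : UnitAddCircle)
      = ((x : ℝ) : UnitAddCircle) + (((-j : ℤ) : ℝ) : UnitAddCircle) := by
    push_cast
    rw [← AddCircle.coe_add]
    ring_nf
  rw [this, coe_int_eq_zero, add_zero]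

lemma fourier_coe (K : ℤ) (γ : ℝ) :
    (fourier K ((γ : ℝ) : UnitAddCircle) : ℂ)
      = AddCircle.toCircle ((((K : ℝ) * γ : ℝ)) : UnitAddCircle) := by
  rw [fourier_apply, ← QuotientAddGroup.mk_zsmul, zsmul_eq_mul]

lemma fourier_ne_one {γ : ℝ} (hγ : Irrational γ) {K : ℤ} (hK : K ≠ 0) :
    (fourier K ((γ : ℝ) : UnitAddCircle) : ℂ) ≠ 1 := by
  intro h
  rw [fourier_coe] at h
  have h1 : AddCircle.toCircle ((((K : ℝ) * γ : ℝ)) : UnitAddCircle) = 1 :=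
    Subtype.coe_injective (by simpa using h)
  have h2 : ((((K : ℝ) * γ : ℝ)) : UnitAddCircle) = 0 :=
    AddCircle.injective_toCircle one_ne_zero (by rw [h1, AddCircle.toCircle_zero])
  obtain ⟨j, hj⟩ := (AddCircle.coe_eq_zero_iff _).mp h2
  have hK' : (K : ℝ) ≠ 0 := Int.cast_ne_zero.mpr hK
  refine (irrational_iff_ne_rational γ).mp hγ j K hK ?_
  have : (j : ℝ) = (K : ℝ) * γ := by simpa using hj
  field_simp
  linarith [this]

lemma exists_small (γ : ℝ) {ε : ℝ} (hε : 0 < ε) :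
    ∃ q : ℤ, 0 < q ∧ ‖1 - (fourier q ((γ : ℝ) : UnitAddCircle) : ℂ)‖ < ε := by
  have hcont : Continuous fun t : ℝ => (fourier 1 ((t : ℝ) : UnitAddCircle) : ℂ) :=
    (fourier 1).continuous.comp (AddCircle.continuous_mk' (1 : ℝ))
  obtain ⟨δ, hδ0, hδ⟩ := (Metric.continuousAt_iff).mp (hcont.continuousAt (x := 0)) ε hε
  obtain ⟨N, hN⟩ := exists_nat_one_div_lt hδ0
  obtain ⟨j, k, hk0, hkN, hjk⟩ := Real.exists_int_int_abs_mul_sub_le γ (Nat.succ_pos N)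
  refine ⟨k, hk0, ?_⟩
  have hlt : |(k : ℝ) * γ - (j : ℝ)| < δ := by
    refine lt_of_le_of_lt (hjk.trans ?_) hN
    rw [one_div, one_div]
    apply inv_anti₀
    · positivity
    · push_cast; linarith
  have hkey : (fourier k ((γ : ℝ) : UnitAddCircle) : ℂ)
      = fourier 1 ((((k : ℝ) * γ - (j : ℝ) : ℝ)) : UnitAddCircle) := by
    rw [fourier_coe, fourier_coe]
    congr 1
    rw [show ((1:ℤ):ℝ) = 1 by norm_num, one_mul, coe_sub_int]
  have := hδ (x := (k : ℝ) * γ - (j : ℝ)) (by simpa [Real.dist_eq] using hlt)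
  rw [hkey, norm_sub_rev]
  have h0 : (fourier 1 (((0 : ℝ) : ℝ) : UnitAddCircle) : ℂ) = 1 := by
    norm_num [fourier_eval_zero]
  simpa [dist_eq_norm, h0] using this

lemma fourier_neg_neg (n : ℤ) (a : UnitAddCircle) :
    (fourier (-n) (-a) : ℂ) = fourier n a := by
  rw [fourier_apply, fourier_apply, neg_smul, smul_neg, neg_neg]

/-- volume = haar on the unit circle -/
lemma vol_eq_haar :
    (volume : Measure UnitAddCircle) = (haarAddCircle : Measure UnitAddCircle) := by
  rw [AddCircle.volume_eq_smul_haarAddCircle]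
  simp

lemma norm_fourierCoeff_le (h : UnitAddCircle → ℂ) (n : ℤ) :
    ‖fourierCoeff h n‖ ≤ ∫ x, ‖h x‖ ∂(haarAddCircle : Measure UnitAddCircle) := by
  refine (norm_integral_le_integral_norm _).trans_eq ?_
  refine integral_congr_ae (Eventually.of_forall fun x => ?_)
  simp only [norm_smul, norm_fourier, one_mul]

lemma fourierCoeff_congr {f g : UnitAddCircle → ℂ}
    (h : f =ᵐ[(haarAddCircle : Measure UnitAddCircle)] g) (n : ℤ) :
    fourierCoeff f n = fourierCoeff g n := by
  refine integral_congr_ae (h.mono fun x hx => ?_)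
  dsimp only
  rw [hx]

lemma fourierCoeff_comp_add (h : UnitAddCircle → ℂ) (a : UnitAddCircle) (n : ℤ) :
    fourierCoeff (fun x => h (x + a)) n = fourier n a * fourierCoeff h n := by
  have key := MeasureTheory.integral_add_right_eq_self
      (μ := (haarAddCircle : Measure UnitAddCircle))
      (fun t => (fourier (-n) t : ℂ) • h (t + a)) (-a)
  have key2 : ∀ x : UnitAddCircle, (fourier (-n) (x + -a) : ℂ) • h (x + -a + a)
      = (fourier n a : ℂ) * ((fourier (-n) x : ℂ) • h x) := by
    intro x
    rw [neg_add_cancel_right, fourier_hom, smul_eq_mul, smul_eq_mul]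
    have : (fourier (-n) (-a) : ℂ) = fourier n a := fourier_neg_neg n a
    rw [this]; ring
  unfold fourierCoeff
  rw [← key]
  simp_rw [key2]
  rw [integral_const_mul]

lemma integrable_fourier_smul {h : UnitAddCircle → ℂ}
    (hInt : Integrable h (haarAddCircle : Measure UnitAddCircle)) (n : ℤ) :
    Integrable (fun t => (fourier n t : ℂ) • h t) (haarAddCircle : Measure UnitAddCircle) := by
  simp_rw [smul_eq_mul]
  exact hInt.bdd_mul (fourier n).continuous.aestronglyMeasurable
    (Eventually.of_forall fun x => le_of_eq (norm_fourier n x))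

lemma fourierCoeff_double {h : UnitAddCircle → ℂ}
    (hInt : Integrable h (haarAddCircle : Measure UnitAddCircle)) (a b : UnitAddCircle) (n : ℤ) :
    fourierCoeff (fun x => h x - h (x + a) - h (x + b) + h (x + a + b)) n
      = (1 - fourier n a) * (1 - fourier n b) * fourierCoeff h n := by
  have hIa : Integrable (fun x => h (x + a)) (haarAddCircle : Measure UnitAddCircle) :=
    hInt.comp_add_right a
  have hIb : Integrable (fun x => h (x + b)) (haarAddCircle : Measure UnitAddCircle) :=
    hInt.comp_add_right b
  have hIab : Integrable (fun x => h (x + (a + b))) (haarAddCircle : Measure UnitAddCircle) :=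
    hInt.comp_add_right (a + b)
  have e1 : fourierCoeff (fun x => h x - h (x + a) - h (x + b) + h (x + a + b)) n
      = fourierCoeff h n - fourierCoeff (fun x => h (x + a)) n
        - fourierCoeff (fun x => h (x + b)) n + fourierCoeff (fun x => h (x + (a + b))) n := by
    unfold fourierCoeff
    have : ∀ x : UnitAddCircle,
        (fourier (-n) x : ℂ) • (h x - h (x + a) - h (x + b) + h (x + a + b))
        = (fourier (-n) x : ℂ) • h x - (fourier (-n) x : ℂ) • h (x + a)
          - (fourier (-n) x : ℂ) • h (x + b) + (fourier (-n) x : ℂ) • h (x + (a + b)) := by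
      intro x
      rw [← add_assoc]
      simp only [smul_eq_mul]
      ring
    simp_rw [this]
    rw [integral_add, integral_sub, integral_sub]
    · exact integrable_fourier_smul hInt (-n)
    · exact integrable_fourier_smul hIa (-n)
    · exact ((integrable_fourier_smul hInt (-n)).sub (integrable_fourier_smul hIa (-n)))
    · exact integrable_fourier_smul hIb (-n)
    · exact ((integrable_fourier_smul hInt (-n)).sub (integrable_fourier_smul hIa (-n))).sub
        (integrable_fourier_smul hIb (-n))
    · exact integrable_fourier_smul hIab (-n)
  rw [e1, fourierCoeff_comp_add, fourierCoeff_comp_add, fourierCoeff_comp_add, fourier_hom]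
  ring

lemma integral_fourier (l : ℤ) :
    (∫ t : UnitAddCircle, (fourier l t : ℂ) ∂(haarAddCircle : Measure UnitAddCircle))
      = if l = 0 then 1 else 0 := by
  split_ifs with h
  · subst h
    simp_rw [fourier_zero]
    simp
  · exact integral_eq_zero_of_add_right_eq_neg
      (fourier_add_half_inv_index h (by norm_num : (0:ℝ) < 1))

lemma integral_fourier_mul (m k : ℤ) :
    (∫ t : UnitAddCircle, (fourier m t : ℂ) * fourier k t
        ∂(haarAddCircle : Measure UnitAddCircle))
      = if m + k = 0 then 1 else 0 := by
  simp_rw [← fourier_add]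
  exact integral_fourier (m + k)

lemma summable_half : Summable (fun j : ℕ => ((2:ℝ)⁻¹) ^ j) :=
  summable_geometric_of_lt_one (by norm_num) (by norm_num)

lemma tsum_half : (∑' j : ℕ, ((2:ℝ)⁻¹) ^ j) = 2 := by
  simpa [one_div] using tsum_geometric_two

lemma ennreal_half_ne_top : (∑' j : ℕ, ((2:ℝ≥0∞)⁻¹) ^ j) ≠ ⊤ := by
  rw [ENNReal.tsum_geometric]
  simp

lemma fourierCoeff_tsum (a : ℕ → ℂ) (K : ℕ → ℤ) (hK : Function.Injective K)
    (ha : ∀ j, ‖a j‖ ≤ ((2:ℝ)⁻¹) ^ j) (i : ℕ) :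
    fourierCoeff (fun x : UnitAddCircle => ∑' j, a j * fourier (K j) x) (K i) = a i := by
  unfold fourierCoeff
  have h1 : ∀ t : UnitAddCircle,
      (fourier (-(K i)) t : ℂ) • (∑' j, a j * fourier (K j) t)
        = ∑' j, (fourier (-(K i)) t : ℂ) * (a j * fourier (K j) t) := by
    intro t
    rw [smul_eq_mul, tsum_mul_left]
  simp_rw [h1]
  rw [integral_tsum]
  · have h2 : ∀ j, (∫ t : UnitAddCircle, (fourier (-(K i)) t : ℂ) * (a j * fourier (K j) t)
        ∂(haarAddCircle : Measure UnitAddCircle)) = a j * (if -(K i) + K j = 0 then 1 else 0) := by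
      intro j
      have : ∀ t : UnitAddCircle, (fourier (-(K i)) t : ℂ) * (a j * fourier (K j) t)
          = a j * ((fourier (-(K i)) t : ℂ) * fourier (K j) t) := fun t => by ring
      simp_rw [this]
      rw [integral_const_mul, integral_fourier_mul]
    simp_rw [h2]
    rw [tsum_eq_single i]
    · simp
    · intro j hj
      have : -(K i) + K j ≠ 0 := by
        intro h
        exact hj (hK (by omega))
      rw [if_neg this, mul_zero]
  · exact fun j => (((fourier (-(K i))).continuous.mul
      (continuous_const.mul (fourier (K j)).continuous)).aestronglyMeasurable)
  · have hb : ∀ j, (∫⁻ t : UnitAddCircle, ‖(fourier (-(K i)) t : ℂ) * (a j * fourier (K j) t)‖₊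
        ∂(haarAddCircle : Measure UnitAddCircle)) = (‖a j‖₊ : ℝ≥0∞) := by
      intro j
      have : ∀ t : UnitAddCircle, (‖(fourier (-(K i)) t : ℂ) * (a j * fourier (K j) t)‖₊ : ℝ≥0∞)
          = (‖a j‖₊ : ℝ≥0∞) := by
        intro t
        congr 1
        have h5 : ‖(fourier (-(K i)) t : ℂ) * (a j * fourier (K j) t)‖ = ‖a j‖ := by
          rw [norm_mul, norm_mul, norm_fourier, norm_fourier, one_mul, mul_one]
        ext
        simpa [coe_nnnorm] using h5
      simp_rw [this]
      simp
    simp_rw [enorm_eq_nnnorm, hb]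
    refine ne_top_of_le_ne_top ennreal_half_ne_top (ENNReal.tsum_le_tsum fun j => ?_)
    have h3 : (‖a j‖₊ : ℝ≥0∞) = ENNReal.ofReal ‖a j‖ := (ofReal_norm (a j)).symm
    rw [h3]
    have h4 : ((2:ℝ≥0∞)⁻¹) ^ j = ENNReal.ofReal (((2:ℝ)⁻¹) ^ j) := by
      rw [ENNReal.ofReal_pow (by norm_num)]
      congr 1
      rw [ENNReal.ofReal_inv_of_pos (by norm_num)]
      norm_num
    rw [h4]
    exact ENNReal.ofReal_le_ofReal (ha j)

lemma memLp_tsum (a : ℕ → ℂ) (K : ℕ → ℤ) (ha : ∀ j, ‖a j‖ ≤ ((2:ℝ)⁻¹) ^ j) (p : ℝ≥0∞) :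
    MemLp (fun x : UnitAddCircle => ∑' j, a j * fourier (K j) x) p volume := by
  have hterm : ∀ (j : ℕ) (x : UnitAddCircle), ‖a j * fourier (K j) x‖ ≤ ((2:ℝ)⁻¹) ^ j := by
    intro j x
    rw [norm_mul, norm_fourier, mul_one]
    exact ha j
  have hcont : Continuous fun x : UnitAddCircle => ∑' j, a j * fourier (K j) x :=
    continuous_tsum (fun j => continuous_const.mul (fourier (K j)).continuous)
      summable_half hterm
  have hb : ∀ x : UnitAddCircle, ‖∑' j, a j * fourier (K j) x‖ ≤ 2 := by
    intro x
    have hs : Summable fun j : ℕ => ‖a j * fourier (K j) x‖ :=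
      Summable.of_nonneg_of_le (fun _ => norm_nonneg _) (fun j => hterm j x) summable_half
    refine (norm_tsum_le_tsum_norm hs).trans ?_
    calc (∑' j, ‖a j * fourier (K j) x‖) ≤ ∑' j : ℕ, ((2:ℝ)⁻¹) ^ j :=
          Summable.tsum_le_tsum (fun j => hterm j x) hs summable_half
      _ = 2 := tsum_half
  exact (memLp_top_of_bound hcont.aestronglyMeasurable 2
    (Eventually.of_forall hb)).mono_exponent le_top

end Stmt10Aux

open Stmt10Aux AddCircle

/-- Let `α` and `β` be positive irrational numbers such that there exist
integers `m, n, c` with `m ≠ 0` and `mα + nβ + c = 0`, and such that `gcd(|m|,|n|) = 1`. Then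
for every `p` with `1 ≤ p < ∞`, the rotation operators `T_α` and `T_β` on `L_p(𝕋)` have a joint
coboundary which is not a double coboundary. -/
theorem stmt10 (α β : ℝ) (hαpos : 0 < α) (hα : Irrational α) (hβpos : 0 < β)
    (hβ : Irrational β) (m n c : ℤ) (hm : m ≠ 0)
    (hrel : (m : ℝ) * α + (n : ℝ) * β + (c : ℝ) = 0) (hgcd : Int.gcd m n = 1)
    (p : ℝ≥0∞) (hp1 : 1 ≤ p) (hptop : p ≠ ⊤) :
    ∃ f : UnitAddCircle → ℂ, MemLp f p volume ∧
      (∃ g : UnitAddCircle → ℂ, MemLp g p volume ∧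
        f =ᵐ[volume] fun x => g x - g (x + (α : UnitAddCircle))) ∧
      (∃ g : UnitAddCircle → ℂ, MemLp g p volume ∧
        f =ᵐ[volume] fun x => g x - g (x + (β : UnitAddCircle))) ∧
      ¬ ∃ h : UnitAddCircle → ℂ, MemLp h p volume ∧
        f =ᵐ[volume] fun x => h x - h (x + (α : UnitAddCircle)) - h (x + (β : UnitAddCircle))
          + h (x + (α : UnitAddCircle) + (β : UnitAddCircle)) := by
  -- `n ≠ 0`
  have hmr : (m : ℝ) ≠ 0 := Int.cast_ne_zero.mpr hm
  have hn : n ≠ 0 := by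
    rintro rfl
    refine (irrational_iff_ne_rational α).mp hα (-c) m hm ?_
    field_simp
    push_cast at hrel ⊢
    linarith
  -- positivity of `1 - fourier K γ` norms
  have hdpos : ∀ (γ : ℝ), Irrational γ → ∀ K : ℤ, K ≠ 0 →
      0 < ‖1 - (fourier K ((γ : ℝ) : UnitAddCircle) : ℂ)‖ := by
    intro γ hγ K hK
    rw [norm_pos_iff]
    exact sub_ne_zero.mpr (Ne.symm (fourier_ne_one hγ hK))
  -- Step B : simultaneous approximation
  have stepB : ∀ ε : ℝ, 0 < ε → ∃ Kk : ℤ, Kk ≠ 0 ∧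
      ‖1 - (fourier Kk ((α : ℝ) : UnitAddCircle) : ℂ)‖ < ε ∧
      ‖1 - (fourier Kk ((β : ℝ) : UnitAddCircle) : ℂ)‖ < ε := by
    intro ε hε
    set M : ℝ := |(n : ℝ)| + |(m : ℝ)| + 1 with hM_def
    have hM : 0 < M := by positivity
    obtain ⟨q, hq0, hqα⟩ := exists_small α (div_pos hε hM)
    have hMn : |(n : ℝ)| < M := by
      rw [hM_def]
      have : (0:ℝ) ≤ |(m:ℝ)| := abs_nonneg _
      linarith
    have hMm : |((-m : ℤ) : ℝ)| < M := by
      rw [hM_def]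
      push_cast
      rw [abs_neg]
      have : (0:ℝ) ≤ |(n:ℝ)| := abs_nonneg _
      linarith
    refine ⟨n * q, mul_ne_zero hn (ne_of_gt hq0), ?_, ?_⟩
    · calc ‖1 - (fourier (n * q) ((α : ℝ) : UnitAddCircle) : ℂ)‖
          ≤ |(n : ℝ)| * ‖1 - (fourier q ((α : ℝ) : UnitAddCircle) : ℂ)‖ :=
            norm_one_sub_fourier_mul n q _
        _ < M * (ε / M) := by
            refine mul_lt_mul'' hMn hqα (abs_nonneg _) (norm_nonneg _)
        _ = ε := by field_simp
    · have hkey : (fourier (n * q) ((β : ℝ) : UnitAddCircle) : ℂ)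
          = fourier ((-m) * q) ((α : ℝ) : UnitAddCircle) := by
        rw [fourier_coe, fourier_coe]
        congr 1
        have hcalc : ((n * q : ℤ) : ℝ) * β = (((-m) * q : ℤ) : ℝ) * α - ((q * c : ℤ) : ℝ) := by
          push_cast
          linear_combination (q : ℝ) * hrel
        rw [hcalc, coe_sub_int]
      rw [hkey]
      calc ‖1 - (fourier ((-m) * q) ((α : ℝ) : UnitAddCircle) : ℂ)‖
          ≤ |((-m : ℤ) : ℝ)| * ‖1 - (fourier q ((α : ℝ) : UnitAddCircle) : ℂ)‖ :=
            norm_one_sub_fourier_mul (-m) q _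
        _ < M * (ε / M) := by
            refine mul_lt_mul'' hMm hqα (abs_nonneg _) (norm_nonneg _)
        _ = ε := by field_simp
  choose T hT0 hTα hTβ using stepB
  -- recursive construction of the frequencies
  have hεpos : ∀ (i : ℕ) (prev : {K : ℤ // K ≠ 0}),
      0 < min (((4:ℝ)⁻¹) ^ (i + 2)) ‖1 - (fourier prev.1 ((α : ℝ) : UnitAddCircle) : ℂ)‖ :=
    fun i prev => lt_min (by positivity) (hdpos α hα prev.1 prev.2)
  have h40 : (0:ℝ) < ((4:ℝ)⁻¹) ^ (0 + 1) := by positivity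
  let F : ℕ → {K : ℤ // K ≠ 0} := fun j => Nat.rec
    ⟨T (((4:ℝ)⁻¹) ^ (0 + 1)) h40, hT0 _ _⟩
    (fun i prev =>
      ⟨T (min (((4:ℝ)⁻¹) ^ (i + 2)) ‖1 - (fourier prev.1 ((α : ℝ) : UnitAddCircle) : ℂ)‖)
        (hεpos i prev), hT0 _ _⟩) j
  set K : ℕ → ℤ := fun j => (F j).1 with hK_def
  have hK0 : ∀ j, K j ≠ 0 := fun j => (F j).2
  have hF0 : K 0 = T (((4:ℝ)⁻¹) ^ (0 + 1)) h40 := rfl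
  have hFs : ∀ j, K (j + 1)
      = T (min (((4:ℝ)⁻¹) ^ (j + 2)) ‖1 - (fourier (K j) ((α : ℝ) : UnitAddCircle) : ℂ)‖)
        (hεpos j (F j)) := fun j => rfl
  -- distance notations
  set dA : ℕ → ℝ := fun j => ‖1 - (fourier (K j) ((α : ℝ) : UnitAddCircle) : ℂ)‖ with hdA_def
  set dB : ℕ → ℝ := fun j => ‖1 - (fourier (K j) ((β : ℝ) : UnitAddCircle) : ℂ)‖ with hdB_def
  have hdA0 : ∀ j, 0 < dA j := fun j => hdpos α hα (K j) (hK0 j)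
  have hdB0 : ∀ j, 0 < dB j := fun j => hdpos β hβ (K j) (hK0 j)
  have hA4 : ∀ j, dA j < ((4:ℝ)⁻¹) ^ (j + 1) := by
    intro j
    cases j with
    | zero =>
      have := hTα (((4:ℝ)⁻¹) ^ (0 + 1)) h40
      rw [← hF0] at this
      exact this
    | succ j =>
      have := hTα (min (((4:ℝ)⁻¹) ^ (j + 2)) (dA j)) (hεpos j (F j))
      rw [← hFs j] at this
      exact lt_of_lt_of_le this (min_le_left _ _)
  have hB4 : ∀ j, dB j < ((4:ℝ)⁻¹) ^ (j + 1) := by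
    intro j
    cases j with
    | zero =>
      have := hTβ (((4:ℝ)⁻¹) ^ (0 + 1)) h40
      rw [← hF0] at this
      exact this
    | succ j =>
      have := hTβ (min (((4:ℝ)⁻¹) ^ (j + 2)) (dA j)) (hεpos j (F j))
      rw [← hFs j] at this
      exact lt_of_lt_of_le this (min_le_left _ _)
  have hdec : ∀ j, dA (j + 1) < dA j := by
    intro j
    have := hTα (min (((4:ℝ)⁻¹) ^ (j + 2)) (dA j)) (hεpos j (F j))
    rw [← hFs j] at this
    exact lt_of_lt_of_le this (min_le_right _ _)
  have hanti : StrictAnti dA := strictAnti_nat_of_succ_lt hdec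
  have hKinj : Function.Injective K := by
    intro i j hij
    by_contra hne
    have hthis : dA i ≠ dA j := fun h => hne (hanti.injective h)
    exact hthis (congrArg (fun K : ℤ => ‖1 - (fourier K ((α : ℝ) : UnitAddCircle) : ℂ)‖) hij)
  -- the coefficients
  set r : ℕ → ℝ := fun j => min (dA j) (dB j) * ((2:ℝ)⁻¹) ^ j with hr_def
  have hr0 : ∀ j, 0 < r j := fun j => mul_pos (lt_min (hdA0 j) (hdB0 j)) (by positivity)
  set a : ℕ → ℂ := fun j => ((r j : ℝ) : ℂ) with ha_def
  have hna : ∀ j, ‖a j‖ = r j := by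
    intro j
    rw [ha_def]
    simp only [Complex.norm_real]
    exact abs_of_pos (hr0 j)
  have hmin1 : ∀ j, min (dA j) (dB j) ≤ 1 := by
    intro j
    refine le_trans (min_le_left _ _) (le_trans (hA4 j).le ?_)
    apply pow_le_one₀ <;> norm_num
  have ha : ∀ j, ‖a j‖ ≤ ((2:ℝ)⁻¹) ^ j := by
    intro j
    rw [hna j, hr_def]
    have := hmin1 j
    nlinarith [pow_pos (show (0:ℝ) < 2⁻¹ by norm_num) j]
  -- coefficients of the two transfer functions
  set b : ℕ → ℂ := fun j => a j / (1 - (fourier (K j) ((α : ℝ) : UnitAddCircle) : ℂ)) with hb_def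
  set e : ℕ → ℂ := fun j => a j / (1 - (fourier (K j) ((β : ℝ) : UnitAddCircle) : ℂ)) with he_def
  have hbq : ∀ j, ‖b j‖ ≤ ((2:ℝ)⁻¹) ^ j := by
    intro j
    rw [hb_def]
    simp only [norm_div]
    rw [hna j, hr_def]
    rw [div_le_iff₀ (hdA0 j)]
    have h1 : min (dA j) (dB j) ≤ dA j := min_le_left _ _
    nlinarith [pow_pos (show (0:ℝ) < 2⁻¹ by norm_num) j, hdA0 j, hmin1 j,
      (lt_min (hdA0 j) (hdB0 j))]
  have heq : ∀ j, ‖e j‖ ≤ ((2:ℝ)⁻¹) ^ j := by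
    intro j
    rw [he_def]
    simp only [norm_div]
    rw [hna j, hr_def]
    rw [div_le_iff₀ (hdB0 j)]
    have h1 : min (dA j) (dB j) ≤ dB j := min_le_right _ _
    nlinarith [pow_pos (show (0:ℝ) < 2⁻¹ by norm_num) j, hdB0 j, hmin1 j,
      (lt_min (hdA0 j) (hdB0 j))]
  -- the functions
  set f : UnitAddCircle → ℂ := fun x => ∑' j, a j * fourier (K j) x with hf_def
  set gA : UnitAddCircle → ℂ := fun x => ∑' j, b j * fourier (K j) x with hgA_def
  set gB : UnitAddCircle → ℂ := fun x => ∑' j, e j * fourier (K j) x with hgB_def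
  have hsummable : ∀ (u : ℕ → ℂ), (∀ j, ‖u j‖ ≤ ((2:ℝ)⁻¹) ^ j) → ∀ x : UnitAddCircle,
      Summable fun j => u j * fourier (K j) x := by
    intro u hu x
    refine Summable.of_norm_bounded summable_half fun j => ?_
    rw [norm_mul, norm_fourier, mul_one]
    exact hu j
  -- pointwise coboundary identities
  have hcobA : ∀ x : UnitAddCircle, f x = gA x - gA (x + ((α : ℝ) : UnitAddCircle)) := by
    intro x
    have h1 : ∀ j, (fourier (K j) (x + ((α : ℝ) : UnitAddCircle)) : ℂ)
        = fourier (K j) x * fourier (K j) ((α : ℝ) : UnitAddCircle) := fun j => fourier_hom _ _ _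
    have hs1 : Summable fun j => b j * (fourier (K j) x : ℂ) := hsummable b hbq x
    have hs2 : Summable fun j => b j * (fourier (K j) (x + ((α : ℝ) : UnitAddCircle)) : ℂ) :=
      hsummable b hbq _
    have hgsplit : gA x - gA (x + ((α : ℝ) : UnitAddCircle))
        = ∑' j, (b j * fourier (K j) x - b j * fourier (K j) (x + ((α : ℝ) : UnitAddCircle))) :=
      (Summable.tsum_sub hs1 hs2).symm
    rw [hgsplit]
    show (∑' j, a j * (fourier (K j) x : ℂ))
      = ∑' j, (b j * fourier (K j) x - b j * fourier (K j) (x + ((α : ℝ) : UnitAddCircle)))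
    refine tsum_congr fun j => ?_
    have hz : (1 : ℂ) - fourier (K j) ((α : ℝ) : UnitAddCircle) ≠ 0 :=
      sub_ne_zero.mpr (Ne.symm (fourier_ne_one hα (hK0 j)))
    have hinv : b j * (1 - (fourier (K j) ((α : ℝ) : UnitAddCircle) : ℂ)) = a j :=
      div_mul_cancel₀ (a j) hz
    rw [h1 j, ← hinv]
    ring
  have hcobB : ∀ x : UnitAddCircle, f x = gB x - gB (x + ((β : ℝ) : UnitAddCircle)) := by
    intro x
    have h1 : ∀ j, (fourier (K j) (x + ((β : ℝ) : UnitAddCircle)) : ℂ)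
        = fourier (K j) x * fourier (K j) ((β : ℝ) : UnitAddCircle) := fun j => fourier_hom _ _ _
    have hs1 : Summable fun j => e j * (fourier (K j) x : ℂ) := hsummable e heq x
    have hs2 : Summable fun j => e j * (fourier (K j) (x + ((β : ℝ) : UnitAddCircle)) : ℂ) :=
      hsummable e heq _
    have hgsplit : gB x - gB (x + ((β : ℝ) : UnitAddCircle))
        = ∑' j, (e j * fourier (K j) x - e j * fourier (K j) (x + ((β : ℝ) : UnitAddCircle))) :=
      (Summable.tsum_sub hs1 hs2).symm
    rw [hgsplit]
    show (∑' j, a j * (fourier (K j) x : ℂ))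
      = ∑' j, (e j * fourier (K j) x - e j * fourier (K j) (x + ((β : ℝ) : UnitAddCircle)))
    refine tsum_congr fun j => ?_
    have hz : (1 : ℂ) - fourier (K j) ((β : ℝ) : UnitAddCircle) ≠ 0 :=
      sub_ne_zero.mpr (Ne.symm (fourier_ne_one hβ (hK0 j)))
    have hinv : e j * (1 - (fourier (K j) ((β : ℝ) : UnitAddCircle) : ℂ)) = a j :=
      div_mul_cancel₀ (a j) hz
    rw [h1 j, ← hinv]
    ring
  refine ⟨f, memLp_tsum a K ha p, ⟨gA, memLp_tsum b K hbq p,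
      Eventually.of_forall hcobA⟩, ⟨gB, memLp_tsum e K heq p,
      Eventually.of_forall hcobB⟩, ?_⟩
  -- the non-double-coboundary part
  rintro ⟨h, hhp, hhe⟩
  have hInt : Integrable h (haarAddCircle : Measure UnitAddCircle) := by
    have h1 : MemLp h 1 volume := hhp.mono_exponent hp1
    have h2 : Integrable h volume := memLp_one_iff_integrable.mp h1
    rwa [vol_eq_haar] at h2
  have hhe' : f =ᵐ[(haarAddCircle : Measure UnitAddCircle)]
      fun x => h x - h (x + ((α : ℝ) : UnitAddCircle)) - h (x + ((β : ℝ) : UnitAddCircle))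
        + h (x + ((α : ℝ) : UnitAddCircle) + ((β : ℝ) : UnitAddCircle)) := by
    rwa [vol_eq_haar] at hhe
  set C : ℝ := ∫ x, ‖h x‖ ∂(haarAddCircle : Measure UnitAddCircle) with hC_def
  have hC0 : 0 ≤ C := integral_nonneg fun x => norm_nonneg _
  have hcoeff : ∀ i, a i
      = (1 - (fourier (K i) ((α : ℝ) : UnitAddCircle) : ℂ))
        * (1 - (fourier (K i) ((β : ℝ) : UnitAddCircle) : ℂ)) * fourierCoeff h (K i) := by
    intro i
    have e1 : fourierCoeff f (K i) = a i := fourierCoeff_tsum a K hKinj ha i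
    have e2 := fourierCoeff_congr hhe' (K i)
    have e3 := fourierCoeff_double hInt ((α : ℝ) : UnitAddCircle) ((β : ℝ) : UnitAddCircle) (K i)
    rw [← e1, e2, e3]
  -- norm bound gives a contradiction
  have hkey : ∀ i : ℕ, ((2:ℝ)⁻¹) ^ i ≤ ((4:ℝ)⁻¹) ^ (i + 1) * C := by
    intro i
    have h1 : r i = dA i * dB i * ‖fourierCoeff h (K i)‖ := by
      rw [← hna i, hcoeff i]
      rw [norm_mul, norm_mul]
    have h2 : ‖fourierCoeff h (K i)‖ ≤ C := norm_fourierCoeff_le h (K i)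
    have h3 : r i ≤ dA i * dB i * C := by
      rw [h1]
      exact mul_le_mul_of_nonneg_left h2 (by positivity)
    have h4 : dA i * dB i = min (dA i) (dB i) * max (dA i) (dB i) := (min_mul_max _ _).symm
    have h5 : min (dA i) (dB i) * ((2:ℝ)⁻¹) ^ i
        ≤ min (dA i) (dB i) * (max (dA i) (dB i) * C) := by
      rw [← mul_assoc, ← h4]
      exact h3
    have hmin_pos : 0 < min (dA i) (dB i) := lt_min (hdA0 i) (hdB0 i)
    have h6 : ((2:ℝ)⁻¹) ^ i ≤ max (dA i) (dB i) * C :=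
      le_of_mul_le_mul_left h5 hmin_pos
    refine h6.trans ?_
    have hmax : max (dA i) (dB i) ≤ ((4:ℝ)⁻¹) ^ (i + 1) := (max_lt (hA4 i) (hB4 i)).le
    exact mul_le_mul_of_nonneg_right hmax hC0
  -- conclude : `C` dominates all powers of two
  have hbig : ∀ i : ℕ, (2:ℝ) ^ i ≤ C := by
    intro i
    have key := hkey i
    have h2 : (4:ℝ) ^ (i + 1) * ((2:ℝ)⁻¹) ^ i ≤ C := by
      have hmul := mul_le_mul_of_nonneg_left key
        (le_of_lt (pow_pos (by norm_num : (0:ℝ) < 4) (i + 1)))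
      rwa [← mul_assoc, ← mul_pow, mul_inv_cancel₀ (by norm_num : (4:ℝ) ≠ 0), one_pow,
        one_mul] at hmul
    refine le_trans ?_ h2
    have hcompute : (4:ℝ) ^ (i + 1) * ((2:ℝ)⁻¹) ^ i = 4 * 2 ^ i := by
      rw [show (4:ℝ) = 2 * 2 by norm_num, mul_pow, inv_pow]
      have h2i : (2:ℝ) ^ i ≠ 0 := by positivity
      field_simp
      ring
    rw [hcompute]
    nlinarith [pow_pos (by norm_num : (0:ℝ) < 2) i]
  obtain ⟨i, hi⟩ := pow_unbounded_of_one_lt C (by norm_num : (1:ℝ) < 2)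
  exact absurd (hbig i) (not_le.mpr hi)
end
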